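/- arXiv:2311.04399 — 4 statements merged into one kernel-verified Lean document; each statement's English description precedes it below -/
import Mathlib

section
/- Let n ≥ 1 and 0 < λ ≤ Λ, and let F be a concave function on the n×n real symmetric matrices that is uniformly elliptic, i.e., 𝒫⁻(X−Y) ≤ F(X) − F(Y) ≤ 𝒫⁺(X−Y) for all symmetric X, Y. Let C₂ > 0 and δ₁ ∈ (0,1) be the constants (depending only on n, λ, Λ) from the interior L_{δ₁} estimate for parabolic subsolutions. Let f and v be functions on B_{6√n} × (0,1) such that all partial derivatives of v of order at most 4 in x and at most 3 in t, and of f of order at most 2 in (x,t), exist and are continuous, and suppose v_t(x,t) − F(D²v(x,t)) = f(x,t) for all (x,t) ∈ B_{6√n} × (0,1). Then for every unit vector e ∈ ℝⁿ, writing w = ∂²v/∂e² (the second directional derivative in direction e) and g = ∂²f/∂e², if g ∈ L_{n+1}(B_{6√n}×(0,1)) and w is bounded, then ‖w_t‖_{L_{δ₁}(Q₁×(1/3,2/3))} + ‖|D²w|‖_{L_{δ₁}(Q₁×(1/3,2/3))} ≤ C₂(‖g‖_{L_{n+1}(B_{6√n}×(0,1))} + sup_{B_{6√n}×(0,1)}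 |w|); and the same conclusion holds with ∂²/∂e² replaced by ∂²/∂t². -/
open MeasureTheory Metric Set ENNReal RealInnerProductSpace

noncomputable section

/-- The Pucci maximal operator `𝒫⁺`: for a symmetric matrix with eigenvalues `μᵢ`,
`𝒫⁺(M) = Λ ∑ max(μᵢ,0) − λ ∑ max(−μᵢ,0)` (junk value `0` on non-symmetric matrices). -/
def pucciSup {n : ℕ} (lam Lam : ℝ) (M : Matrix (Fin n) (Fin n) ℝ) : ℝ :=
  if h : M.IsHermitian then
    Lam * ∑ i, max (h.eigenvalues i) 0 - lam * ∑ i, max (-h.eigenvalues i) 0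
  else 0

/-- The Pucci minimal operator `𝒫⁻`: for a symmetric matrix with eigenvalues `μᵢ`,
`𝒫⁻(M) = λ ∑ max(μᵢ,0) − Λ ∑ max(−μᵢ,0)` (junk value `0` on non-symmetric matrices). -/
def pucciInf {n : ℕ} (lam Lam : ℝ) (M : Matrix (Fin n) (Fin n) ℝ) : ℝ :=
  if h : M.IsHermitian then
    lam * ∑ i, max (h.eigenvalues i) 0 - Lam * ∑ i, max (-h.eigenvalues i) 0
  else 0

/-- `|M|`: the sum of the absolute values of the eigenvalues of a symmetric matrix
(junk value `0` on non-symmetric matrices). -/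
def matAbs {n : ℕ} (M : Matrix (Fin n) (Fin n) ℝ) : ℝ :=
  if h : M.IsHermitian then ∑ i, |h.eigenvalues i| else 0

/-- The Hessian matrix `D²u(x)` of second-order partial derivatives. -/
def hess {n : ℕ} (u : EuclideanSpace ℝ (Fin n) → ℝ) (x : EuclideanSpace ℝ (Fin n)) :
    Matrix (Fin n) (Fin n) ℝ :=
  fun i j =>
    fderiv ℝ (fun y => fderiv ℝ u y (EuclideanSpace.single j 1)) x (EuclideanSpace.single i 1)

/-- `Q_r`: the open cube of side length `r` centered at the origin. -/
def cube (n : ℕ) (r : ℝ) : Set (EuclideanSpace ℝ (Fin n)) := {x | ∀ i, |x i| < r / 2}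

/-- `ℝ≥0∞`-valued `L_p` quasinorm `(∫_E |g|^p)^{1/p}` w.r.t. Lebesgue measure. -/
def lpE {α : Type*} [MeasureSpace α] (p : ℝ) (E : Set α) (g : α → ℝ) : ℝ≥0∞ :=
  (∫⁻ z in E, ENNReal.ofReal (|g z| ^ p)) ^ (1 / p)

/-- Second directional derivative `∂²v/∂e²` in the spatial direction `e`. -/
def dir2 {n : ℕ} (v : EuclideanSpace ℝ (Fin n) → ℝ → ℝ) (e : EuclideanSpace ℝ (Fin n))
    (x : EuclideanSpace ℝ (Fin n)) (t : ℝ) : ℝ :=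
  fderiv ℝ (fun y => fderiv ℝ (fun z => v z t) y e) x e

/-- Second time derivative `∂²v/∂t²`. -/
def time2 {n : ℕ} (v : EuclideanSpace ℝ (Fin n) → ℝ → ℝ)
    (x : EuclideanSpace ℝ (Fin n)) (t : ℝ) : ℝ :=
  deriv (deriv (v x)) t

namespace Aux
open Matrix
variable {N : ℕ}

/-- the set of traces `tr(P M)` over `0 ≤ P ≤ 1`. -/
def traceSet (M : Matrix (Fin N) (Fin N) ℝ) : Set ℝ :=
  {x | ∃ P : Matrix (Fin N) (Fin N) ℝ, P.PosSemidef ∧ (1 - P).PosSemidef ∧ (P * M).trace = x}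

lemma diag_nonneg {P : Matrix (Fin N) (Fin N) ℝ} (hP : P.PosSemidef) (i : Fin N) :
    0 ≤ P i i := by
  have := hP.dotProduct_mulVec_nonneg (Pi.single i 1)
  simpa [dotProduct, Matrix.mulVec, Pi.single_apply, Finset.sum_ite_eq,
    dotProduct_single] using this

lemma trace_mul_diagonal (Q : Matrix (Fin N) (Fin N) ℝ) (d : Fin N → ℝ) :
    (Q * Matrix.diagonal d).trace = ∑ i, Q i i * d i := by
  simp [Matrix.trace, Matrix.diag, Matrix.mul_apply, Matrix.diagonal_apply,
    Finset.sum_ite_eq, mul_ite]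

lemma key {M U : Matrix (Fin N) (Fin N) ℝ} {d : Fin N → ℝ}
    (hU1 : U * Uᴴ = 1) (hU2 : Uᴴ * U = 1)
    (hM : M = U * Matrix.diagonal d * Uᴴ) :
    IsGreatest (traceSet M) (∑ i, max (d i) 0) := by
  constructor
  · -- membership
    set e : Fin N → ℝ := fun i => if 0 < d i then 1 else 0 with he
    refine ⟨U * Matrix.diagonal e * Uᴴ, ?_, ?_, ?_⟩
    · exact (Matrix.PosSemidef.diagonal (by intro i; simp [he]; split <;> norm_num)).mul_mul_conjTranspose_same U
    · have : (1 : Matrix (Fin N) (Fin N) ℝ) - U * Matrix.diagonal e * Uᴴ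
          = U * Matrix.diagonal (fun i => 1 - e i) * Uᴴ := by
        have hd : Matrix.diagonal (fun i => 1 - e i)
            = 1 - Matrix.diagonal e := by
          rw [← Matrix.diagonal_one, Matrix.diagonal_sub]
        rw [hd, Matrix.mul_sub, Matrix.sub_mul, Matrix.mul_one, hU1]
      rw [this]
      exact (Matrix.PosSemidef.diagonal (by intro i; simp [he]; split <;> norm_num)).mul_mul_conjTranspose_same U
    · rw [hM]
      have : U * Matrix.diagonal e * Uᴴ * (U * Matrix.diagonal d * Uᴴ)
          = U * (Matrix.diagonal e * Matrix.diagonal d) * Uᴴ := by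
        calc U * Matrix.diagonal e * Uᴴ * (U * Matrix.diagonal d * Uᴴ)
            = U * Matrix.diagonal e * (Uᴴ * U) * Matrix.diagonal d * Uᴴ := by
              simp only [Matrix.mul_assoc]
          _ = U * (Matrix.diagonal e * Matrix.diagonal d) * Uᴴ := by
              rw [hU2]; simp only [Matrix.mul_assoc, Matrix.mul_one, Matrix.one_mul]
      rw [this, Matrix.trace_mul_cycle]
      rw [show Uᴴ * U * (Matrix.diagonal e * Matrix.diagonal d)
          = Matrix.diagonal e * Matrix.diagonal d by rw [hU2, Matrix.one_mul]]
      rw [Matrix.diagonal_mul_diagonal, Matrix.trace_diagonal]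
      refine Finset.sum_congr rfl fun i _ => ?_
      by_cases h : 0 < d i
      · simp [he, h, max_eq_left h.le]
      · simp [he, h, max_eq_right (not_lt.1 h)]
  · -- upper bound
    rintro x ⟨P, hP, hP1, rfl⟩
    have hQ : (Uᴴ * P * U).PosSemidef := hP.conjTranspose_mul_mul_same U
    have hQ1 : (1 - Uᴴ * P * U).PosSemidef := by
      have : (1 : Matrix (Fin N) (Fin N) ℝ) - Uᴴ * P * U = Uᴴ * (1 - P) * U := by
        rw [Matrix.mul_sub, Matrix.sub_mul, Matrix.mul_one, hU2]
      rw [this]; exact hP1.conjTranspose_mul_mul_same U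
    have htr : (P * M).trace = ((Uᴴ * P * U) * Matrix.diagonal d).trace := by
      rw [hM]
      rw [show P * (U * Matrix.diagonal d * Uᴴ) = (P * U) * Matrix.diagonal d * Uᴴ by
        simp only [Matrix.mul_assoc]]
      rw [Matrix.trace_mul_cycle]
      rw [show Uᴴ * (P * U) * Matrix.diagonal d = (Uᴴ * P * U) * Matrix.diagonal d by
        simp only [Matrix.mul_assoc]]
    rw [htr, trace_mul_diagonal]
    refine Finset.sum_le_sum fun i _ => ?_
    have h0 : 0 ≤ (Uᴴ * P * U) i i := diag_nonneg hQ i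
    have h1 : (Uᴴ * P * U) i i ≤ 1 := by
      have := diag_nonneg hQ1 i
      simp only [Matrix.sub_apply, Matrix.one_apply_eq] at this
      linarith
    rcases le_or_gt (d i) 0 with h | h
    · calc (Uᴴ * P * U) i i * d i ≤ 0 := mul_nonpos_of_nonneg_of_nonpos h0 h
        _ ≤ max (d i) 0 := le_max_right _ _
    · calc (Uᴴ * P * U) i i * d i ≤ 1 * d i :=
          mul_le_mul_of_nonneg_right h1 h.le
        _ = d i := one_mul _
        _ ≤ max (d i) 0 := le_max_left _ _

end Aux

def sPlus {N : ℕ} (M : Matrix (Fin N) (Fin N) ℝ) : ℝ :=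
  if h : M.IsHermitian then ∑ i, max (h.eigenvalues i) 0 else 0

namespace Aux
open Matrix
variable {N : ℕ}

lemma herm_decomp {M : Matrix (Fin N) (Fin N) ℝ} (hM : M.IsHermitian) :
    ∃ U : Matrix (Fin N) (Fin N) ℝ, U * Uᴴ = 1 ∧ Uᴴ * U = 1 ∧
      M = U * Matrix.diagonal hM.eigenvalues * Uᴴ ∧
      -M = U * Matrix.diagonal (fun i => - hM.eigenvalues i) * Uᴴ := by
  refine ⟨(hM.eigenvectorUnitary : Matrix (Fin N) (Fin N) ℝ), ?_, ?_, ?_, ?_⟩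
  · have := (hM.eigenvectorUnitary).2
    rw [Matrix.mem_unitaryGroup_iff] at this
    simpa [Matrix.star_eq_conjTranspose] using this
  · have := (hM.eigenvectorUnitary).2
    rw [Matrix.mem_unitaryGroup_iff'] at this
    simpa [Matrix.star_eq_conjTranspose] using this
  · have h := hM.spectral_theorem
    simpa [Matrix.star_eq_conjTranspose, Function.comp] using h
  · have h := hM.spectral_theorem
    have : M = (hM.eigenvectorUnitary : Matrix (Fin N) (Fin N) ℝ) *
        Matrix.diagonal hM.eigenvalues *
        (hM.eigenvectorUnitary : Matrix (Fin N) (Fin N) ℝ)ᴴ := by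
      simpa [Matrix.star_eq_conjTranspose, Function.comp] using h
    rw [show Matrix.diagonal (fun i => - hM.eigenvalues i) = - Matrix.diagonal hM.eigenvalues by
      rw [Matrix.diagonal_neg], Matrix.mul_neg, Matrix.neg_mul, ← this]

lemma sPlus_isGreatest {M : Matrix (Fin N) (Fin N) ℝ} (hM : M.IsHermitian) :
    IsGreatest (traceSet M) (sPlus M) := by
  obtain ⟨U, hU1, hU2, hMd, -⟩ := herm_decomp hM
  have := key hU1 hU2 hMd
  rwa [show ∑ i, max (hM.eigenvalues i) 0 = sPlus M by rw [sPlus, dif_pos hM]] at this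

lemma sPlus_neg_eig {M : Matrix (Fin N) (Fin N) ℝ} (hM : M.IsHermitian) :
    ∑ i, max (- hM.eigenvalues i) 0 = sPlus (-M) := by
  obtain ⟨U, hU1, hU2, -, hMd⟩ := herm_decomp hM
  exact (key hU1 hU2 hMd).unique (sPlus_isGreatest hM.neg)

lemma pucci_herm {lam Lam : ℝ} {M : Matrix (Fin N) (Fin N) ℝ} (hM : M.IsHermitian) :
    pucciSup lam Lam M = Lam * sPlus M - lam * sPlus (-M) := by
  rw [pucciSup, dif_pos hM, show ∑ i, max (hM.eigenvalues i) 0 = sPlus M by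
    rw [sPlus, dif_pos hM], sPlus_neg_eig hM]

lemma sPlus_add_le {A B : Matrix (Fin N) (Fin N) ℝ} (hA : A.IsHermitian) (hB : B.IsHermitian) :
    sPlus (A + B) ≤ sPlus A + sPlus B := by
  obtain ⟨P, hP1, hP2, hPt⟩ := (sPlus_isGreatest (hA.add hB)).1
  rw [← hPt, Matrix.mul_add, Matrix.trace_add]
  exact add_le_add ((sPlus_isGreatest hA).2 ⟨P, hP1, hP2, rfl⟩)
    ((sPlus_isGreatest hB).2 ⟨P, hP1, hP2, rfl⟩)

lemma smul_herm {c : ℝ} {M : Matrix (Fin N) (Fin N) ℝ} (hM : M.IsHermitian) :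
    (c • M).IsHermitian := by
  show (c • M)ᴴ = c • M
  rw [Matrix.conjTranspose_smul, star_trivial, hM]

lemma sPlus_smul {c : ℝ} (hc : 0 ≤ c) {M : Matrix (Fin N) (Fin N) ℝ} (hM : M.IsHermitian) :
    sPlus (c • M) = c * sPlus M := by
  obtain ⟨P, hP1, hP2, hPt⟩ := (sPlus_isGreatest (smul_herm hM)).1
  obtain ⟨P', hP1', hP2', hPt'⟩ := (sPlus_isGreatest hM).1
  apply le_antisymm
  · rw [← hPt, Matrix.mul_smul, Matrix.trace_smul, smul_eq_mul]
    exact mul_le_mul_of_nonneg_left ((sPlus_isGreatest hM).2 ⟨P, hP1, hP2, rfl⟩) hc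
  · rw [← hPt']
    have : c * (P' * M).trace = (P' * (c • M)).trace := by
      rw [Matrix.mul_smul, Matrix.trace_smul, smul_eq_mul]
    rw [this]
    exact (sPlus_isGreatest (smul_herm hM)).2 ⟨P', hP1', hP2', rfl⟩

lemma entry_abs_le {P : Matrix (Fin N) (Fin N) ℝ} (hP : P.PosSemidef)
    (hP1 : (1 - P).PosSemidef) (i j : Fin N) : |P i j| ≤ 1 := by
  have hsym : P j i = P i j := by
    have := congrFun (congrFun hP.1 i) j
    simpa [Matrix.conjTranspose_apply] using this
  have hii : 0 ≤ P i i := diag_nonneg hP i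
  have hjj : 0 ≤ P j j := diag_nonneg hP j
  have hii1 : P i i ≤ 1 := by
    have := diag_nonneg hP1 i; simp only [Matrix.sub_apply, Matrix.one_apply_eq] at this; linarith
  have hjj1 : P j j ≤ 1 := by
    have := diag_nonneg hP1 j; simp only [Matrix.sub_apply, Matrix.one_apply_eq] at this; linarith
  rcases eq_or_ne i j with rfl | hij
  · rw [abs_le]; constructor <;> linarith
  · have h1 : 0 ≤ P i i + P j j + P i j + P j i := by
      have h := hP.dotProduct_mulVec_nonneg (Pi.single i 1 + Pi.single j 1)
      simp [dotProduct, Matrix.mulVec, Pi.single_apply, Finset.sum_add_distrib,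
        Finset.sum_ite_eq, hij, hij.symm, add_mul, mul_add] at h
      linarith
    have h2 : 0 ≤ P i i + P j j - P i j - P j i := by
      have h := hP.dotProduct_mulVec_nonneg (Pi.single i 1 - Pi.single j 1)
      simp [dotProduct, Matrix.mulVec, Pi.single_apply, Finset.sum_sub_distrib,
        Finset.sum_ite_eq, hij, hij.symm, sub_mul, mul_sub] at h
      linarith
    rw [abs_le]; constructor <;> nlinarith

lemma sPlus_le_sum_abs {M : Matrix (Fin N) (Fin N) ℝ} (hM : M.IsHermitian) :
    sPlus M ≤ ∑ i, ∑ j, |M i j| := by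
  obtain ⟨P, hP1, hP2, hPt⟩ := (sPlus_isGreatest hM).1
  rw [← hPt]
  have : (P * M).trace = ∑ i, ∑ j, P i j * M j i := by
    simp [Matrix.trace, Matrix.diag, Matrix.mul_apply]
  rw [this]
  calc ∑ i, ∑ j, P i j * M j i ≤ ∑ i, ∑ j, |M j i| := by
        refine Finset.sum_le_sum fun i _ => Finset.sum_le_sum fun j _ => ?_
        calc P i j * M j i ≤ |P i j * M j i| := le_abs_self _
          _ = |P i j| * |M j i| := abs_mul _ _
          _ ≤ 1 * |M j i| := by
              exact mul_le_mul_of_nonneg_right (entry_abs_le hP1 hP2 i j) (abs_nonneg _)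
          _ = |M j i| := one_mul _
    _ = ∑ i, ∑ j, |M i j| := Finset.sum_comm

lemma sPlus_nonneg {M : Matrix (Fin N) (Fin N) ℝ} (hM : M.IsHermitian) : 0 ≤ sPlus M := by
  have : (0:ℝ) ∈ traceSet M := ⟨0, Matrix.PosSemidef.zero, by simpa using Matrix.PosSemidef.one,
    by simp⟩
  exact (sPlus_isGreatest hM).2 this

lemma sPlus_sub_le {A B : Matrix (Fin N) (Fin N) ℝ} (hA : A.IsHermitian) (hB : B.IsHermitian) :
    sPlus A - sPlus B ≤ ∑ i, ∑ j, |(A - B) i j| := by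
  have h1 : sPlus A ≤ sPlus B + sPlus (A - B) := by
    have : A = B + (A - B) := by abel
    calc sPlus A = sPlus (B + (A - B)) := by rw [← this]
      _ ≤ sPlus B + sPlus (A - B) := sPlus_add_le hB (hA.sub hB)
  have h2 := sPlus_le_sum_abs (hA.sub hB)
  linarith

lemma pucci_dist_le {lam Lam : ℝ} (hlam : 0 ≤ lam) (hLam : 0 ≤ Lam)
    {A B : Matrix (Fin N) (Fin N) ℝ} (hA : A.IsHermitian) (hB : B.IsHermitian) :
    |pucciSup lam Lam A - pucciSup lam Lam B| ≤ (Lam + lam) * ∑ i, ∑ j, |(A - B) i j| := by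
  set S := ∑ i, ∑ j, |(A - B) i j| with hS
  have hS0 : 0 ≤ S := Finset.sum_nonneg fun i _ => Finset.sum_nonneg fun j _ => abs_nonneg _
  have hSneg : ∑ i, ∑ j, |(B - A) i j| = S := by
    rw [hS]
    refine Finset.sum_congr rfl fun i _ => Finset.sum_congr rfl fun j _ => ?_
    rw [show (B - A) i j = -((A - B) i j) from by simp only [Matrix.sub_apply]; ring, abs_neg]
  have hSneg' : ∑ i, ∑ j, |(-A - -B) i j| = S := by
    rw [hS]
    refine Finset.sum_congr rfl fun i _ => Finset.sum_congr rfl fun j _ => ?_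
    rw [show (-A - -B) i j = -((A - B) i j) from by
      simp only [Matrix.sub_apply, Matrix.neg_apply]; ring, abs_neg]
  have hSneg'' : ∑ i, ∑ j, |(-B - -A) i j| = S := by
    rw [hS]
    refine Finset.sum_congr rfl fun i _ => Finset.sum_congr rfl fun j _ => ?_
    rw [show (-B - -A) i j = (A - B) i j from by
      simp only [Matrix.sub_apply, Matrix.neg_apply]; ring]
  have k1 := sPlus_sub_le hA hB
  have k2 := sPlus_sub_le hB hA
  have k3 := sPlus_sub_le hA.neg hB.neg
  have k4 := sPlus_sub_le hB.neg hA.neg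
  rw [hSneg] at k2; rw [hSneg'] at k3; rw [hSneg''] at k4
  have b1 : Lam * (sPlus A - sPlus B) ≤ Lam * S := mul_le_mul_of_nonneg_left k1 hLam
  have b2 : Lam * (sPlus B - sPlus A) ≤ Lam * S := mul_le_mul_of_nonneg_left k2 hLam
  have b3 : lam * (sPlus (-A) - sPlus (-B)) ≤ lam * S := mul_le_mul_of_nonneg_left k3 hlam
  have b4 : lam * (sPlus (-B) - sPlus (-A)) ≤ lam * S := mul_le_mul_of_nonneg_left k4 hlam
  rw [pucci_herm hA, pucci_herm hB, abs_le]
  constructor <;> [nlinarith [b2, b3]; nlinarith [b1, b4]]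

lemma pucci_smul {lam Lam : ℝ} {c : ℝ} (hc : 0 ≤ c) {M : Matrix (Fin N) (Fin N) ℝ}
    (hM : M.IsHermitian) : pucciSup lam Lam (c • M) = c * pucciSup lam Lam M := by
  rw [pucci_herm (smul_herm hM), pucci_herm hM, sPlus_smul hc hM,
    show -(c • M) = c • (-M) by rw [smul_neg], sPlus_smul hc hM.neg]
  ring

lemma pucci_tendsto {lam Lam : ℝ} (hlam : 0 ≤ lam) (hLam : 0 ≤ Lam) {ι : Type*} {l : Filter ι}
    {Mk : ι → Matrix (Fin N) (Fin N) ℝ} {M : Matrix (Fin N) (Fin N) ℝ}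
    (hherm : ∀ᶠ k in l, (Mk k).IsHermitian) (hM : M.IsHermitian)
    (hconv : ∀ i j, Filter.Tendsto (fun k => Mk k i j) l (nhds (M i j))) :
    Filter.Tendsto (fun k => pucciSup lam Lam (Mk k)) l (nhds (pucciSup lam Lam M)) := by
  rw [tendsto_iff_dist_tendsto_zero]
  have hSz : Filter.Tendsto (fun k => (Lam + lam) * ∑ i, ∑ j, |(Mk k - M) i j|) l (nhds 0) := by
    have : Filter.Tendsto (fun k => ∑ i, ∑ j, |(Mk k - M) i j|) l (nhds 0) := by
      have h0 : (0:ℝ) = ∑ i : Fin N, ∑ j : Fin N, (0:ℝ) := by simp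
      rw [h0]
      refine tendsto_finset_sum _ fun i _ => tendsto_finset_sum _ fun j _ => ?_
      have : Filter.Tendsto (fun k => Mk k i j - M i j) l (nhds (M i j - M i j)) :=
        (hconv i j).sub tendsto_const_nhds
      rw [sub_self] at this
      simpa [Function.comp_def] using (continuous_abs.tendsto 0).comp this
    simpa using (tendsto_const_nhds (x := Lam + lam)).mul this
  refine squeeze_zero' ?_ ?_ hSz
  · filter_upwards with k; exact dist_nonneg
  · filter_upwards [hherm] with k hk
    rw [Real.dist_eq]
    exact pucci_dist_le hlam hLam hk hM

end Aux

namespace Aux2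
variable {E₀ : Type*} [NormedAddCommGroup E₀] [NormedSpace ℝ E₀]

/-- directional derivative operator -/
def Dv (a : E₀) (u : E₀ → ℝ) : E₀ → ℝ := fun y => fderiv ℝ u y a

lemma contDiffOn_Dv {U : Set E₀} (hU : IsOpen U) {u : E₀ → ℝ} {m : ℕ}
    (hu : ContDiffOn ℝ (m + 1 : ℕ) u U) (a : E₀) : ContDiffOn ℝ (m : ℕ) (Dv a u) U := by
  have h1 : ContDiffOn ℝ (m : ℕ) (fderiv ℝ u) U := by
    apply hu.fderiv_of_isOpen hU
    norm_cast
  exact (ContinuousLinearMap.apply ℝ ℝ a).contDiff.comp_contDiffOn h1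

lemma hasFDerivAt_Dv {U : Set E₀} (hU : IsOpen U) {u : E₀ → ℝ}
    (hu : ContDiffOn ℝ 2 u U) {x : E₀} (hx : x ∈ U) (b : E₀) :
    HasFDerivAt (Dv b u)
      ((ContinuousLinearMap.apply ℝ ℝ b).comp (fderiv ℝ (fderiv ℝ u) x)) x := by
  have h1 : ContDiffOn ℝ 1 (fderiv ℝ u) U := by
    apply hu.fderiv_of_isOpen hU
    norm_num
  have hd : DifferentiableAt ℝ (fderiv ℝ u) x :=
    (h1.differentiableOn (by norm_num)).differentiableAt (hU.mem_nhds hx)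
  exact ((ContinuousLinearMap.apply ℝ ℝ b).hasFDerivAt).comp x hd.hasFDerivAt

lemma DD_eq {U : Set E₀} (hU : IsOpen U) {u : E₀ → ℝ}
    (hu : ContDiffOn ℝ 2 u U) {x : E₀} (hx : x ∈ U) (a b : E₀) :
    Dv a (Dv b u) x = fderiv ℝ (fderiv ℝ u) x a b := by
  have := (hasFDerivAt_Dv hU hu hx b).fderiv
  show fderiv ℝ (Dv b u) x a = _
  rw [this]; rfl

lemma DD_swap {U : Set E₀} (hU : IsOpen U) {u : E₀ → ℝ}
    (hu : ContDiffOn ℝ 2 u U) {x : E₀} (hx : x ∈ U) (a b : E₀) :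
    Dv a (Dv b u) x = Dv b (Dv a u) x := by
  rw [DD_eq hU hu hx a b, DD_eq hU hu hx b a]
  exact ((hu.contDiffAt (hU.mem_nhds hx)).isSymmSndFDerivAt (by simp)).eq a b

lemma Dv_congr {U : Set E₀} (hU : IsOpen U) {u w : E₀ → ℝ}
    (huv : ∀ y ∈ U, u y = w y) {x : E₀} (hx : x ∈ U) (a : E₀) :
    Dv a u x = Dv a w x := by
  show fderiv ℝ u x a = fderiv ℝ w x a
  rw [Filter.EventuallyEq.fderiv_eq (Filter.eventuallyEq_of_mem (hU.mem_nhds hx) huv)]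

/-- second-difference mean value theorem -/
lemma mvt2 {g g₁ g₂ : ℝ → ℝ} {h : ℝ} (hh : 0 < h)
    (hg : ∀ s ∈ Icc (-h) h, HasDerivAt g (g₁ s) s)
    (hg₁ : ∀ s ∈ Icc (-h) h, HasDerivAt g₁ (g₂ s) s) :
    ∃ ξ ∈ Ioo (-h) h, (g h + g (-h) - 2 * g 0) / h ^ 2 = g₂ ξ := by
  set c := (g h + g (-h) - 2 * g 0) / h ^ 2 with hc
  set G := fun s : ℝ => g s + g (-s) - 2 * g 0 - s ^ 2 * c with hGdef
  have hG : ∀ s ∈ Icc (0:ℝ) h, HasDerivAt G (g₁ s - g₁ (-s) - 2 * s * c) s := by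
    intro s hs
    have hs' : s ∈ Icc (-h) h := ⟨by linarith [hs.1], hs.2⟩
    have hs'' : -s ∈ Icc (-h) h := ⟨by linarith [hs.2], by linarith [hs.1]⟩
    have d1 : HasDerivAt (fun s : ℝ => g (-s)) (-g₁ (-s)) s := by
      have := (hg _ hs'').comp s (hasDerivAt_neg s)
      simpa [mul_comm, Function.comp_def] using this
    have d2 : HasDerivAt (fun s : ℝ => s ^ 2 * c) (2 * s * c) s := by
      simpa [mul_comm] using ((hasDerivAt_pow 2 s).mul_const c)
    have := (((hg s hs').add d1).sub (hasDerivAt_const s (2 * g 0))).sub d2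
    exact this.congr_deriv (by ring)
  have hGc : ContinuousOn G (Icc 0 h) := fun s hs =>
    (hG s hs).continuousAt.continuousWithinAt
  obtain ⟨η, hη, hηe⟩ := exists_hasDerivAt_eq_slope G _ hh hGc
    (fun s hs => hG s (Ioo_subset_Icc_self hs))
  have hGh : G h = 0 := by
    have h2 : h ^ 2 ≠ 0 := by positivity
    simp only [hGdef, hc]
    field_simp
    ring
  have hG0 : G 0 = 0 := by simp [hGdef]; ring
  rw [hGh, hG0] at hηe
  have hslope : g₁ η - g₁ (-η) - 2 * η * c = 0 := by
    rw [hηe]; simp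
  have hη0 : 0 < η := hη.1
  have hsub : Icc (-η) η ⊆ Icc (-h) h := by
    apply Icc_subset_Icc <;> linarith [hη.2]
  obtain ⟨ξ, hξ, hξe⟩ := exists_hasDerivAt_eq_slope g₁ g₂ (show -η < η by linarith)
    (fun s hs => (hg₁ s (hsub hs)).continuousAt.continuousWithinAt)
    (fun s hs => hg₁ s (hsub (Ioo_subset_Icc_self hs)))
  refine ⟨ξ, ⟨by linarith [hξ.1, hη.2], by linarith [hξ.2, hη.2]⟩, ?_⟩
  rw [hξe]
  have hne : η - -η ≠ 0 := by linarith
  have : g₁ η - g₁ (-η) = 2 * η * c := by linarith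
  rw [this]
  field_simp
  ring

lemma line_mvt {U : Set E₀} (hU : IsOpen U) {u : E₀ → ℝ} (hu : ContDiffOn ℝ 2 u U)
    {x a : E₀} {δ : ℝ} (hseg : ∀ s ∈ Icc (-δ) δ, x + s • a ∈ U)
    {h : ℝ} (hh : 0 < h) (hhδ : h ≤ δ) :
    ∃ ξ ∈ Ioo (-h) h,
      (u (x + h • a) + u (x + (-h) • a) - 2 * u x) / h ^ 2 = Dv a (Dv a u) (x + ξ • a) := by
  have hsI : ∀ s ∈ Icc (-h) h, x + s • a ∈ U := fun s hs =>
    hseg s ⟨le_trans (neg_le_neg hhδ) hs.1, le_trans hs.2 hhδ⟩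
  have hline : ∀ s : ℝ, HasDerivAt (fun s : ℝ => x + s • a) a s := fun s => by
    simpa using ((hasDerivAt_id s).smul_const a).const_add x
  have hg : ∀ s ∈ Icc (-h) h, HasDerivAt (fun s => u (x + s • a)) (Dv a u (x + s • a)) s := by
    intro s hs'
    have hdu : DifferentiableAt ℝ u (x + s • a) :=
      (hu.differentiableOn (by norm_num)).differentiableAt (hU.mem_nhds (hsI s hs'))
    exact hdu.hasFDerivAt.comp_hasDerivAt s (hline s)
  have hg₁ : ∀ s ∈ Icc (-h) h,
      HasDerivAt (fun s => Dv a u (x + s • a)) (Dv a (Dv a u) (x + s • a)) s := by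
    intro s hs'
    have hmem := hsI s hs'
    have h2 := (hasFDerivAt_Dv hU hu hmem a).comp_hasDerivAt s (hline s)
    have heq : Dv a (Dv a u) (x + s • a)
        = ((ContinuousLinearMap.apply ℝ ℝ a).comp (fderiv ℝ (fderiv ℝ u) (x + s • a))) a := by
      show fderiv ℝ (Dv a u) (x + s • a) a = _
      rw [(hasFDerivAt_Dv hU hu hmem a).fderiv]
    rw [heq]
    exact h2
  obtain ⟨ξ, hξ, he⟩ := mvt2 hh hg hg₁
  refine ⟨ξ, hξ, ?_⟩
  simpa [zero_smul] using he

lemma contOn_DvDv {U : Set E₀} (hU : IsOpen U) {u : E₀ → ℝ} (hu : ContDiffOn ℝ 2 u U) (a : E₀) :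
    ContinuousOn (Dv a (Dv a u)) U := by
  have h1 : ContDiffOn ℝ 1 (fderiv ℝ u) U := by
    apply hu.fderiv_of_isOpen hU; norm_num
  have h2 : ContinuousOn (fderiv ℝ (fderiv ℝ u)) U :=
    h1.continuousOn_fderiv_of_isOpen hU le_rfl
  have h3 : ContinuousOn (fun y => fderiv ℝ (fderiv ℝ u) y a a) U := by
    exact ((ContinuousLinearMap.apply ℝ ℝ a).continuous.comp
      ((ContinuousLinearMap.apply ℝ (E₀ →L[ℝ] ℝ) a).continuous)).comp_continuousOn h2
  exact h3.congr fun y hy => DD_eq hU hu hy a a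

/-- second difference quotient convergence -/
lemma tendsto_diffquot {U : Set E₀} (hU : IsOpen U) {u : E₀ → ℝ} (hu : ContDiffOn ℝ 2 u U)
    {x : E₀} (hx : x ∈ U) (a : E₀) :
    Filter.Tendsto (fun h : ℝ => (u (x + h • a) + u (x + (-h) • a) - 2 * u x) / h ^ 2)
      (nhdsWithin 0 (Ioi 0)) (nhds (Dv a (Dv a u) x)) := by
  have hlc : Continuous (fun s : ℝ => x + s • a) := by
    exact continuous_const.add (continuous_id.smul continuous_const)
  have h0U : (0:ℝ) ∈ (fun s : ℝ => x + s • a) ⁻¹' U := by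
    simp [hx]
  obtain ⟨δ, hδpos, hδ⟩ := Metric.isOpen_iff.1 (hU.preimage hlc) 0 h0U
  have hseg : ∀ s ∈ Icc (-(δ/2)) (δ/2), x + s • a ∈ U := by
    intro s hs
    apply hδ
    simp only [Metric.mem_ball, Real.dist_eq, sub_zero]
    have h1 : |s| ≤ δ/2 := abs_le.2 ⟨hs.1, hs.2⟩
    linarith
  have hx0 : x + (0:ℝ) • a ∈ U := by simpa using hx
  have hQc : ContinuousAt (fun s : ℝ => Dv a (Dv a u) (x + s • a)) 0 :=
    ContinuousAt.comp (f := fun s : ℝ => x + s • a)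
      ((contOn_DvDv hU hu a).continuousAt (hU.mem_nhds hx0)) hlc.continuousAt
  rw [Metric.tendsto_nhdsWithin_nhds]
  intro ε hε
  obtain ⟨δ', hδ'pos, hδ'⟩ := Metric.continuousAt_iff.1 hQc ε hε
  refine ⟨min (δ/2) δ', by positivity, ?_⟩
  intro h hh hd
  have hpos : (0:ℝ) < h := hh
  rw [Real.dist_eq, sub_zero, abs_of_pos hpos] at hd
  obtain ⟨ξ, hξ, he⟩ := line_mvt hU hu hseg hpos (le_of_lt (lt_of_lt_of_le hd (min_le_left _ _)))
  rw [he]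
  have hξd : dist ξ (0:ℝ) < δ' := by
    rw [Real.dist_eq, sub_zero]
    have : |ξ| < h := abs_lt.2 ⟨hξ.1, hξ.2⟩
    exact lt_of_lt_of_le (lt_trans this hd) (min_le_right _ _)
  have := hδ' hξd
  simpa [zero_smul] using this

/-- the commutation master lemma -/
lemma master {U : Set E₀} (hU : IsOpen U) {J : Set ℝ} (hJ : IsOpen J)
    {V W : E₀ → ℝ → ℝ} (a : E₀)
    (hVW : ∀ y ∈ U, ∀ τ ∈ J, HasDerivAt (V y) (W y τ) τ)
    (hV2 : ∀ τ ∈ J, ContDiffOn ℝ 2 (fun y => V y τ) U)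
    (hW2 : ∀ τ ∈ J, ContDiffOn ℝ 2 (fun y => W y τ) U)
    (hWc : ContinuousOn (fun p : E₀ × ℝ => Dv a (Dv a (fun y => W y p.2)) p.1) (U ×ˢ J))
    {x : E₀} (hx : x ∈ U) {t : ℝ} (ht : t ∈ J) :
    HasDerivAt (fun τ => Dv a (Dv a (fun y => V y τ)) x)
      (Dv a (Dv a (fun y => W y t)) x) t := by
  have hlc : Continuous (fun s : ℝ => x + s • a) :=
    continuous_const.add (continuous_id.smul continuous_const)
  have h0U : (0:ℝ) ∈ (fun s : ℝ => x + s • a) ⁻¹' U := by simp [hx]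
  obtain ⟨δ0, hδ0pos, hδ0⟩ := Metric.isOpen_iff.1 (hU.preimage hlc) 0 h0U
  set δ := δ0 / 2 with hδdef
  have hδpos : 0 < δ := by positivity
  have hseg : ∀ s ∈ Icc (-δ) δ, x + s • a ∈ U := by
    intro s hs
    apply hδ0
    simp only [Metric.mem_ball, Real.dist_eq, sub_zero]
    have h1 : |s| ≤ δ := abs_le.2 ⟨hs.1, hs.2⟩
    have : δ < δ0 := by rw [hδdef]; linarith
    linarith
  set F : ℝ → ℝ → ℝ :=
    fun h τ => (V (x + h • a) τ + V (x + (-h) • a) τ - 2 * V x τ) / h ^ 2 with hF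
  set F' : ℝ → ℝ → ℝ :=
    fun h τ => (W (x + h • a) τ + W (x + (-h) • a) τ - 2 * W x τ) / h ^ 2 with hF'
  have hev : Ioo (0:ℝ) δ ∈ nhdsWithin (0:ℝ) (Ioi 0) := Ioo_mem_nhdsGT_of_mem ⟨le_rfl, hδpos⟩
  refine hasDerivAt_of_tendstoLocallyUniformlyOn (l := nhdsWithin (0:ℝ) (Ioi (0:ℝ)))
    hJ (f := F) (f' := F') (g := fun τ => Dv a (Dv a (fun y => V y τ)) x)
    (g' := fun τ => Dv a (Dv a (fun y => W y τ)) x) ?_ ?_ ?_ ht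
  · -- TendstoLocallyUniformlyOn F' g' l J
    rw [tendstoLocallyUniformlyOn_iff_forall_isCompact hJ]
    intro K hKJ hK
    rw [Metric.tendstoUniformlyOn_iff]
    intro ε hε
    have hCc : IsCompact (((fun s : ℝ => x + s • a) '' Icc (-δ) δ) ×ˢ K) :=
      (isCompact_Icc.image hlc).prod hK
    have hCsub : (((fun s : ℝ => x + s • a) '' Icc (-δ) δ) ×ˢ K) ⊆ U ×ˢ J := by
      rintro ⟨y, τ⟩ ⟨⟨s, hs, rfl⟩, hτ⟩
      exact ⟨hseg s hs, hKJ hτ⟩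
    have hGu := hCc.uniformContinuousOn_of_continuous (hWc.mono hCsub)
    obtain ⟨δ₂, hδ₂pos, hδ₂⟩ := Metric.uniformContinuousOn_iff.1 hGu ε hε
    have hm : (0:ℝ) < min δ (δ₂ / (‖a‖ + 1)) := by positivity
    have hev2 : Ioo (0:ℝ) (min δ (δ₂ / (‖a‖ + 1))) ∈ nhdsWithin (0:ℝ) (Ioi 0) :=
      Ioo_mem_nhdsGT_of_mem ⟨le_rfl, hm⟩
    filter_upwards [hev2] with h hhm
    intro τ hτ
    have hpos : 0 < h := hhm.1
    have hhδ : h ≤ δ := le_of_lt (lt_of_lt_of_le hhm.2 (min_le_left _ _))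
    obtain ⟨ξ, hξ, he⟩ := line_mvt hU (hW2 τ (hKJ hτ)) hseg hpos hhδ
    have hFeq : F' h τ = Dv a (Dv a (fun y => W y τ)) (x + ξ • a) := he
    rw [hFeq]
    have hmem1 : ((x + ξ • a), τ) ∈ (((fun s : ℝ => x + s • a) '' Icc (-δ) δ) ×ˢ K) :=
      ⟨⟨ξ, ⟨by linarith [hξ.1, hhδ], by linarith [hξ.2, hhδ]⟩, rfl⟩, hτ⟩
    have hmem2 : ((x : E₀), τ) ∈ (((fun s : ℝ => x + s • a) '' Icc (-δ) δ) ×ˢ K) :=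
      ⟨⟨0, ⟨by linarith, by linarith⟩, by simp⟩, hτ⟩
    have hdlt : dist ((x : E₀), τ) ((x + ξ • a), τ) < δ₂ := by
      rw [Prod.dist_eq]
      have h1 : dist (x : E₀) (x + ξ • a) = ‖ξ • a‖ := by
        rw [dist_eq_norm]
        have hxx : x - (x + ξ • a) = -(ξ • a) := by abel
        rw [hxx, norm_neg]
      have h2 : ‖ξ • a‖ < δ₂ := by
        rw [norm_smul]
        have hξa : |ξ| < h := abs_lt.2 ⟨hξ.1, hξ.2⟩
        have : ‖ξ‖ * ‖a‖ < h * (‖a‖ + 1) := by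
          rw [Real.norm_eq_abs]
          have h3 : |ξ| * ‖a‖ ≤ |ξ| * (‖a‖ + 1) := by
            apply mul_le_mul_of_nonneg_left (by linarith) (abs_nonneg _)
          have h4 : |ξ| * (‖a‖ + 1) < h * (‖a‖ + 1) := by
            apply mul_lt_mul_of_pos_right hξa (by positivity)
          linarith
        have h5 : h * (‖a‖ + 1) < δ₂ := by
          have := hhm.2
          have h6 : h < δ₂ / (‖a‖ + 1) := lt_of_lt_of_le this (min_le_right _ _)
          have h7 : 0 < ‖a‖ + 1 := by positivity
          calc h * (‖a‖ + 1) < δ₂ / (‖a‖ + 1) * (‖a‖ + 1) :=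
                mul_lt_mul_of_pos_right h6 h7
            _ = δ₂ := by field_simp
        linarith
      simp only [dist_self]
      rw [max_eq_left (by positivity : (0:ℝ) ≤ dist (x:E₀) (x + ξ • a))]
      · rw [h1]; exact h2
    have := hδ₂ _ hmem2 _ hmem1 hdlt
    exact this
  · -- eventually HasDerivAt
    filter_upwards [hev] with h hh
    intro τ hτ
    have hpos : 0 < h := hh.1
    have hmem1 : x + h • a ∈ U := hseg h ⟨by linarith [hh.2], le_of_lt hh.2⟩
    have hmem2 : x + (-h) • a ∈ U := hseg (-h) ⟨by linarith [hh.2], by linarith [hh.2]⟩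
    have d1 := hVW _ hmem1 τ hτ
    have d2 := hVW _ hmem2 τ hτ
    have d3 := (hVW x hx τ hτ).const_mul 2
    exact ((d1.add d2).sub d3).div_const (h ^ 2)
  · -- pointwise convergence
    intro τ hτ
    exact tendsto_diffquot hU (hV2 τ hτ) hx a

lemma diffAt_iterFD {U : Set E₀} (hU : IsOpen U) {g : E₀ → ℝ} {k m : ℕ}
    (hg : ContDiffOn ℝ (m : ℕ) g U) (hk : k < m) {y : E₀} (hy : y ∈ U) :
    DifferentiableAt ℝ (iteratedFDeriv ℝ k g) y := by
  have h1 := ((contDiffOn_iff_continuousOn_differentiableOn hU.uniqueDiffOn).1 hg).2 k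
    (by exact_mod_cast hk)
  have h2 : DifferentiableAt ℝ (iteratedFDerivWithin ℝ k g U) y :=
    (h1 y hy).differentiableAt (hU.mem_nhds hy)
  have h3 : iteratedFDerivWithin ℝ k g U =ᶠ[nhds y] iteratedFDeriv ℝ k g :=
    Filter.eventuallyEq_of_mem (hU.mem_nhds hy)
      (fun z hz => iteratedFDerivWithin_of_isOpen k hU hz)
  exact (Filter.EventuallyEq.differentiableAt_iff h3).1 h2

lemma peel {U : Set E₀} (hU : IsOpen U) {g : E₀ → ℝ} {k m : ℕ}
    (hg : ContDiffOn ℝ (m : ℕ) g U) (hk : k < m) {x : E₀} (hx : x ∈ U)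
    (a : E₀) (vs : Fin k → E₀) :
    fderiv ℝ (fun y => iteratedFDeriv ℝ k g y vs) x a = fderiv ℝ (iteratedFDeriv ℝ k g) x a vs := by
  have hd := diffAt_iterFD hU hg hk hx
  have h2 := ((ContinuousMultilinearMap.apply ℝ (fun _ : Fin k => E₀) ℝ vs).hasFDerivAt).comp x
    hd.hasFDerivAt
  have h2' : HasFDerivAt (fun y => iteratedFDeriv ℝ k g y vs)
      ((ContinuousMultilinearMap.apply ℝ (fun _ : Fin k => E₀) ℝ vs).comp
        (fderiv ℝ (iteratedFDeriv ℝ k g) x)) x := h2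
  rw [h2'.fderiv]
  rfl

lemma iterFD1_eq {g : E₀ → ℝ} (b : E₀) (x : E₀) :
    iteratedFDeriv ℝ 1 g x ![b] = Dv b g x := by
  rw [iteratedFDeriv_one_apply]
  rfl

lemma iterFD2_eq {U : Set E₀} (hU : IsOpen U) {g : E₀ → ℝ}
    (hg : ContDiffOn ℝ 2 g U) (a b : E₀) {x : E₀} (hx : x ∈ U) :
    iteratedFDeriv ℝ 2 g x ![a, b] = Dv a (Dv b g) x := by
  rw [iteratedFDeriv_succ_apply_left]
  have h0 : (![a, b] : Fin 2 → E₀) 0 = a := rfl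
  have ht : (Fin.tail ![a, b] : Fin 1 → E₀) = ![b] := by
    funext i; fin_cases i; rfl
  rw [h0, ht, ← peel hU (by exact_mod_cast hg) (by norm_num) hx a ![b]]
  show fderiv ℝ (fun y => iteratedFDeriv ℝ 1 g y ![b]) x a = fderiv ℝ (Dv b g) x a
  have hfun : (fun y => iteratedFDeriv ℝ 1 g y ![b]) = Dv b g := funext (iterFD1_eq b)
  rw [hfun]

lemma iterFD3_eq {U : Set E₀} (hU : IsOpen U) {g : E₀ → ℝ}
    (hg : ContDiffOn ℝ 3 g U) (a b c : E₀) {x : E₀} (hx : x ∈ U) :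
    iteratedFDeriv ℝ 3 g x ![a, b, c] = Dv a (Dv b (Dv c g)) x := by
  rw [iteratedFDeriv_succ_apply_left]
  have h0 : (![a, b, c] : Fin 3 → E₀) 0 = a := rfl
  have ht : (Fin.tail ![a, b, c] : Fin 2 → E₀) = ![b, c] := by
    funext i; fin_cases i <;> rfl
  rw [h0, ht, ← peel hU (by exact_mod_cast hg) (by norm_num) hx a ![b, c]]
  show fderiv ℝ (fun y => iteratedFDeriv ℝ 2 g y ![b, c]) x a = fderiv ℝ (Dv b (Dv c g)) x a
  have hev : (fun y => iteratedFDeriv ℝ 2 g y ![b, c]) =ᶠ[nhds x] Dv b (Dv c g) :=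
    Filter.eventuallyEq_of_mem (hU.mem_nhds hx)
      (fun y hy => iterFD2_eq hU (hg.of_le (by norm_num)) b c hy)
  rw [Filter.EventuallyEq.fderiv_eq hev]

lemma iterFD4_eq {U : Set E₀} (hU : IsOpen U) {g : E₀ → ℝ}
    (hg : ContDiffOn ℝ 4 g U) (a b c d : E₀) {x : E₀} (hx : x ∈ U) :
    iteratedFDeriv ℝ 4 g x ![a, b, c, d] = Dv a (Dv b (Dv c (Dv d g))) x := by
  rw [iteratedFDeriv_succ_apply_left]
  have h0 : (![a, b, c, d] : Fin 4 → E₀) 0 = a := rfl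
  have ht : (Fin.tail ![a, b, c, d] : Fin 3 → E₀) = ![b, c, d] := by
    funext i; fin_cases i <;> rfl
  rw [h0, ht, ← peel hU (by exact_mod_cast hg) (by norm_num) hx a ![b, c, d]]
  show fderiv ℝ (fun y => iteratedFDeriv ℝ 3 g y ![b, c, d]) x a
      = fderiv ℝ (Dv b (Dv c (Dv d g))) x a
  have hev : (fun y => iteratedFDeriv ℝ 3 g y ![b, c, d]) =ᶠ[nhds x] Dv b (Dv c (Dv d g)) :=
    Filter.eventuallyEq_of_mem (hU.mem_nhds hx)
      (fun y hy => iterFD3_eq hU (hg.of_le (by norm_num)) b c d hy)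
  rw [Filter.EventuallyEq.fderiv_eq hev]

lemma contOn_eval {α : Type*} [TopologicalSpace α] {S : Set α} {k : ℕ}
    {Φ : α → ContinuousMultilinearMap ℝ (fun _ : Fin k => E₀) ℝ} (hΦ : ContinuousOn Φ S)
    (vs : Fin k → E₀) : ContinuousOn (fun p => Φ p vs) S :=
  (ContinuousMultilinearMap.apply ℝ (fun _ : Fin k => E₀) ℝ vs).continuous.comp_continuousOn hΦ

end Aux2

namespace Aux2
open Set
variable {E₀ : Type*} [NormedAddCommGroup E₀] [NormedSpace ℝ E₀]

lemma polar {U : Set E₀} (hU : IsOpen U) {u : E₀ → ℝ} (hu : ContDiffOn ℝ 2 u U)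
    {x : E₀} (hx : x ∈ U) (a b : E₀) :
    Dv a (Dv b u) x
      = (Dv (a + b) (Dv (a + b) u) x - Dv a (Dv a u) x - Dv b (Dv b u) x) / 2 := by
  rw [DD_eq hU hu hx a b, DD_eq hU hu hx (a + b) (a + b), DD_eq hU hu hx a a,
    DD_eq hU hu hx b b]
  have hsymm := ((hu.contDiffAt (hU.mem_nhds hx)).isSymmSndFDerivAt (by simp)).eq a b
  have h1 : fderiv ℝ (fderiv ℝ u) x (a + b) (a + b)
      = fderiv ℝ (fderiv ℝ u) x a a + fderiv ℝ (fderiv ℝ u) x a b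
        + fderiv ℝ (fderiv ℝ u) x b a + fderiv ℝ (fderiv ℝ u) x b b := by
    rw [map_add (fderiv ℝ (fderiv ℝ u) x) a b]
    simp only [ContinuousLinearMap.add_apply, map_add]
    ring
  rw [h1]
  rw [hsymm]
  ring

lemma swap_abee {U : Set E₀} (hU : IsOpen U) {V : E₀ → ℝ} (hV : ContDiffOn ℝ 4 V U)
    (a b e : E₀) {x : E₀} (hx : x ∈ U) :
    Dv a (Dv b (Dv e (Dv e V))) x = Dv e (Dv e (Dv a (Dv b V))) x := by
  have hV2 : ContDiffOn ℝ 2 V U := hV.of_le (by norm_num)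
  have h3 : ∀ c : E₀, ContDiffOn ℝ ((3:ℕ) : WithTop ℕ∞) (Dv c V) U := fun c =>
    contDiffOn_Dv hU (m := 3) (by exact_mod_cast hV) c
  have h3' : ∀ c : E₀, ContDiffOn ℝ 2 (Dv c V) U := fun c =>
    (h3 c).of_le (by exact_mod_cast Nat.cast_le.2 (by norm_num : (2:ℕ) ≤ 3))
  have h2' : ∀ c d : E₀, ContDiffOn ℝ 2 (Dv c (Dv d V)) U := fun c d => by
    have := contDiffOn_Dv hU (m := 2) (by exact_mod_cast h3 d) c
    exact_mod_cast this
  have s1 : ∀ y ∈ U, Dv b (Dv e (Dv e V)) y = Dv e (Dv b (Dv e V)) y :=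
    fun y hy => DD_swap hU (h3' e) hy b e
  have s1' : ∀ y ∈ U, Dv a (Dv b (Dv e (Dv e V))) y = Dv a (Dv e (Dv b (Dv e V))) y :=
    fun y hy => Dv_congr hU s1 hy a
  have s2 : ∀ y ∈ U, Dv a (Dv e (Dv b (Dv e V))) y = Dv e (Dv a (Dv b (Dv e V))) y :=
    fun y hy => DD_swap hU (h2' b e) hy a e
  have s3 : ∀ y ∈ U, Dv b (Dv e V) y = Dv e (Dv b V) y := fun y hy => DD_swap hU hV2 hy b e
  have s3a : ∀ y ∈ U, Dv a (Dv b (Dv e V)) y = Dv a (Dv e (Dv b V)) y :=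
    fun y hy => Dv_congr hU s3 hy a
  have s3b : ∀ y ∈ U, Dv e (Dv a (Dv b (Dv e V))) y = Dv e (Dv a (Dv e (Dv b V))) y :=
    fun y hy => Dv_congr hU s3a hy e
  have s4 : ∀ y ∈ U, Dv a (Dv e (Dv b V)) y = Dv e (Dv a (Dv b V)) y :=
    fun y hy => DD_swap hU (h3' b) hy a e
  have s4b : ∀ y ∈ U, Dv e (Dv a (Dv e (Dv b V))) y = Dv e (Dv e (Dv a (Dv b V))) y :=
    fun y hy => Dv_congr hU s4 hy e
  rw [s1' x hx, s2 x hx, s3b x hx, s4b x hx]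

lemma tendsto_diffquot1D {J : Set ℝ} (hJ : IsOpen J) {ρ ρ₁ ρ₂ : ℝ → ℝ}
    (hρ : ∀ τ ∈ J, HasDerivAt ρ (ρ₁ τ) τ) (hρ₁ : ∀ τ ∈ J, HasDerivAt ρ₁ (ρ₂ τ) τ)
    (hρ₂ : ContinuousOn ρ₂ J) {t : ℝ} (ht : t ∈ J) :
    Filter.Tendsto (fun k : ℝ => (ρ (t + k) + ρ (t - k) - 2 * ρ t) / k ^ 2)
      (nhdsWithin 0 (Ioi 0)) (nhds (ρ₂ t)) := by
  obtain ⟨δ, hδpos, hδ⟩ := Metric.isOpen_iff.1 hJ t ht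
  have hseg : ∀ s : ℝ, |s| < δ → t + s ∈ J := by
    intro s hs
    apply hδ
    simp only [Metric.mem_ball, Real.dist_eq, add_sub_cancel_left]
    exact hs
  have hshift : ContinuousAt (fun s : ℝ => ρ₂ (t + s)) 0 := by
    have h1 : ContinuousAt ρ₂ (t + 0) :=
      hρ₂.continuousAt (hJ.mem_nhds (by simpa using ht))
    exact ContinuousAt.comp (f := fun s : ℝ => t + s) h1
      ((continuous_const.add continuous_id).continuousAt)
  rw [Metric.tendsto_nhdsWithin_nhds]
  intro ε hε
  obtain ⟨δ', hδ'pos, hδ'⟩ := Metric.continuousAt_iff.1 hshift ε hε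
  refine ⟨min (δ/2) δ', by positivity, ?_⟩
  intro k hk hdk
  have hkpos : (0:ℝ) < k := hk
  rw [Real.dist_eq, sub_zero, abs_of_pos hkpos] at hdk
  have hkδ : k ≤ δ/2 := le_of_lt (lt_of_lt_of_le hdk (min_le_left _ _))
  have hg : ∀ s ∈ Icc (-k) k, HasDerivAt (fun s => ρ (t + s)) (ρ₁ (t + s)) s := by
    intro s hs
    have habs : |s| < δ := by
      have := abs_le.2 ⟨hs.1, hs.2⟩
      calc |s| ≤ k := this
        _ ≤ δ/2 := hkδ
        _ < δ := by linarith
    have := (hρ (t + s) (hseg s habs)).comp s ((hasDerivAt_id s).const_add t)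
    simpa [Function.comp_def] using this
  have hg₁ : ∀ s ∈ Icc (-k) k, HasDerivAt (fun s => ρ₁ (t + s)) (ρ₂ (t + s)) s := by
    intro s hs
    have habs : |s| < δ := by
      have := abs_le.2 ⟨hs.1, hs.2⟩
      calc |s| ≤ k := this
        _ ≤ δ/2 := hkδ
        _ < δ := by linarith
    have := (hρ₁ (t + s) (hseg s habs)).comp s ((hasDerivAt_id s).const_add t)
    simpa [Function.comp_def] using this
  obtain ⟨ξ, hξ, he⟩ := mvt2 hkpos hg hg₁
  have hval : (ρ (t + k) + ρ (t - k) - 2 * ρ t) / k ^ 2 = ρ₂ (t + ξ) := by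
    rw [← he]
    have h1 : t - k = t + -k := by ring
    rw [h1, add_zero]
  rw [hval]
  have hξd : dist ξ (0:ℝ) < δ' := by
    rw [Real.dist_eq, sub_zero]
    have : |ξ| < k := abs_lt.2 ⟨hξ.1, hξ.2⟩
    exact lt_of_lt_of_le (lt_trans this hdk) (min_le_right _ _)
  have := hδ' hξd
  simpa using this

end Aux2

/-- Third/fourth order estimates for concave fully nonlinear parabolic equations:
if `C₂, δ₁` are constants for which the interior `L_{δ₁}` estimate for parabolic
subsolutions holds, then the second directional derivatives (in space, and in time)
of a solution of `v_t − F(D²v) = f` obey the same estimate. -/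
theorem stmt4 (n : ℕ) (hn : 1 ≤ n) (lam Lam : ℝ) (hlam : 0 < lam) (hLam : lam ≤ Lam)
    (C₂ δ₁ : ℝ) (hC₂ : 0 < C₂) (hδ₁ : δ₁ ∈ Ioo (0:ℝ) 1)
    (hEst : ∀ f v : EuclideanSpace ℝ (Fin n) → ℝ → ℝ,
      (∃ K : ℝ, ∀ p ∈ ball (0 : EuclideanSpace ℝ (Fin n)) (6 * Real.sqrt n) ×ˢ Ioo (0:ℝ) 1,
        |v p.1 p.2| ≤ K) →
      (∀ p ∈ ball (0 : EuclideanSpace ℝ (Fin n)) (6 * Real.sqrt n) ×ˢ Ioo (0:ℝ) 1,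
        DifferentiableAt ℝ (v p.1) p.2) →
      ContinuousOn (fun p : EuclideanSpace ℝ (Fin n) × ℝ => deriv (v p.1) p.2)
        (ball 0 (6 * Real.sqrt n) ×ˢ Ioo (0:ℝ) 1) →
      (∀ t ∈ Ioo (0:ℝ) 1, ContDiffOn ℝ 2 (fun y => v y t) (ball 0 (6 * Real.sqrt n))) →
      ContinuousOn (fun p : EuclideanSpace ℝ (Fin n) × ℝ => hess (fun y => v y p.2) p.1)
        (ball 0 (6 * Real.sqrt n) ×ˢ Ioo (0:ℝ) 1) →
      (∀ p ∈ ball (0 : EuclideanSpace ℝ (Fin n)) (6 * Real.sqrt n) ×ˢ Ioo (0:ℝ) 1,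
        deriv (v p.1) p.2 - pucciSup lam Lam (hess (fun y => v y p.2) p.1) ≤ f p.1 p.2) →
      lpE δ₁ (cube n 1 ×ˢ Ioo (1/3 : ℝ) (2/3)) (fun p => deriv (v p.1) p.2) +
          lpE δ₁ (cube n 1 ×ˢ Ioo (1/3 : ℝ) (2/3))
            (fun p => matAbs (hess (fun y => v y p.2) p.1)) ≤
        ENNReal.ofReal C₂ *
          (lpE ((n : ℝ) + 1) (ball 0 (6 * Real.sqrt n) ×ˢ Ioo (0:ℝ) 1)
              (fun p => f p.1 p.2) +
            ENNReal.ofReal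
              (⨆ p ∈ ball (0 : EuclideanSpace ℝ (Fin n)) (6 * Real.sqrt n) ×ˢ Ioo (0:ℝ) 1,
                |v p.1 p.2|))) :
    ∀ F : Matrix (Fin n) (Fin n) ℝ → ℝ,
      ConcaveOn ℝ {M : Matrix (Fin n) (Fin n) ℝ | M.IsHermitian} F →
      (∀ X Y : Matrix (Fin n) (Fin n) ℝ, X.IsHermitian → Y.IsHermitian →
        pucciInf lam Lam (X - Y) ≤ F X - F Y ∧ F X - F Y ≤ pucciSup lam Lam (X - Y)) →
      ∀ f v : EuclideanSpace ℝ (Fin n) → ℝ → ℝ,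
        -- all partial derivatives of `v` of order at most `4` in `x` and at most `3` in `t`
        -- exist and are continuous:
        (∀ x ∈ ball (0 : EuclideanSpace ℝ (Fin n)) (6 * Real.sqrt n),
          ContDiffOn ℝ 3 (v x) (Ioo (0:ℝ) 1)) →
        (∀ m : ℕ, m ≤ 3 → ∀ t ∈ Ioo (0:ℝ) 1,
          ContDiffOn ℝ 4 (fun y => iteratedDeriv m (v y) t) (ball 0 (6 * Real.sqrt n))) →
        (∀ k m : ℕ, k ≤ 4 → m ≤ 3 →
          ContinuousOn
            (fun p : EuclideanSpace ℝ (Fin n) × ℝ =>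
              iteratedFDeriv ℝ k (fun y => iteratedDeriv m (v y) p.2) p.1)
            (ball 0 (6 * Real.sqrt n) ×ˢ Ioo (0:ℝ) 1)) →
        -- all partial derivatives of `f` of order at most `2` in `(x,t)` exist and are
        -- continuous:
        ContDiffOn ℝ 2 (fun p : EuclideanSpace ℝ (Fin n) × ℝ => f p.1 p.2)
          (ball 0 (6 * Real.sqrt n) ×ˢ Ioo (0:ℝ) 1) →
        -- the equation `v_t − F(D²v) = f`:
        (∀ p ∈ ball (0 : EuclideanSpace ℝ (Fin n)) (6 * Real.sqrt n) ×ˢ Ioo (0:ℝ) 1,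
          deriv (v p.1) p.2 - F (hess (fun y => v y p.2) p.1) = f p.1 p.2) →
        -- conclusion for `w = ∂²v/∂e²`, `g = ∂²f/∂e²` for every unit direction `e`:
        (∀ e : EuclideanSpace ℝ (Fin n), ‖e‖ = 1 →
          lpE ((n : ℝ) + 1) (ball 0 (6 * Real.sqrt n) ×ˢ Ioo (0:ℝ) 1)
            (fun p => dir2 f e p.1 p.2) < ⊤ →
          (∃ K : ℝ, ∀ p ∈ ball (0 : EuclideanSpace ℝ (Fin n)) (6 * Real.sqrt n) ×ˢ Ioo (0:ℝ) 1,
            |dir2 v e p.1 p.2| ≤ K) →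
          lpE δ₁ (cube n 1 ×ˢ Ioo (1/3 : ℝ) (2/3)) (fun p => deriv (dir2 v e p.1) p.2) +
              lpE δ₁ (cube n 1 ×ˢ Ioo (1/3 : ℝ) (2/3))
                (fun p => matAbs (hess (fun y => dir2 v e y p.2) p.1)) ≤
            ENNReal.ofReal C₂ *
              (lpE ((n : ℝ) + 1) (ball 0 (6 * Real.sqrt n) ×ˢ Ioo (0:ℝ) 1)
                  (fun p => dir2 f e p.1 p.2) +
                ENNReal.ofReal
                  (⨆ p ∈ ball (0 : EuclideanSpace ℝ (Fin n)) (6 * Real.sqrt n) ×ˢ Ioo (0:ℝ) 1,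
                    |dir2 v e p.1 p.2|))) ∧
        -- and the same conclusion with `∂²/∂e²` replaced by `∂²/∂t²`:
        (lpE ((n : ℝ) + 1) (ball 0 (6 * Real.sqrt n) ×ˢ Ioo (0:ℝ) 1)
            (fun p => time2 f p.1 p.2) < ⊤ →
          (∃ K : ℝ, ∀ p ∈ ball (0 : EuclideanSpace ℝ (Fin n)) (6 * Real.sqrt n) ×ˢ Ioo (0:ℝ) 1,
            |time2 v p.1 p.2| ≤ K) →
          lpE δ₁ (cube n 1 ×ˢ Ioo (1/3 : ℝ) (2/3)) (fun p => deriv (time2 v p.1) p.2) +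
              lpE δ₁ (cube n 1 ×ˢ Ioo (1/3 : ℝ) (2/3))
                (fun p => matAbs (hess (fun y => time2 v y p.2) p.1)) ≤
            ENNReal.ofReal C₂ *
              (lpE ((n : ℝ) + 1) (ball 0 (6 * Real.sqrt n) ×ˢ Ioo (0:ℝ) 1)
                  (fun p => time2 f p.1 p.2) +
                ENNReal.ofReal
                  (⨆ p ∈ ball (0 : EuclideanSpace ℝ (Fin n)) (6 * Real.sqrt n) ×ˢ Ioo (0:ℝ) 1,
                    |time2 v p.1 p.2|))) := by
  
  intro F hFconc hFell f v hvt3 hm4 hjc hf heq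
  have hBopen : IsOpen (ball (0 : EuclideanSpace ℝ (Fin n)) (6 * Real.sqrt n)) := isOpen_ball
  have hJopen : IsOpen (Ioo (0:ℝ) 1) := isOpen_Ioo
  -- slice regularity
  have hv4 : ∀ t ∈ Ioo (0:ℝ) 1,
      ContDiffOn ℝ 4 (fun y => v y t) (ball 0 (6 * Real.sqrt n)) := by
    intro t ht
    have h := hm4 0 (by norm_num) t ht
    have heq0 : (fun y => iteratedDeriv 0 (v y) t) = (fun y => v y t) :=
      funext fun y => by rw [iteratedDeriv_zero]
    rwa [heq0] at h
  have hvt4 : ∀ t ∈ Ioo (0:ℝ) 1,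
      ContDiffOn ℝ 4 (fun y => deriv (v y) t) (ball 0 (6 * Real.sqrt n)) := by
    intro t ht
    have h := hm4 1 (by norm_num) t ht
    have heq1 : (fun y => iteratedDeriv 1 (v y) t) = (fun y => deriv (v y) t) :=
      funext fun y => by rw [iteratedDeriv_one]
    rwa [heq1] at h
  have hfslice_x : ∀ t ∈ Ioo (0:ℝ) 1,
      ContDiffOn ℝ 2 (fun y => f y t) (ball 0 (6 * Real.sqrt n)) := by
    intro t ht
    have hg : ContDiffOn ℝ 2 (fun y : EuclideanSpace ℝ (Fin n) => (y, t))
        (ball 0 (6 * Real.sqrt n)) := (contDiff_id.prodMk contDiff_const).contDiffOn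
    exact hf.comp hg (fun y hy => ⟨hy, ht⟩)
  have hfslice_t : ∀ x ∈ ball (0 : EuclideanSpace ℝ (Fin n)) (6 * Real.sqrt n),
      ContDiffOn ℝ 2 (f x) (Ioo (0:ℝ) 1) := by
    intro x hx
    have hg : ContDiffOn ℝ 2 (fun τ : ℝ => ((x : EuclideanSpace ℝ (Fin n)), τ)) (Ioo (0:ℝ) 1) :=
      (contDiff_const.prodMk contDiff_id).contDiffOn
    exact hf.comp hg (fun τ hτ => ⟨hx, hτ⟩)
  have hveq : ∀ y ∈ ball (0 : EuclideanSpace ℝ (Fin n)) (6 * Real.sqrt n), ∀ τ ∈ Ioo (0:ℝ) 1,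
      deriv (v y) τ = f y τ + F (hess (fun z => v z τ) y) := by
    intro y hy τ hτ
    have := heq (y, τ) ⟨hy, hτ⟩
    simp only at this
    linarith
  -- hermitian property of hessians of C² functions
  have hhermGen : ∀ u : EuclideanSpace ℝ (Fin n) → ℝ,
      ContDiffOn ℝ 2 u (ball 0 (6 * Real.sqrt n)) →
      ∀ y ∈ ball (0 : EuclideanSpace ℝ (Fin n)) (6 * Real.sqrt n), (hess u y).IsHermitian := by
    intro u hu y hy
    show (hess u y).conjTranspose = hess u y
    ext i j
    simp only [Matrix.conjTranspose_apply, star_trivial]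
    exact Aux2.DD_swap hBopen hu hy (EuclideanSpace.single j 1) (EuclideanSpace.single i 1)
  have hherm : ∀ t ∈ Ioo (0:ℝ) 1, ∀ y ∈ ball (0 : EuclideanSpace ℝ (Fin n)) (6 * Real.sqrt n),
      (hess (fun z => v z t) y).IsHermitian := fun t ht y hy =>
    hhermGen _ ((hv4 t ht).of_le (by norm_num)) y hy
  -- concavity + ellipticity inequality
  have hconcav : ∀ Xp Xm X0 : Matrix (Fin n) (Fin n) ℝ, Xp.IsHermitian → Xm.IsHermitian →
      X0.IsHermitian → ∀ h2 : ℝ, 0 < h2 →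
      (F Xp + F Xm - 2 * F X0) / h2
        ≤ pucciSup lam Lam (h2⁻¹ • (Xp + Xm - (2:ℝ) • X0)) := by
    intro Xp Xm X0 hp1 hm1 h01 h2 hh2
    have hmidmem : ((1/2 : ℝ) • Xp + (1/2 : ℝ) • Xm) ∈
        {M : Matrix (Fin n) (Fin n) ℝ | M.IsHermitian} :=
      (Aux.smul_herm hp1).add (Aux.smul_herm hm1)
    have hconc := hFconc.2 hp1 hm1 (by norm_num : (0:ℝ) ≤ 1/2) (by norm_num : (0:ℝ) ≤ 1/2)
      (by norm_num)
    have hell := (hFell ((1/2:ℝ) • Xp + (1/2:ℝ) • Xm) X0 hmidmem h01).2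
    have hsubherm : (((1/2:ℝ) • Xp + (1/2:ℝ) • Xm) - X0).IsHermitian := hmidmem.sub h01
    have hscal := Aux.pucci_smul (lam := lam) (Lam := Lam) (c := 2/h2) (by positivity) hsubherm
    have hmat : h2⁻¹ • (Xp + Xm - (2:ℝ) • X0)
        = (2/h2) • ((((1/2:ℝ) • Xp + (1/2:ℝ) • Xm)) - X0) := by
      ext i j
      simp only [Matrix.smul_apply, Matrix.add_apply, Matrix.sub_apply, smul_eq_mul]
      field_simp
    rw [hmat, hscal]
    have e1 : F Xp + F Xm ≤ 2 * F ((1/2:ℝ) • Xp + (1/2:ℝ) • Xm) := by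
      have := hconc
      simp only [smul_eq_mul] at this
      linarith
    have hc1 : F Xp + F Xm - 2 * F X0
        ≤ 2 * pucciSup lam Lam ((((1/2:ℝ) • Xp + (1/2:ℝ) • Xm)) - X0) := by linarith
    calc (F Xp + F Xm - 2 * F X0) / h2
        ≤ (2 * pucciSup lam Lam ((((1/2:ℝ) • Xp + (1/2:ℝ) • Xm)) - X0)) / h2 :=
          (div_le_div_iff_of_pos_right hh2).2 hc1
      _ = (2/h2) * pucciSup lam Lam ((((1/2:ℝ) • Xp + (1/2:ℝ) • Xm)) - X0) := by ring
  refine ⟨?_, ?_⟩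
  · -- second derivatives in a spatial direction e
    intro e he hglp hbd
    have hr1 : ∀ τ : ℝ, (fun y => iteratedDeriv 1 (v y) τ) = (fun y => deriv (v y) τ) :=
      fun τ => funext fun y => by rw [iteratedDeriv_one]
    have hWc : ContinuousOn
        (fun p : EuclideanSpace ℝ (Fin n) × ℝ =>
          Aux2.Dv e (Aux2.Dv e (fun y => deriv (v y) p.2)) p.1)
        (ball 0 (6 * Real.sqrt n) ×ˢ Ioo (0:ℝ) 1) := by
      have hbase := Aux2.contOn_eval (hjc 2 1 (by norm_num) (by norm_num)) ![e, e]
      apply ContinuousOn.congr hbase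
      intro p hp
      show Aux2.Dv e (Aux2.Dv e (fun y => deriv (v y) p.2)) p.1
          = iteratedFDeriv ℝ 2 (fun y => iteratedDeriv 1 (v y) p.2) p.1 ![e, e]
      rw [← hr1 p.2]
      exact (Aux2.iterFD2_eq hBopen ((hm4 1 (by norm_num) p.2 hp.2).of_le (by norm_num))
        e e hp.1).symm
    have hmaster : ∀ x ∈ ball (0 : EuclideanSpace ℝ (Fin n)) (6 * Real.sqrt n),
        ∀ t ∈ Ioo (0:ℝ) 1,
        HasDerivAt (fun τ => dir2 v e x τ)
          (Aux2.Dv e (Aux2.Dv e (fun y => deriv (v y) t)) x) t := by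
      intro x hx t ht
      exact Aux2.master hBopen hJopen e
        (V := fun y τ => v y τ) (W := fun y τ => deriv (v y) τ)
        (fun y hy τ hτ =>
          (((hvt3 y hy).differentiableOn (by norm_num)).differentiableAt
            (hJopen.mem_nhds hτ)).hasDerivAt)
        (fun τ hτ => (hv4 τ hτ).of_le (by norm_num))
        (fun τ hτ => (hvt4 τ hτ).of_le (by norm_num))
        hWc hx ht
    refine hEst (fun x t => dir2 f e x t) (fun x t => dir2 v e x t) hbd ?_ ?_ ?_ ?_ ?_
    · intro p hp
      exact (hmaster p.1 hp.1 p.2 hp.2).differentiableAt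
    · apply ContinuousOn.congr hWc
      intro p hp
      exact (hmaster p.1 hp.1 p.2 hp.2).deriv
    · intro t ht
      have c4 := hv4 t ht
      have c3 : ContDiffOn ℝ ((3:ℕ) : WithTop ℕ∞) (Aux2.Dv e (fun y => v y t))
          (ball 0 (6 * Real.sqrt n)) :=
        Aux2.contDiffOn_Dv hBopen (m := 3) (by exact_mod_cast c4) e
      have c2 : ContDiffOn ℝ ((2:ℕ) : WithTop ℕ∞)
          (Aux2.Dv e (Aux2.Dv e (fun y => v y t))) (ball 0 (6 * Real.sqrt n)) :=
        Aux2.contDiffOn_Dv hBopen (m := 2) (by exact_mod_cast c3) e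
      exact_mod_cast c2
    · rw [continuousOn_iff_continuous_restrict]
      apply continuous_matrix
      intro i j
      rw [show (fun a : ↥(ball (0 : EuclideanSpace ℝ (Fin n)) (6 * Real.sqrt n)
            ×ˢ Ioo (0:ℝ) 1) =>
          (ball (0 : EuclideanSpace ℝ (Fin n)) (6 * Real.sqrt n) ×ˢ Ioo (0:ℝ) 1).domRestrict
            (fun p => hess (fun y => dir2 v e y p.2) p.1) a i j)
          = (ball (0 : EuclideanSpace ℝ (Fin n)) (6 * Real.sqrt n) ×ˢ Ioo (0:ℝ) 1).domRestrict
            (fun p => hess (fun y => dir2 v e y p.2) p.1 i j) from rfl]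
      rw [← continuousOn_iff_continuous_restrict]
      have hbase := Aux2.contOn_eval (hjc 4 0 (by norm_num) (by norm_num))
        ![EuclideanSpace.single i 1, EuclideanSpace.single j 1, e, e]
      apply ContinuousOn.congr hbase
      intro p hp
      show hess (fun y => dir2 v e y p.2) p.1 i j
          = iteratedFDeriv ℝ 4 (fun y => iteratedDeriv 0 (v y) p.2) p.1
            ![EuclideanSpace.single i 1, EuclideanSpace.single j 1, e, e]
      have hz : (fun y => iteratedDeriv 0 (v y) p.2) = (fun y => v y p.2) :=
        funext fun y => by rw [iteratedDeriv_zero]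
      rw [hz, Aux2.iterFD4_eq hBopen (hv4 p.2 hp.2) (EuclideanSpace.single i 1)
        (EuclideanSpace.single j 1) e e hp.1]
      rfl
    · intro p hp
      obtain ⟨x, t⟩ := p
      obtain ⟨hx, ht⟩ := hp
      have hd : deriv (fun τ => dir2 v e x τ) t
          = Aux2.Dv e (Aux2.Dv e (fun y => deriv (v y) t)) x := (hmaster x hx t ht).deriv
      have hlc : Continuous (fun s : ℝ => x + s • e) :=
        continuous_const.add (continuous_id.smul continuous_const)
      have h0U : (0:ℝ) ∈ (fun s : ℝ => x + s • e) ⁻¹'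
          (ball (0 : EuclideanSpace ℝ (Fin n)) (6 * Real.sqrt n)) := by simp [hx]
      obtain ⟨δ0, hδ0pos, hδ0⟩ := Metric.isOpen_iff.1 (hBopen.preimage hlc) 0 h0U
      have hmem : ∀ h : ℝ, |h| < δ0 →
          x + h • e ∈ ball (0 : EuclideanSpace ℝ (Fin n)) (6 * Real.sqrt n) := by
        intro h hh
        apply hδ0
        simpa [Real.dist_eq] using hh
      have hH2 : ∀ i j : Fin n, ContDiffOn ℝ 2
          (fun y => hess (fun z => v z t) y i j) (ball 0 (6 * Real.sqrt n)) := by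
        intro i j
        have c4 := hv4 t ht
        have c3 := Aux2.contDiffOn_Dv hBopen (m := 3) (by exact_mod_cast c4)
          (EuclideanSpace.single j 1)
        have c2 := Aux2.contDiffOn_Dv hBopen (m := 2) (by exact_mod_cast c3)
          (EuclideanSpace.single i 1)
        exact_mod_cast c2
      have t1 := Aux2.tendsto_diffquot hBopen ((hvt4 t ht).of_le (by norm_num)) hx e
      have t2 := Aux2.tendsto_diffquot hBopen (hfslice_x t ht) hx e
      have t3 : ∀ i j : Fin n, Filter.Tendsto (fun h : ℝ =>
          ((fun y => hess (fun z => v z t) y i j) (x + h • e)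
            + (fun y => hess (fun z => v z t) y i j) (x + (-h) • e)
            - 2 * (fun y => hess (fun z => v z t) y i j) x) / h ^ 2)
          (nhdsWithin 0 (Ioi 0))
          (nhds (Aux2.Dv e (Aux2.Dv e (fun y => hess (fun z => v z t) y i j)) x)) :=
        fun i j => Aux2.tendsto_diffquot hBopen (hH2 i j) hx e
      set NN : Matrix (Fin n) (Fin n) ℝ :=
        fun i j => Aux2.Dv e (Aux2.Dv e (fun y => hess (fun z => v z t) y i j)) x with hNNdef
      have hermEV : ∀ᶠ h : ℝ in nhdsWithin 0 (Ioi 0),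
          (((h^2)⁻¹ • (hess (fun z => v z t) (x + h • e) + hess (fun z => v z t) (x + (-h) • e)
            - (2:ℝ) • hess (fun z => v z t) x)) : Matrix (Fin n) (Fin n) ℝ).IsHermitian := by
        filter_upwards [Ioo_mem_nhdsGT_of_mem ⟨le_refl (0:ℝ), hδ0pos⟩] with h hh
        have hp1 := hherm t ht _ (hmem h (by rw [abs_of_pos hh.1]; exact hh.2))
        have hm1 := hherm t ht _ (hmem (-h) (by rw [abs_neg, abs_of_pos hh.1]; exact hh.2))
        have h01 := hherm t ht x hx
        exact Aux.smul_herm ((hp1.add hm1).sub (Aux.smul_herm h01))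
      have hermNN : NN.IsHermitian := by
        show NN.conjTranspose = NN
        ext i j
        simp only [Matrix.conjTranspose_apply, star_trivial, hNNdef]
        have hsym : ∀ y ∈ ball (0 : EuclideanSpace ℝ (Fin n)) (6 * Real.sqrt n),
            hess (fun z => v z t) y j i = hess (fun z => v z t) y i j := by
          intro y hy
          have hH := hherm t ht y hy
          have := congrFun (congrFun hH i) j
          simpa [Matrix.conjTranspose_apply, star_trivial] using this
        have l1 : ∀ y ∈ ball (0 : EuclideanSpace ℝ (Fin n)) (6 * Real.sqrt n),
            Aux2.Dv e (fun z => hess (fun z' => v z' t) z j i) y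
              = Aux2.Dv e (fun z => hess (fun z' => v z' t) z i j) y :=
          fun y hy => Aux2.Dv_congr hBopen hsym hy e
        exact Aux2.Dv_congr hBopen l1 hx e
      have hconv : ∀ i j : Fin n, Filter.Tendsto (fun h : ℝ =>
          (((h^2)⁻¹ • (hess (fun z => v z t) (x + h • e) + hess (fun z => v z t) (x + (-h) • e)
            - (2:ℝ) • hess (fun z => v z t) x)) : Matrix (Fin n) (Fin n) ℝ) i j)
          (nhdsWithin 0 (Ioi 0)) (nhds (NN i j)) := by
        intro i j
        apply Filter.Tendsto.congr _ (t3 i j)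
        intro h
        simp only [Matrix.smul_apply, Matrix.add_apply, Matrix.sub_apply, smul_eq_mul]
        rw [div_eq_inv_mul]
        try ring
      have tP := Aux.pucci_tendsto (lam := lam) (Lam := Lam) hlam.le
        (hlam.trans_le hLam).le hermEV hermNN hconv
      have hineq : ∀ᶠ h : ℝ in nhdsWithin 0 (Ioi 0),
          (deriv (v (x + h • e)) t + deriv (v (x + (-h) • e)) t
            - 2 * deriv (v x) t) / h ^ 2
            ≤ (f (x + h • e) t + f (x + (-h) • e) t
              - 2 * f x t) / h ^ 2
              + pucciSup lam Lam ((h^2)⁻¹ • (hess (fun z => v z t) (x + h • e)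
                + hess (fun z => v z t) (x + (-h) • e)
                - (2:ℝ) • hess (fun z => v z t) x)) := by
        filter_upwards [Ioo_mem_nhdsGT_of_mem ⟨le_refl (0:ℝ), hδ0pos⟩] with h hh
        have hyp1 : x + h • e ∈ ball (0 : EuclideanSpace ℝ (Fin n)) (6 * Real.sqrt n) :=
          hmem h (by rw [abs_of_pos hh.1]; exact hh.2)
        have hym1 : x + (-h) • e ∈ ball (0 : EuclideanSpace ℝ (Fin n)) (6 * Real.sqrt n) :=
          hmem (-h) (by rw [abs_neg, abs_of_pos hh.1]; exact hh.2)
        have hp1 := hherm t ht _ hyp1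
        have hm1 := hherm t ht _ hym1
        have h01 := hherm t ht x hx
        have hkey := hconcav _ _ _ hp1 hm1 h01 (h^2) (pow_pos hh.1 2)
        rw [hveq _ hyp1 t ht, hveq _ hym1 t ht, hveq x hx t ht]
        calc (f (x + h • e) t + F (hess (fun z => v z t) (x + h • e))
              + (f (x + (-h) • e) t + F (hess (fun z => v z t) (x + (-h) • e)))
              - 2 * (f x t + F (hess (fun z => v z t) x))) / h ^ 2
            = (f (x + h • e) t + f (x + (-h) • e) t - 2 * f x t) / h ^ 2
              + (F (hess (fun z => v z t) (x + h • e))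
                + F (hess (fun z => v z t) (x + (-h) • e))
                - 2 * F (hess (fun z => v z t) x)) / h ^ 2 := by ring
          _ ≤ (f (x + h • e) t + f (x + (-h) • e) t - 2 * f x t) / h ^ 2
              + pucciSup lam Lam ((h^2)⁻¹ • (hess (fun z => v z t) (x + h • e)
                + hess (fun z => v z t) (x + (-h) • e)
                - (2:ℝ) • hess (fun z => v z t) x)) := add_le_add_right hkey _
      have final : Aux2.Dv e (Aux2.Dv e (fun y => deriv (v y) t)) x
          ≤ Aux2.Dv e (Aux2.Dv e (fun y => f y t)) x + pucciSup lam Lam NN :=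
        le_of_tendsto_of_tendsto t1 (t2.add tP) hineq
      have hNN2 : hess (fun y => dir2 v e y t) x = NN := by
        ext i j
        exact Aux2.swap_abee hBopen (hv4 t ht) (EuclideanSpace.single i 1)
          (EuclideanSpace.single j 1) e hx
      show deriv (fun τ => dir2 v e x τ) t
          - pucciSup lam Lam (hess (fun y => dir2 v e y t) x) ≤ dir2 f e x t
      rw [hd, hNN2]
      have : dir2 f e x t = Aux2.Dv e (Aux2.Dv e (fun y => f y t)) x := rfl
      rw [this]
      linarith [final]
  · -- second derivatives in time
    intro hglp hbd
    have hr : ∀ τ : ℝ, (fun y => iteratedDeriv 2 (v y) τ) = (fun y => time2 v y τ) :=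
      fun τ => funext fun y => by rw [iteratedDeriv_succ, iteratedDeriv_one]; rfl
    -- τ-derivatives of iterated time derivatives
    have hDat : ∀ m : ℕ, m < 3 → ∀ y ∈ ball (0 : EuclideanSpace ℝ (Fin n)) (6 * Real.sqrt n),
        ∀ σ ∈ Ioo (0:ℝ) 1, HasDerivAt (fun σ => iteratedDeriv m (v y) σ)
          (iteratedDeriv (m+1) (v y) σ) σ := by
      intro m hm y hy σ hσ
      have hC : ContDiffOn ℝ 1 (iteratedDeriv m (v y)) (Ioo (0:ℝ) 1) := by
        interval_cases m
        · rw [iteratedDeriv_zero]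
          exact (hvt3 y hy).of_le (by norm_num)
        · rw [iteratedDeriv_one]
          exact ((hvt3 y hy).deriv_of_isOpen (m := 2) hJopen (by norm_num)).of_le (by norm_num)
        · rw [iteratedDeriv_succ, iteratedDeriv_one]
          exact (((hvt3 y hy).deriv_of_isOpen (m := 2) hJopen
            (by norm_num)).deriv_of_isOpen (m := 1) hJopen (by norm_num)).of_le (by norm_num)
      have hdiff : DifferentiableAt ℝ (iteratedDeriv m (v y)) σ :=
        (hC.differentiableOn (by norm_num)).differentiableAt (hJopen.mem_nhds hσ)
      have hder := hdiff.hasDerivAt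
      rw [show iteratedDeriv (m+1) (v y) σ = deriv (iteratedDeriv m (v y)) σ from by
        rw [iteratedDeriv_succ]]
      exact hder
    -- master commutation for Q_a in time
    have masterQ : ∀ (a : EuclideanSpace ℝ (Fin n)) (m : ℕ), m < 3 →
        ∀ x ∈ ball (0 : EuclideanSpace ℝ (Fin n)) (6 * Real.sqrt n), ∀ τ ∈ Ioo (0:ℝ) 1,
        HasDerivAt (fun σ => Aux2.Dv a (Aux2.Dv a (fun y => iteratedDeriv m (v y) σ)) x)
          (Aux2.Dv a (Aux2.Dv a (fun y => iteratedDeriv (m+1) (v y) τ)) x) τ := by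
      intro a m hm x hx τ hτ
      have hWc : ContinuousOn
          (fun p : EuclideanSpace ℝ (Fin n) × ℝ =>
            Aux2.Dv a (Aux2.Dv a (fun y => iteratedDeriv (m+1) (v y) p.2)) p.1)
          (ball 0 (6 * Real.sqrt n) ×ˢ Ioo (0:ℝ) 1) := by
        have hbase := Aux2.contOn_eval (hjc 2 (m+1) (by norm_num) (by omega)) ![a, a]
        apply ContinuousOn.congr hbase
        intro p hp
        exact (Aux2.iterFD2_eq hBopen ((hm4 (m+1) (by omega) p.2 hp.2).of_le (by norm_num))
          a a hp.1).symm
      exact Aux2.master hBopen hJopen a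
        (V := fun y σ => iteratedDeriv m (v y) σ)
        (W := fun y σ => iteratedDeriv (m+1) (v y) σ)
        (fun y hy σ hσ => hDat m hm y hy σ hσ)
        (fun σ hσ => (hm4 m (by omega) σ hσ).of_le (by norm_num))
        (fun σ hσ => (hm4 (m+1) (by omega) σ hσ).of_le (by norm_num))
        hWc hx hτ
    -- continuity in τ of second-order quantities
    have hQcont : ∀ (a : EuclideanSpace ℝ (Fin n)) (m : ℕ), m ≤ 3 →
        ∀ x ∈ ball (0 : EuclideanSpace ℝ (Fin n)) (6 * Real.sqrt n),
        ContinuousOn (fun τ => Aux2.Dv a (Aux2.Dv a (fun y => iteratedDeriv m (v y) τ)) x)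
          (Ioo (0:ℝ) 1) := by
      intro a m hm x hx
      have hbase := Aux2.contOn_eval (hjc 2 m (by norm_num) hm) ![a, a]
      have hmap : MapsTo (fun τ : ℝ => ((x : EuclideanSpace ℝ (Fin n)), τ)) (Ioo (0:ℝ) 1)
          (ball 0 (6 * Real.sqrt n) ×ˢ Ioo (0:ℝ) 1) := fun τ hτ => ⟨hx, hτ⟩
      have hcomp := hbase.comp ((continuous_const.prodMk continuous_id).continuousOn) hmap
      apply ContinuousOn.congr hcomp
      intro τ hτ
      exact (Aux2.iterFD2_eq hBopen ((hm4 m hm τ hτ).of_le (by norm_num)) a a hx).symm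
    refine hEst (fun x t => time2 f x t) (fun x t => time2 v x t) hbd ?_ ?_ ?_ ?_ ?_
    · intro p hp
      have hC : ContDiffOn ℝ 1 (deriv (deriv (v p.1))) (Ioo (0:ℝ) 1) :=
        ((hvt3 p.1 hp.1).deriv_of_isOpen (m := 2) hJopen
          (by norm_num)).deriv_of_isOpen (m := 1) hJopen (by norm_num)
      exact (hC.differentiableOn (by norm_num)).differentiableAt (hJopen.mem_nhds hp.2)
    · have hbase := Aux2.contOn_eval (hjc 0 3 (by norm_num) (by norm_num))
        (fun i : Fin 0 => i.elim0)
      apply ContinuousOn.congr hbase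
      intro p hp
      show deriv (fun τ => time2 v p.1 τ) p.2
          = iteratedFDeriv ℝ 0 (fun y => iteratedDeriv 3 (v y) p.2) p.1 (fun i : Fin 0 => i.elim0)
      rw [iteratedFDeriv_zero_apply]
      show deriv (deriv (deriv (v p.1))) p.2 = iteratedDeriv 3 (v p.1) p.2
      rw [show iteratedDeriv 3 (v p.1) = deriv (deriv (deriv (v p.1))) from by
        rw [iteratedDeriv_succ, iteratedDeriv_succ, iteratedDeriv_one]]
    · intro t ht
      have h4 := hm4 2 (by norm_num) t ht
      rw [hr t] at h4
      exact h4.of_le (by norm_num)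
    · rw [continuousOn_iff_continuous_restrict]
      apply continuous_matrix
      intro i j
      rw [show (fun a : ↥(ball (0 : EuclideanSpace ℝ (Fin n)) (6 * Real.sqrt n)
            ×ˢ Ioo (0:ℝ) 1) =>
          (ball (0 : EuclideanSpace ℝ (Fin n)) (6 * Real.sqrt n) ×ˢ Ioo (0:ℝ) 1).domRestrict
            (fun p => hess (fun y => time2 v y p.2) p.1) a i j)
          = (ball (0 : EuclideanSpace ℝ (Fin n)) (6 * Real.sqrt n) ×ˢ Ioo (0:ℝ) 1).domRestrict
            (fun p => hess (fun y => time2 v y p.2) p.1 i j) from rfl]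
      rw [← continuousOn_iff_continuous_restrict]
      have hbase := Aux2.contOn_eval (hjc 2 2 (by norm_num) (by norm_num))
        ![EuclideanSpace.single i 1, EuclideanSpace.single j 1]
      apply ContinuousOn.congr hbase
      intro p hp
      show Aux2.Dv (EuclideanSpace.single i 1) (Aux2.Dv (EuclideanSpace.single j 1)
            (fun y => time2 v y p.2)) p.1
          = iteratedFDeriv ℝ 2 (fun y => iteratedDeriv 2 (v y) p.2) p.1
            ![EuclideanSpace.single i 1, EuclideanSpace.single j 1]
      rw [← hr p.2]
      exact (Aux2.iterFD2_eq hBopen ((hm4 2 (by norm_num) p.2 hp.2).of_le (by norm_num))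
        (EuclideanSpace.single i 1) (EuclideanSpace.single j 1) hp.1).symm
    · intro p hp
      obtain ⟨x, t⟩ := p
      obtain ⟨hx, ht⟩ := hp
      obtain ⟨δ0, hδ0pos, hδ0⟩ := Metric.isOpen_iff.1 hJopen t ht
      have hmemJ : ∀ k : ℝ, |k| < δ0 → t + k ∈ Ioo (0:ℝ) 1 := by
        intro k hk
        apply hδ0
        simp only [Metric.mem_ball, Real.dist_eq, add_sub_cancel_left]
        exact hk
      -- time derivative chain for v at x
      have c3 := hvt3 x hx
      have c2v : ContDiffOn ℝ 2 (deriv (v x)) (Ioo (0:ℝ) 1) :=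
        c3.deriv_of_isOpen hJopen (by norm_num)
      have c1v : ContDiffOn ℝ 1 (deriv (deriv (v x))) (Ioo (0:ℝ) 1) :=
        c2v.deriv_of_isOpen hJopen (by norm_num)
      have t1 : Filter.Tendsto (fun k : ℝ =>
          (deriv (v x) (t + k) + deriv (v x) (t - k) - 2 * deriv (v x) t) / k ^ 2)
          (nhdsWithin 0 (Ioi 0)) (nhds (deriv (deriv (deriv (v x))) t)) := by
        apply Aux2.tendsto_diffquot1D hJopen
          (fun τ hτ => ((c2v.differentiableOn (by norm_num)).differentiableAt
            (hJopen.mem_nhds hτ)).hasDerivAt)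
          (fun τ hτ => ((c1v.differentiableOn (by norm_num)).differentiableAt
            (hJopen.mem_nhds hτ)).hasDerivAt)
          (c1v.continuousOn_deriv_of_isOpen hJopen le_rfl) ht
      have c2f := hfslice_t x hx
      have c1f : ContDiffOn ℝ 1 (deriv (f x)) (Ioo (0:ℝ) 1) :=
        c2f.deriv_of_isOpen hJopen (by norm_num)
      have t2 : Filter.Tendsto (fun k : ℝ =>
          (f x (t + k) + f x (t - k) - 2 * f x t) / k ^ 2)
          (nhdsWithin 0 (Ioi 0)) (nhds (deriv (deriv (f x)) t)) := by
        apply Aux2.tendsto_diffquot1D hJopen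
          (fun τ hτ => ((c2f.differentiableOn (by norm_num)).differentiableAt
            (hJopen.mem_nhds hτ)).hasDerivAt)
          (fun τ hτ => ((c1f.differentiableOn (by norm_num)).differentiableAt
            (hJopen.mem_nhds hτ)).hasDerivAt)
          (c1f.continuousOn_deriv_of_isOpen hJopen le_rfl) ht
      -- hessian entries in time
      have hz0 : ∀ τ : ℝ, (fun y => iteratedDeriv 0 (v y) τ) = (fun y => v y τ) :=
        fun τ => funext fun y => by rw [iteratedDeriv_zero]
      have hpolar : ∀ (m : ℕ), m ≤ 3 → ∀ i j : Fin n, ∀ τ ∈ Ioo (0:ℝ) 1,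
          Aux2.Dv (EuclideanSpace.single i 1) (Aux2.Dv (EuclideanSpace.single j 1)
            (fun y => iteratedDeriv m (v y) τ)) x
          = (Aux2.Dv (EuclideanSpace.single i 1 + EuclideanSpace.single j 1)
              (Aux2.Dv (EuclideanSpace.single i 1 + EuclideanSpace.single j 1)
                (fun y => iteratedDeriv m (v y) τ)) x
            - Aux2.Dv (EuclideanSpace.single i 1)
                (Aux2.Dv (EuclideanSpace.single i 1) (fun y => iteratedDeriv m (v y) τ)) x
            - Aux2.Dv (EuclideanSpace.single j 1)
                (Aux2.Dv (EuclideanSpace.single j 1) (fun y => iteratedDeriv m (v y) τ)) x)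
            / 2 :=
        fun m hm i j τ hτ => Aux2.polar hBopen ((hm4 m hm τ hτ).of_le (by norm_num)) hx _ _
      have hρder : ∀ (m : ℕ), m < 3 → ∀ i j : Fin n, ∀ τ ∈ Ioo (0:ℝ) 1,
          HasDerivAt (fun σ => Aux2.Dv (EuclideanSpace.single i 1)
            (Aux2.Dv (EuclideanSpace.single j 1) (fun y => iteratedDeriv m (v y) σ)) x)
            (Aux2.Dv (EuclideanSpace.single i 1) (Aux2.Dv (EuclideanSpace.single j 1)
              (fun y => iteratedDeriv (m+1) (v y) τ)) x) τ := by
        intro m hm i j τ hτ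
        have hcombo := (((masterQ (EuclideanSpace.single i 1 + EuclideanSpace.single j 1) m hm
          x hx τ hτ).sub (masterQ (EuclideanSpace.single i 1) m hm x hx τ hτ)).sub
          (masterQ (EuclideanSpace.single j 1) m hm x hx τ hτ)).div_const 2
        have hev : (fun σ => Aux2.Dv (EuclideanSpace.single i 1)
            (Aux2.Dv (EuclideanSpace.single j 1) (fun y => iteratedDeriv m (v y) σ)) x)
            =ᶠ[nhds τ] (fun σ =>
              (Aux2.Dv (EuclideanSpace.single i 1 + EuclideanSpace.single j 1)
                (Aux2.Dv (EuclideanSpace.single i 1 + EuclideanSpace.single j 1)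
                  (fun y => iteratedDeriv m (v y) σ)) x
              - Aux2.Dv (EuclideanSpace.single i 1)
                  (Aux2.Dv (EuclideanSpace.single i 1) (fun y => iteratedDeriv m (v y) σ)) x
              - Aux2.Dv (EuclideanSpace.single j 1)
                  (Aux2.Dv (EuclideanSpace.single j 1) (fun y => iteratedDeriv m (v y) σ)) x)
              / 2) :=
          Filter.eventuallyEq_of_mem (hJopen.mem_nhds hτ)
            (fun σ hσ => hpolar m (by omega) i j σ hσ)
        have := hcombo.congr_of_eventuallyEq hev
        rwa [hpolar (m+1) (by omega) i j τ hτ]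
      have hρ₂cont : ∀ i j : Fin n, ContinuousOn (fun τ =>
          Aux2.Dv (EuclideanSpace.single i 1) (Aux2.Dv (EuclideanSpace.single j 1)
            (fun y => iteratedDeriv 2 (v y) τ)) x) (Ioo (0:ℝ) 1) := by
        intro i j
        have hc := (((hQcont (EuclideanSpace.single i 1 + EuclideanSpace.single j 1) 2
          (by norm_num) x hx).sub (hQcont (EuclideanSpace.single i 1) 2 (by norm_num) x hx)).sub
          (hQcont (EuclideanSpace.single j 1) 2 (by norm_num) x hx)).div_const 2
        apply ContinuousOn.congr hc
        intro τ hτ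
        exact hpolar 2 (by norm_num) i j τ hτ
      have t3 : ∀ i j : Fin n, Filter.Tendsto (fun k : ℝ =>
          (hess (fun z => v z (t + k)) x i j + hess (fun z => v z (t - k)) x i j
            - 2 * hess (fun z => v z t) x i j) / k ^ 2) (nhdsWithin 0 (Ioi 0))
          (nhds (hess (fun y => time2 v y t) x i j)) := by
        intro i j
        have hq := Aux2.tendsto_diffquot1D hJopen
          (fun τ hτ => by
            have := hρder 0 (by norm_num) i j τ hτ
            simp only [hz0] at this
            exact this)
          (fun τ hτ => hρder 1 (by norm_num) i j τ hτ)
          (hρ₂cont i j) ht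
        have hlim : Aux2.Dv (EuclideanSpace.single i 1) (Aux2.Dv (EuclideanSpace.single j 1)
            (fun y => iteratedDeriv 2 (v y) t)) x = hess (fun y => time2 v y t) x i j := by
          rw [hr t]
          rfl
        rw [hlim] at hq
        exact hq
      set NN : Matrix (Fin n) (Fin n) ℝ := hess (fun y => time2 v y t) x with hNNdef
      have hermEV : ∀ᶠ k : ℝ in nhdsWithin 0 (Ioi 0),
          (((k^2)⁻¹ • (hess (fun z => v z (t + k)) x + hess (fun z => v z (t - k)) x
            - (2:ℝ) • hess (fun z => v z t) x)) : Matrix (Fin n) (Fin n) ℝ).IsHermitian := by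
        filter_upwards [Ioo_mem_nhdsGT_of_mem ⟨le_refl (0:ℝ), hδ0pos⟩] with k hk
        have hp1 := hherm (t + k) (hmemJ k (by rw [abs_of_pos hk.1]; exact hk.2)) x hx
        have hm1 := hherm (t - k) (by
          have := hmemJ (-k) (by rw [abs_neg, abs_of_pos hk.1]; exact hk.2)
          rwa [show t + -k = t - k from by ring] at this) x hx
        have h01 := hherm t ht x hx
        exact Aux.smul_herm ((hp1.add hm1).sub (Aux.smul_herm h01))
      have hermNN : NN.IsHermitian := by
        have h4 := hm4 2 (by norm_num) t ht
        rw [hr t] at h4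
        exact hhermGen _ (h4.of_le (by norm_num)) x hx
      have hconv : ∀ i j : Fin n, Filter.Tendsto (fun k : ℝ =>
          (((k^2)⁻¹ • (hess (fun z => v z (t + k)) x + hess (fun z => v z (t - k)) x
            - (2:ℝ) • hess (fun z => v z t) x)) : Matrix (Fin n) (Fin n) ℝ) i j)
          (nhdsWithin 0 (Ioi 0)) (nhds (NN i j)) := by
        intro i j
        apply Filter.Tendsto.congr _ (t3 i j)
        intro k
        simp only [Matrix.smul_apply, Matrix.add_apply, Matrix.sub_apply, smul_eq_mul]
        rw [div_eq_inv_mul]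
        try ring
      have tP := Aux.pucci_tendsto (lam := lam) (Lam := Lam) hlam.le
        (hlam.trans_le hLam).le hermEV hermNN hconv
      have hineq : ∀ᶠ k : ℝ in nhdsWithin 0 (Ioi 0),
          (deriv (v x) (t + k) + deriv (v x) (t - k) - 2 * deriv (v x) t) / k ^ 2
            ≤ (f x (t + k) + f x (t - k) - 2 * f x t) / k ^ 2
              + pucciSup lam Lam ((k^2)⁻¹ • (hess (fun z => v z (t + k)) x
                + hess (fun z => v z (t - k)) x - (2:ℝ) • hess (fun z => v z t) x)) := by
        filter_upwards [Ioo_mem_nhdsGT_of_mem ⟨le_refl (0:ℝ), hδ0pos⟩] with k hk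
        have htp1 : t + k ∈ Ioo (0:ℝ) 1 := hmemJ k (by rw [abs_of_pos hk.1]; exact hk.2)
        have htm1 : t - k ∈ Ioo (0:ℝ) 1 := by
          have := hmemJ (-k) (by rw [abs_neg, abs_of_pos hk.1]; exact hk.2)
          rwa [show t + -k = t - k from by ring] at this
        have hp1 := hherm (t + k) htp1 x hx
        have hm1 := hherm (t - k) htm1 x hx
        have h01 := hherm t ht x hx
        have hkey := hconcav _ _ _ hp1 hm1 h01 (k^2) (pow_pos hk.1 2)
        rw [hveq x hx (t + k) htp1, hveq x hx (t - k) htm1, hveq x hx t ht]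
        calc (f x (t + k) + F (hess (fun z => v z (t + k)) x)
              + (f x (t - k) + F (hess (fun z => v z (t - k)) x))
              - 2 * (f x t + F (hess (fun z => v z t) x))) / k ^ 2
            = (f x (t + k) + f x (t - k) - 2 * f x t) / k ^ 2
              + (F (hess (fun z => v z (t + k)) x) + F (hess (fun z => v z (t - k)) x)
                - 2 * F (hess (fun z => v z t) x)) / k ^ 2 := by ring
          _ ≤ (f x (t + k) + f x (t - k) - 2 * f x t) / k ^ 2
              + pucciSup lam Lam ((k^2)⁻¹ • (hess (fun z => v z (t + k)) x
                + hess (fun z => v z (t - k)) x - (2:ℝ) • hess (fun z => v z t) x)) :=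
            add_le_add_right hkey _
      have final : deriv (deriv (deriv (v x))) t
          ≤ deriv (deriv (f x)) t + pucciSup lam Lam NN :=
        le_of_tendsto_of_tendsto t1 (t2.add tP) hineq
      show deriv (fun τ => time2 v x τ) t
          - pucciSup lam Lam (hess (fun y => time2 v y t) x) ≤ time2 f x t
      have hshow : deriv (fun τ => time2 v x τ) t = deriv (deriv (deriv (v x))) t := rfl
      rw [hshow, ← hNNdef]
      have hshow2 : time2 f x t = deriv (deriv (f x)) t := rfl
      rw [hshow2]
      linarith [final]
end
end

section
/- Let n ≥ 1 and 0 < λ < Λ. There exists a constant C₄ > 0 depending only on n, λ, Λ with the following property: let f be continuous and Lebesgue integrable on B₁, and let u ∈ C²(B₁) be such that u and |D²u| are integrable on B₁ and −𝒫⁻(D²u(x)) ≤ f(x) for all x ∈ B₁. Then ∫_{B_{1/2}} |D²u| dx ≤ C₄ (∫_{B₁} |f| dx + ∫_{B₁} |u| dx). -/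
open MeasureTheory Metric Set ENNReal RealInnerProductSpace

noncomputable section

section Aux

variable {n : ℕ}

local notation "E" => EuclideanSpace ℝ (Fin n)

lemma aux_sum_eig_trace (M : Matrix (Fin n) (Fin n) ℝ) (h : M.IsHermitian) :
    ∑ i, h.eigenvalues i = M.trace := by
  rw [h.trace_eq_sum_eigenvalues]
  simp

lemma aux_matAbs_nonneg (M : Matrix (Fin n) (Fin n) ℝ) : 0 ≤ matAbs M := by
  rw [matAbs]; split
  · exact Finset.sum_nonneg fun i _ => abs_nonneg _
  · exact le_refl 0

lemma aux_abs_trace_le (M : Matrix (Fin n) (Fin n) ℝ) (h : M.IsHermitian) :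
    |M.trace| ≤ matAbs M := by
  rw [matAbs, dif_pos h, ← aux_sum_eig_trace M h]
  exact Finset.abs_sum_le_sum_abs _ _

lemma aux_ptwise (lam Lam : ℝ) (M : Matrix (Fin n) (Fin n) ℝ) (h : M.IsHermitian) :
    (Lam - lam) * matAbs M = 2 * (-pucciInf lam Lam M) + (Lam + lam) * M.trace := by
  rw [matAbs, pucciInf, dif_pos h, dif_pos h, ← aux_sum_eig_trace M h]
  have e1 : ∑ i, |h.eigenvalues i|
      = (∑ i, max (h.eigenvalues i) 0) + ∑ i, max (-h.eigenvalues i) 0 := by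
    rw [← Finset.sum_add_distrib]
    congr 1; ext i
    rcases le_total (h.eigenvalues i) 0 with h'|h' <;>
      [rw [abs_of_nonpos h', max_eq_right h', max_eq_left (by linarith)];
       rw [abs_of_nonneg h', max_eq_left h', max_eq_right (by linarith)]] <;> ring
  have e2 : ∑ i, h.eigenvalues i
      = (∑ i, max (h.eigenvalues i) 0) - ∑ i, max (-h.eigenvalues i) 0 := by
    rw [← Finset.sum_sub_distrib]
    congr 1; ext i
    rcases le_total (h.eigenvalues i) 0 with h'|h' <;>
      [rw [max_eq_right h', max_eq_left (by linarith)];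
       rw [max_eq_left h', max_eq_right (by linarith)]] <;> ring
  rw [e1, e2]; ring

lemma aux_hess_eq_snd {u : E → ℝ} {x : E} (hu : ContDiffAt ℝ 2 u x) (i j : Fin n) :
    hess u x i j = fderiv ℝ (fderiv ℝ u) x (EuclideanSpace.single i 1)
      (EuclideanSpace.single j 1) := by
  have hd : DifferentiableAt ℝ (fderiv ℝ u) x :=
    (hu.fderiv_right (le_refl 2)).differentiableAt one_ne_zero
  rw [hess, fderiv_clm_apply hd (differentiableAt_const _)]
  simp

lemma aux_hess_isHermitian {u : E → ℝ} {x : E} (hu : ContDiffAt ℝ 2 u x) :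
    (hess u x).IsHermitian := by
  have hs := hu.isSymmSndFDerivAt (by simp)
  ext i j
  rw [Matrix.conjTranspose_apply, aux_hess_eq_snd hu, aux_hess_eq_snd hu]
  simpa using (hs (EuclideanSpace.single i 1) (EuclideanSpace.single j 1)).symm

lemma aux_dcontdiff {w : E → ℝ} (hw : ContDiff ℝ 2 w) (v : E) :
    ContDiff ℝ 1 (fun x => fderiv ℝ w x v) := by
  have : ContDiff ℝ 1 (fderiv ℝ w) := hw.fderiv_right (by norm_num)
  exact (ContinuousLinearMap.apply ℝ ℝ v).contDiff.comp this

lemma aux_dsupp {w : E → ℝ} (hw : HasCompactSupport w) (v : E) :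
    HasCompactSupport (fun x => fderiv ℝ w x v) :=
  (hw.fderiv ℝ).comp_left (g := fun L : E →L[ℝ] ℝ => L v) rfl

lemma aux_tsupp_d (w : E → ℝ) (v : E) :
    tsupport (fun x => fderiv ℝ w x v) ⊆ tsupport w := by
  apply closure_minimal _ (isClosed_tsupport w)
  intro x hx
  apply support_fderiv_subset ℝ (f := w)
  rw [Function.mem_support] at hx ⊢
  exact fun h0 => hx (by rw [h0]; simp)

lemma aux_green {w : E → ℝ} {p : E → ℝ} (hw : ContDiff ℝ 2 w) (hws : HasCompactSupport w)
    (hp : ContDiff ℝ 2 p) (hps : HasCompactSupport p) (v : E) :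
    ∫ x, fderiv ℝ (fun y => fderiv ℝ w y v) x v * p x
      = ∫ x, w x * fderiv ℝ (fun y => fderiv ℝ p y v) x v := by
  obtain ⟨C1, hC1⟩ :=
    ContDiff.lipschitzWith_of_hasCompactSupport (aux_dsupp hws v) (aux_dcontdiff hw v) one_ne_zero
  obtain ⟨C2, hC2⟩ :=
    ContDiff.lipschitzWith_of_hasCompactSupport hps (hp.of_le one_le_two) one_ne_zero
  obtain ⟨C3, hC3⟩ :=
    ContDiff.lipschitzWith_of_hasCompactSupport (aux_dsupp hps v) (aux_dcontdiff hp v) one_ne_zero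
  obtain ⟨C4, hC4⟩ :=
    ContDiff.lipschitzWith_of_hasCompactSupport hws (hw.of_le one_le_two) one_ne_zero
  have hwd : Differentiable ℝ w := hw.differentiable two_ne_zero
  have hpd : Differentiable ℝ p := hp.differentiable two_ne_zero
  have hdw : Differentiable ℝ (fun x => fderiv ℝ w x v) :=
    (aux_dcontdiff hw v).differentiable one_ne_zero
  have hdp : Differentiable ℝ (fun x => fderiv ℝ p x v) :=
    (aux_dcontdiff hp v).differentiable one_ne_zero
  have A := LipschitzWith.integral_lineDeriv_mul_eq (μ := volume) hC1 hC2 hps v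
  have B := LipschitzWith.integral_lineDeriv_mul_eq (μ := volume) hC3 hC4 hws v
  simp only [(hdw _).lineDeriv_eq_fderiv, (hpd _).lineDeriv_eq_fderiv,
    (hdp _).lineDeriv_eq_fderiv, (hwd _).lineDeriv_eq_fderiv, map_neg] at A B
  rw [A]
  calc ∫ x, -fderiv ℝ p x v * fderiv ℝ w x v
      = ∫ x, -fderiv ℝ w x v * fderiv ℝ p x v := by congr 1; ext x; ring
    _ = ∫ x, fderiv ℝ (fun y => fderiv ℝ p y v) x v * w x := B.symm
    _ = ∫ x, w x * fderiv ℝ (fun y => fderiv ℝ p y v) x v := by congr 1; ext x; ring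

lemma aux_fderiv_congr {u₁ u₂ : E → ℝ} {s : Set E} (hs : IsOpen s)
    (h : ∀ y ∈ s, u₁ y = u₂ y) {x : E} (hx : x ∈ s) (v : E) :
    fderiv ℝ (fun y => fderiv ℝ u₁ y v) x v = fderiv ℝ (fun y => fderiv ℝ u₂ y v) x v := by
  have h1 : ∀ y ∈ s, fderiv ℝ u₁ y = fderiv ℝ u₂ y := by
    intro y hy
    apply Filter.EventuallyEq.fderiv_eq
    filter_upwards [hs.mem_nhds hy] with z hz using h z hz
  have h2 : (fun y => fderiv ℝ u₁ y v) =ᶠ[nhds x] (fun y => fderiv ℝ u₂ y v) := by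
    filter_upwards [hs.mem_nhds hx] with z hz
    rw [h1 z hz]
  rw [h2.fderiv_eq]

end Aux

set_option maxHeartbeats 1000000 in
/-- `W²_1` estimate for subsolutions of `−𝒫⁻(D²u) = f` when `λ < Λ` (Corollary `c1`). -/
theorem stmt6 (n : ℕ) (hn : 1 ≤ n) (lam Lam : ℝ) (hlam : 0 < lam) (hLam : lam < Lam) :
    ∃ C₄ > (0:ℝ),
      ∀ f u : EuclideanSpace ℝ (Fin n) → ℝ,
        ContinuousOn f (ball 0 1) →
        IntegrableOn f (ball 0 1) →
        ContDiffOn ℝ 2 u (ball 0 1) →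
        IntegrableOn u (ball 0 1) →
        IntegrableOn (fun x => matAbs (hess u x)) (ball 0 1) →
        (∀ x ∈ ball (0 : EuclideanSpace ℝ (Fin n)) 1,
          -pucciInf lam Lam (hess u x) ≤ f x) →
        ∫ x in ball (0 : EuclideanSpace ℝ (Fin n)) (1/2), matAbs (hess u x) ≤
          C₄ * ((∫ x in ball (0 : EuclideanSpace ℝ (Fin n)) 1, |f x|) +
            ∫ x in ball (0 : EuclideanSpace ℝ (Fin n)) 1, |u x|) := by
  classical
  have hd : (0:ℝ) < Lam - lam := by linarith
  set b : ℝ := 2 / (Lam - lam) with hb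
  set a : ℝ := (Lam + lam) / (Lam - lam) with ha
  have hb0 : 0 < b := div_pos two_pos hd
  have ha0 : 0 < a := div_pos (by linarith) hd
  -- the outer cutoff
  let φ : ContDiffBump (0 : EuclideanSpace ℝ (Fin n)) := ⟨1/2, 3/4, by norm_num, by norm_num⟩
  have hφ2 : ContDiff ℝ 2 ⇑φ := φ.contDiff
  -- its "Laplacian"
  set Dφ : EuclideanSpace ℝ (Fin n) → ℝ := fun x =>
    ∑ i, fderiv ℝ (fun y => fderiv ℝ (⇑φ) y (EuclideanSpace.single i 1)) x
      (EuclideanSpace.single i 1) with hDφ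
  have hDφcont : Continuous Dφ := by
    apply continuous_finset_sum
    intro i _
    exact ((ContinuousLinearMap.apply ℝ ℝ (EuclideanSpace.single i 1)).continuous.comp
      ((aux_dcontdiff hφ2 (EuclideanSpace.single i 1)).continuous_fderiv one_ne_zero))
  have hDφzero : ∀ x : EuclideanSpace ℝ (Fin n),
      x ∉ closedBall (0 : EuclideanSpace ℝ (Fin n)) (3/4) → Dφ x = 0 := by
    intro x hx
    rw [hDφ]
    apply Finset.sum_eq_zero
    intro i _
    apply image_eq_zero_of_notMem_tsupport
      (f := fun z => fderiv ℝ (fun y => fderiv ℝ (⇑φ) y (EuclideanSpace.single i 1)) z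
        (EuclideanSpace.single i 1))
    intro hmem
    have h1 : x ∈ tsupport ⇑φ := aux_tsupp_d _ _ ((aux_tsupp_d _ _) hmem)
    rw [φ.tsupport_eq] at h1
    exact hx h1
  have hDφsupp : HasCompactSupport Dφ :=
    HasCompactSupport.intro (isCompact_closedBall (0 : EuclideanSpace ℝ (Fin n)) (3/4)) hDφzero
  obtain ⟨K, hK⟩ := hDφsupp.exists_bound_of_continuous hDφcont
  have hK0 : 0 ≤ K := le_trans (norm_nonneg _) (hK 0)
  refine ⟨b + a * K + 1, by nlinarith, ?_⟩
  intro f u hfc hfi hcu hui hAi hyp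
  set B1 := ball (0 : EuclideanSpace ℝ (Fin n)) 1 with hB1
  set A : EuclideanSpace ℝ (Fin n) → ℝ := fun x => matAbs (hess u x) with hA
  set T : EuclideanSpace ℝ (Fin n) → ℝ := fun x => ∑ i, hess u x i i with hT
  -- the inner cutoff and the globalized u
  let φ₂ : ContDiffBump (0 : EuclideanSpace ℝ (Fin n)) := ⟨7/8, 15/16, by norm_num, by norm_num⟩
  set w : EuclideanSpace ℝ (Fin n) → ℝ := fun x => φ₂ x * u x with hw
  have hφ₂2 : ContDiff ℝ 2 ⇑φ₂ := φ₂.contDiff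
  have hw0 : ∀ x : EuclideanSpace ℝ (Fin n), x ∉ closedBall (0:EuclideanSpace ℝ (Fin n)) (15/16) → w x = 0 := by
    intro x hx
    have : φ₂ x = 0 := by
      rw [← Function.notMem_support, φ₂.support_eq]
      exact fun h => hx (ball_subset_closedBall h)
    simp [hw, this]
  have hw2 : ContDiff ℝ 2 w := by
    rw [contDiff_iff_contDiffAt]
    intro x
    by_cases hx : x ∈ B1
    · exact hφ₂2.contDiffAt.mul (hcu.contDiffAt (isOpen_ball.mem_nhds hx))
    · have hxc : x ∈ (closedBall (0:EuclideanSpace ℝ (Fin n)) (15/16))ᶜ := by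
        rw [mem_compl_iff, mem_closedBall, dist_zero_right]
        rw [hB1, mem_ball, dist_zero_right, not_lt] at hx
        intro h; linarith
      have hev : (fun _ => (0:ℝ)) =ᶠ[nhds x] w := by
        filter_upwards [isClosed_closedBall.isOpen_compl.mem_nhds hxc] with y hy
        exact (hw0 y hy).symm
      exact contDiffAt_const.congr_of_eventuallyEq hev.symm
  have hwsupp : HasCompactSupport w :=
    HasCompactSupport.intro (isCompact_closedBall _ _) hw0
  -- the globalized second derivatives
  set Tw : EuclideanSpace ℝ (Fin n) → ℝ := fun x =>
    ∑ i, fderiv ℝ (fun y => fderiv ℝ w y (EuclideanSpace.single i 1)) x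
      (EuclideanSpace.single i 1) with hTw
  -- w agrees with u near the support of φ
  have hwu : ∀ y ∈ ball (0:EuclideanSpace ℝ (Fin n)) (7/8), w y = u y := by
    intro y hy
    have h1 : φ₂ y = 1 := φ₂.one_of_mem_closedBall (ball_subset_closedBall hy)
    show φ₂ y * u y = u y
    rw [h1, one_mul]
  have hAx : ∀ x, A x = matAbs (hess u x) := fun _ => rfl
  have hTx : ∀ x, T x = ∑ i, hess u x i i := fun _ => rfl
  have hca : ∀ x ∈ B1, ContDiffAt ℝ 2 u x := fun x hx => hcu.contDiffAt (isOpen_ball.mem_nhds hx)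
  have hherm : ∀ x ∈ B1, (hess u x).IsHermitian := fun x hx => aux_hess_isHermitian (hca x hx)
  have htr : ∀ x, (hess u x).trace = T x := fun x => by
    rw [hTx]; simp [Matrix.trace, Matrix.diag]
  have hTmeas : Measurable T := by
    apply Finset.measurable_sum
    intro i _
    show Measurable fun x => fderiv ℝ (fun y => fderiv ℝ u y (EuclideanSpace.single i 1)) x
      (EuclideanSpace.single i 1)
    exact measurable_fderiv_apply_const (𝕜 := ℝ)
      (f := fun y => fderiv ℝ u y (EuclideanSpace.single i 1)) (EuclideanSpace.single i 1)
  have hφb : ∃ C, ∀ x : EuclideanSpace ℝ (Fin n), ‖(⇑φ) x‖ ≤ C := by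
    refine ⟨1, fun x => ?_⟩
    rw [Real.norm_eq_abs, abs_of_nonneg φ.nonneg]
    exact φ.le_one
  have intAφ : IntegrableOn (fun x => φ x * A x) B1 :=
    hAi.bdd_mul hφ2.continuous.aestronglyMeasurable (ae_of_all _ hφb.choose_spec)
  have intfφ : IntegrableOn (fun x => φ x * f x) B1 :=
    hfi.bdd_mul hφ2.continuous.aestronglyMeasurable (ae_of_all _ hφb.choose_spec)
  have intTφ : IntegrableOn (fun x => φ x * T x) B1 := by
    apply Integrable.mono' intAφ
    · exact (hφ2.continuous.measurable.mul hTmeas).aestronglyMeasurable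
    · rw [ae_restrict_iff' measurableSet_ball]
      apply ae_of_all
      intro x hx
      rw [Real.norm_eq_abs, abs_mul, abs_of_nonneg φ.nonneg]
      have h1 : |T x| ≤ A x := by
        have h2 := aux_abs_trace_le (hess u x) (hherm x hx)
        rw [htr x] at h2
        exact h2
      exact mul_le_mul_of_nonneg_left h1 φ.nonneg
  have step1 : ∫ x in ball (0:EuclideanSpace ℝ (Fin n)) (1/2), A x ≤ ∫ x in B1, φ x * A x := by
    have e1 : ∫ x in ball (0:EuclideanSpace ℝ (Fin n)) (1/2), A x
        = ∫ x in ball (0:EuclideanSpace ℝ (Fin n)) (1/2), φ x * A x := by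
      apply setIntegral_congr_fun measurableSet_ball
      intro x hx
      show A x = φ x * A x
      rw [φ.one_of_mem_closedBall (ball_subset_closedBall hx), one_mul]
    rw [e1]
    apply setIntegral_mono_set intAφ
    · exact ae_of_all _ fun x => mul_nonneg φ.nonneg
        (aux_matAbs_nonneg (hess u x) : (0:ℝ) ≤ A x)
    · exact HasSubset.Subset.eventuallyLE (ball_subset_ball (by norm_num))
  have hptle : ∀ x ∈ B1, φ x * A x ≤ b * (φ x * f x) + a * (φ x * T x) := by
    intro x hx
    have hid := aux_ptwise lam Lam (hess u x) (hherm x hx)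
    rw [htr x] at hid
    have h2 : (Lam - lam) * A x ≤ 2 * f x + (Lam + lam) * T x := by
      have h3 := hyp x hx
      have h4 : (Lam - lam) * A x
          = 2 * (-pucciInf lam Lam (hess u x)) + (Lam + lam) * T x := hid
      linarith
    have h3 : A x ≤ b * f x + a * T x := by
      rw [hb, ha, div_mul_eq_mul_div, div_mul_eq_mul_div, ← add_div, le_div_iff₀ hd]
      linarith
    calc φ x * A x ≤ φ x * (b * f x + a * T x) := mul_le_mul_of_nonneg_left h3 φ.nonneg
      _ = b * (φ x * f x) + a * (φ x * T x) := by ring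
  have step2 : ∫ x in B1, φ x * A x
      ≤ b * (∫ x in B1, φ x * f x) + a * ∫ x in B1, φ x * T x := by
    calc ∫ x in B1, φ x * A x ≤ ∫ x in B1, (b * (φ x * f x) + a * (φ x * T x)) :=
        setIntegral_mono_on intAφ ((intfφ.const_mul b).add (intTφ.const_mul a))
          measurableSet_ball hptle
      _ = _ := by
        rw [integral_add (intfφ.const_mul b) (intTφ.const_mul a), integral_const_mul,
          integral_const_mul]
  have step4 : ∫ x in B1, φ x * f x ≤ ∫ x in B1, |f x| := by
    apply setIntegral_mono_on intfφ hfi.abs measurableSet_ball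
    intro x hx
    calc φ x * f x ≤ φ x * |f x| := mul_le_mul_of_nonneg_left (le_abs_self _) φ.nonneg
      _ ≤ 1 * |f x| := mul_le_mul_of_nonneg_right φ.le_one (abs_nonneg _)
      _ = |f x| := one_mul _
  have step5 : ∫ x in B1, φ x * T x = ∫ x in B1, φ x * Tw x := by
    apply setIntegral_congr_fun measurableSet_ball
    intro x hx
    show φ x * T x = φ x * Tw x
    by_cases hx' : x ∈ ball (0:EuclideanSpace ℝ (Fin n)) (7/8)
    · congr 1
      rw [hTx, hTw]
      apply Finset.sum_congr rfl
      intro i _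
      exact (aux_fderiv_congr isOpen_ball hwu hx' (EuclideanSpace.single i 1)).symm
    · have hφ0 : φ x = 0 := by
        rw [← Function.notMem_support, φ.support_eq]
        intro hmem
        rw [mem_ball, dist_zero_right] at hmem
        rw [mem_ball, dist_zero_right, not_lt] at hx'
        have hro : φ.rOut = (3/4:ℝ) := rfl
        rw [hro] at hmem
        linarith
      rw [hφ0, zero_mul, zero_mul]
  have hφ0out : ∀ x : EuclideanSpace ℝ (Fin n), x ∉ B1 → φ x = 0 := by
    intro x hx
    rw [← Function.notMem_support, φ.support_eq]
    intro hmem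
    rw [hB1, mem_ball, dist_zero_right, not_lt] at hx
    rw [mem_ball, dist_zero_right] at hmem
    have hro : φ.rOut = (3/4:ℝ) := rfl
    rw [hro] at hmem
    linarith
  have step6 : ∫ x in B1, φ x * Tw x = ∫ x, φ x * Tw x :=
    setIntegral_eq_integral_of_forall_compl_eq_zero fun x hx => by rw [hφ0out x hx, zero_mul]
  have hddφc : ∀ i : Fin n, Continuous (fun x => fderiv ℝ
      (fun y => fderiv ℝ (⇑φ) y (EuclideanSpace.single i 1)) x (EuclideanSpace.single i 1)) :=
    fun i => (ContinuousLinearMap.apply ℝ ℝ (EuclideanSpace.single i 1)).continuous.comp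
      ((aux_dcontdiff hφ2 (EuclideanSpace.single i 1)).continuous_fderiv one_ne_zero)
  have hddwc : ∀ i : Fin n, Continuous (fun x => fderiv ℝ
      (fun y => fderiv ℝ w y (EuclideanSpace.single i 1)) x (EuclideanSpace.single i 1)) :=
    fun i => (ContinuousLinearMap.apply ℝ ℝ (EuclideanSpace.single i 1)).continuous.comp
      ((aux_dcontdiff hw2 (EuclideanSpace.single i 1)).continuous_fderiv one_ne_zero)
  have step7 : ∫ x, φ x * Tw x = ∫ x, w x * Dφ x := by
    have l1 : ∀ x, φ x * Tw x = ∑ i, (fderiv ℝ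
        (fun y => fderiv ℝ w y (EuclideanSpace.single i 1)) x (EuclideanSpace.single i 1)
          * φ x) := by
      intro x
      rw [hTw, mul_comm, Finset.sum_mul]
    have l2 : ∀ x, w x * Dφ x = ∑ i, (w x * fderiv ℝ
        (fun y => fderiv ℝ (⇑φ) y (EuclideanSpace.single i 1)) x (EuclideanSpace.single i 1)) := by
      intro x
      rw [hDφ, Finset.mul_sum]
    simp_rw [l1, l2]
    rw [integral_finset_sum, integral_finset_sum]
    · exact Finset.sum_congr rfl fun i _ =>
        aux_green hw2 hwsupp hφ2 φ.hasCompactSupport (EuclideanSpace.single i 1)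
    · intro i _
      apply Continuous.integrable_of_hasCompactSupport ((hw2.continuous).mul (hddφc i))
      exact hwsupp.mul_right
    · intro i _
      apply Continuous.integrable_of_hasCompactSupport ((hddwc i).mul hφ2.continuous)
      exact φ.hasCompactSupport.mul_left
  have hDφ0out : ∀ x : EuclideanSpace ℝ (Fin n), x ∉ B1 → Dφ x = 0 := by
    intro x hx
    apply hDφzero
    rw [mem_closedBall, dist_zero_right]
    rw [hB1, mem_ball, dist_zero_right, not_lt] at hx
    intro h; linarith
  have step8 : ∫ x, w x * Dφ x = ∫ x in B1, w x * Dφ x :=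
    (setIntegral_eq_integral_of_forall_compl_eq_zero fun x hx => by
      rw [hDφ0out x hx, mul_zero]).symm
  have intwDφ : IntegrableOn (fun x => w x * Dφ x) B1 :=
    ((hw2.continuous.mul hDφcont).integrable_of_hasCompactSupport hwsupp.mul_right).integrableOn
  have step9 : ∫ x in B1, w x * Dφ x ≤ ∫ x in B1, K * |u x| := by
    apply setIntegral_mono_on intwDφ (hui.abs.const_mul K) measurableSet_ball
    intro x hx
    have h2 : |w x| ≤ |u x| := by
      show |φ₂ x * u x| ≤ |u x|
      rw [abs_mul, abs_of_nonneg φ₂.nonneg]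
      exact mul_le_of_le_one_left (abs_nonneg _) φ₂.le_one
    have h3 : |Dφ x| ≤ K := by rw [← Real.norm_eq_abs]; exact hK x
    calc w x * Dφ x ≤ |w x * Dφ x| := le_abs_self _
      _ = |w x| * |Dφ x| := abs_mul _ _
      _ ≤ |u x| * K := mul_le_mul h2 h3 (abs_nonneg _) (abs_nonneg _)
      _ = K * |u x| := mul_comm _ _
  have e2 : ∫ x in B1, φ x * T x ≤ K * ∫ x in B1, |u x| := by
    rw [step5, step6, step7, step8, ← integral_const_mul]
    exact step9
  have hF0 : 0 ≤ ∫ x in B1, |f x| := setIntegral_nonneg measurableSet_ball fun x _ => abs_nonneg _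
  have hU0 : 0 ≤ ∫ x in B1, |u x| := setIntegral_nonneg measurableSet_ball fun x _ => abs_nonneg _
  calc ∫ x in ball (0:EuclideanSpace ℝ (Fin n)) (1/2), A x
      ≤ b * (∫ x in B1, φ x * f x) + a * ∫ x in B1, φ x * T x := le_trans step1 step2
    _ ≤ b * (∫ x in B1, |f x|) + a * (K * ∫ x in B1, |u x|) :=
        add_le_add (mul_le_mul_of_nonneg_left step4 hb0.le)
          (mul_le_mul_of_nonneg_left e2 ha0.le)
    _ ≤ (b + a * K + 1) * ((∫ x in B1, |f x|) + ∫ x in B1, |u x|) := by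
        nlinarith [mul_nonneg hb0.le hU0, mul_nonneg (mul_nonneg ha0.le hK0) hF0, hF0, hU0]
end
end

section
/- Let n ≥ 1 and 0 < λ ≤ Λ, and set a := (Λ+λ)/2. There exists a constant C₅ > 0 depending only on n, λ, Λ with the following property: let f be continuous and Lebesgue integrable on B₁ × (0,1), and let v : B₁ × (0,1) → ℝ be integrable with continuous time derivative v_t and continuous spatial Hessian D²v, such that v_t and Δv are integrable on B₁ × (0,1) and v_t(x,t) − a·Δv(x,t) ≤ f(x,t) for all (x,t) ∈ B₁ × (0,1). Then ∫_{B_{1/2}×(1/3,2/3)} |v_t − a·Δv| dx dt ≤ C₅ (∫_{B₁×(0,1)} |f| dx dt + ∫_{B₁×(0,1)} |v| dx dt). -/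
open MeasureTheory Metric Set ENNReal RealInnerProductSpace

noncomputable section


namespace Stmt7Aux

variable {n : ℕ}

local notation "E" => EuclideanSpace ℝ (Fin n)

/-- second partial derivative in direction i -/
def pdd (u : E → ℝ) (i : Fin n) (x : E) : ℝ :=
  fderiv ℝ (fun y => fderiv ℝ u y (EuclideanSpace.single i 1)) x (EuclideanSpace.single i 1)

lemma contDiff_patch {m : ℕ∞} {u : E → ℝ} {s : Set E} {K : Set E}
    (hs : IsOpen s) (hu : ContDiffOn ℝ m u s) (hK : IsClosed K)
    (h0 : ∀ x ∉ K, u x = 0) (hcov : ∀ x, x ∈ s ∨ x ∉ K) : ContDiff ℝ m u := by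
  rw [contDiff_iff_contDiffAt]
  intro x
  rcases hcov x with hx | hx
  · exact hu.contDiffAt (hs.mem_nhds hx)
  · have h : u =ᶠ[nhds x] (fun _ => (0:ℝ)) := by
      filter_upwards [hK.isOpen_compl.mem_nhds hx] with y hy using h0 y hy
    exact (contDiffAt_const (c := (0:ℝ))).congr_of_eventuallyEq h

lemma du_contDiff {u : E → ℝ} (hu : ContDiff ℝ 2 u) (i : Fin n) :
    ContDiff ℝ 1 (fun y => fderiv ℝ u y (EuclideanSpace.single i 1)) := by
  have h1 : ContDiff ℝ 1 (fderiv ℝ u) := hu.fderiv_right (m := 1) (by norm_num)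
  exact (ContinuousLinearMap.apply ℝ ℝ (EuclideanSpace.single i 1)).contDiff.comp h1

lemma du_hcs {u : E → ℝ} (hcu : HasCompactSupport u) (i : Fin n) :
    HasCompactSupport (fun y => fderiv ℝ u y (EuclideanSpace.single i 1)) :=
  (hcu.fderiv (𝕜 := ℝ)).comp_left (g := fun L : E →L[ℝ] ℝ => L (EuclideanSpace.single i 1)) rfl

lemma pdd_continuous {u : E → ℝ} (hu : ContDiff ℝ 2 u) (i : Fin n) :
    Continuous (pdd u i) := by
  have h1 := du_contDiff hu i
  have h2 : Continuous (fderiv ℝ (fun y => fderiv ℝ u y (EuclideanSpace.single i 1))) :=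
    (h1.fderiv_right (m := 0) (by norm_num)).continuous
  exact (ContinuousLinearMap.apply ℝ ℝ (EuclideanSpace.single i 1)).continuous.comp h2

lemma pdd_hcs {u : E → ℝ} (hcu : HasCompactSupport u) (i : Fin n) :
    HasCompactSupport (pdd u i) :=
  ((du_hcs hcu i).fderiv (𝕜 := ℝ)).comp_left
    (g := fun L : E →L[ℝ] ℝ => L (EuclideanSpace.single i 1)) rfl

lemma ibp_coord {u w : E → ℝ} (hu : ContDiff ℝ 2 u) (hw : ContDiff ℝ 2 w)
    (hcu : HasCompactSupport u) (hcw : HasCompactSupport w) (i : Fin n) :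
    ∫ x, w x * pdd u i x = ∫ x, pdd w i x * u x := by
  set e := EuclideanSpace.single (𝕜 := ℝ) i (1:ℝ)
  set du := fun y => fderiv ℝ u y e with hdu_def
  set dw := fun y => fderiv ℝ w y e with hdw_def
  have hdu1 : ContDiff ℝ 1 du := du_contDiff hu i
  have hdw1 : ContDiff ℝ 1 dw := du_contDiff hw i
  have hdu_c : HasCompactSupport du := du_hcs hcu i
  have hdw_c : HasCompactSupport dw := du_hcs hcw i
  have step1 : ∫ x, w x * fderiv ℝ du x e = - ∫ x, fderiv ℝ w x e * du x := by
    apply integral_mul_fderiv_eq_neg_fderiv_mul_of_integrable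
    · exact (((hw.continuous_fderiv (by norm_num)).clm_apply continuous_const).mul
        hdu1.continuous).integrable_of_hasCompactSupport (hdu_c.mul_left)
    · exact (hw.continuous.mul ((hdu1.continuous_fderiv (by norm_num)).clm_apply
        continuous_const)).integrable_of_hasCompactSupport
        (((hdu_c.fderiv (𝕜 := ℝ)).comp_left (g := fun L : E →L[ℝ] ℝ => L e) rfl).mul_left)
    · exact (hw.continuous.mul hdu1.continuous).integrable_of_hasCompactSupport hdu_c.mul_left
    · exact fun x _ => hw.differentiable (by norm_num) x
    · exact fun x _ => hdu1.differentiable (by norm_num) x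
  have step2 : ∫ x, dw x * fderiv ℝ u x e = - ∫ x, fderiv ℝ dw x e * u x := by
    apply integral_mul_fderiv_eq_neg_fderiv_mul_of_integrable
    · exact (((hdw1.continuous_fderiv (by norm_num)).clm_apply continuous_const).mul
        hu.continuous).integrable_of_hasCompactSupport (hcu.mul_left)
    · exact (hdw1.continuous.mul ((hu.continuous_fderiv (by norm_num)).clm_apply
        continuous_const)).integrable_of_hasCompactSupport (hdu_c.mul_left)
    · exact (hdw1.continuous.mul hu.continuous).integrable_of_hasCompactSupport hcu.mul_left
    · exact fun x _ => hdw1.differentiable (by norm_num) x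
    · exact fun x _ => hu.differentiable (by norm_num) x
  have : (fun x => dw x * fderiv ℝ u x e) = fun x => fderiv ℝ w x e * du x := by
    funext x; rfl
  rw [show (fun x => w x * pdd u i x) = fun x => w x * fderiv ℝ du x e from rfl]
  rw [step1, ← this, step2, neg_neg]
  rfl


def lap (u : E → ℝ) (x : E) : ℝ := ∑ i, pdd u i x

lemma lap_continuous {u : E → ℝ} (hu : ContDiff ℝ 2 u) : Continuous (lap u) :=
  continuous_finset_sum _ fun i _ => pdd_continuous hu i

lemma ibp_lap {u w : E → ℝ} (hu : ContDiff ℝ 2 u) (hw : ContDiff ℝ 2 w)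
    (hcu : HasCompactSupport u) (hcw : HasCompactSupport w) :
    ∫ x, w x * lap u x = ∫ x, lap w x * u x := by
  have h1 : ∫ x, w x * lap u x = ∑ i, ∫ x, w x * pdd u i x := by
    rw [← integral_finset_sum]
    · congr 1; funext x; rw [lap, Finset.mul_sum]
    · exact fun i _ => (hw.continuous.mul (pdd_continuous hu i)).integrable_of_hasCompactSupport
        (pdd_hcs hcu i).mul_left
  have h2 : ∫ x, lap w x * u x = ∑ i, ∫ x, pdd w i x * u x := by
    rw [← integral_finset_sum]
    · congr 1; funext x; rw [lap, Finset.sum_mul]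
    · exact fun i _ => ((pdd_continuous hw i).mul hu.continuous).integrable_of_hasCompactSupport
        hcu.mul_left
  rw [h1, h2]
  exact Finset.sum_congr rfl fun i _ => ibp_coord hu hw hcu hcw i

lemma pdd_congr {u w : E → ℝ} {s : Set E} (hs : IsOpen s) (h : EqOn u w s) {x : E}
    (hx : x ∈ s) (i : Fin n) : pdd u i x = pdd w i x := by
  have h1 : ∀ y ∈ s, fderiv ℝ u y = fderiv ℝ w y := fun y hy =>
    (Filter.eventuallyEq_of_mem (hs.mem_nhds hy) h).fderiv_eq
  have h2 : (fun y => fderiv ℝ u y (EuclideanSpace.single i 1)) =ᶠ[nhds x]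
      (fun y => fderiv ℝ w y (EuclideanSpace.single i 1)) := by
    filter_upwards [hs.mem_nhds hx] with y hy
    rw [h1 y hy]
  unfold pdd
  rw [h2.fderiv_eq]

lemma lap_congr {u w : E → ℝ} {s : Set E} (hs : IsOpen s) (h : EqOn u w s) {x : E}
    (hx : x ∈ s) : lap u x = lap w x :=
  Finset.sum_congr rfl fun i _ => pdd_congr hs h hx i

lemma lap_eq_zero_of_eqOn_zero {u : E → ℝ} {s : Set E} (hs : IsOpen s) (h : EqOn u 0 s)
    {x : E} (hx : x ∈ s) : lap u x = 0 := by
  rw [lap_congr hs h hx]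
  simp only [lap]
  apply Finset.sum_eq_zero
  intro i _
  have h1 : (fun y => fderiv ℝ (0 : E → ℝ) y (EuclideanSpace.single i 1)) = fun _ => (0:ℝ) := by
    funext y
    have : fderiv ℝ (0 : E → ℝ) y = 0 := fderiv_const_apply 0
    simp [this]
  unfold pdd
  rw [h1]
  simp [fderiv_const_apply]

lemma time_ibp {χ : ℝ → ℝ} (hχ : ContDiff ℝ ((⊤:ℕ∞):WithTop ℕ∞) χ) (hsupp : ∀ t ∉ Icc (1/4 : ℝ) (3/4), χ t = 0)
    {w : ℝ → ℝ} (hw : ∀ t ∈ Ioo (0:ℝ) 1, DifferentiableAt ℝ w t)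
    (hw' : ContinuousOn (deriv w) (Ioo 0 1)) :
    ∫ t in Ioo (0:ℝ) 1, deriv w t * χ t = - ∫ t in Ioo (0:ℝ) 1, w t * deriv χ t := by
  have hχ' : ∀ t ∉ Icc (1/4 : ℝ) (3/4), deriv χ t = 0 := by
    intro t ht
    have hopen : IsOpen (Icc (1/4 : ℝ) (3/4))ᶜ := isClosed_Icc.isOpen_compl
    have : χ =ᶠ[nhds t] (fun _ => (0:ℝ)) := by
      filter_upwards [hopen.mem_nhds ht] with s hs using hsupp s hs
    rw [this.deriv_eq, deriv_const]
  have hχd : Differentiable ℝ χ := hχ.differentiable (by simp)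
  set g : ℝ → ℝ := fun t => deriv w t * χ t + w t * deriv χ t with hg
  have hwc : ContinuousOn w (Ioo (0:ℝ) 1) := fun t ht => (hw t ht).continuousAt.continuousWithinAt
  have hcont : ContinuousOn g (Ioo 0 1) := by
    apply ContinuousOn.add
    · exact hw'.mul hχ.continuous.continuousOn
    · exact hwc.mul ((hχ.continuous_deriv (by exact_mod_cast le_top)).continuousOn)
  have hgz : ∀ t, t ∉ Icc (1/4 : ℝ) (3/4) → g t = 0 := by
    intro t ht; simp [hg, hsupp t ht, hχ' t ht]
  have hsub : Icc (1/5 : ℝ) (4/5) ⊆ Ioo (0:ℝ) 1 := by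
    intro t ht; exact ⟨by linarith [ht.1], by linarith [ht.2]⟩
  have hint : IntegrableOn g (Ioo (0:ℝ) 1) := by
    have h1 : IntegrableOn g (Ioc (1/5 : ℝ) (4/5)) :=
      ((hcont.mono hsub).integrableOn_Icc).mono_set Ioc_subset_Icc_self
    apply h1.of_forall_diff_eq_zero measurableSet_Ioo
    intro t ht
    apply hgz t
    intro hmem
    exact ht.2 ⟨by linarith [hmem.1], by linarith [hmem.2]⟩
  have key : ∫ t in Ioo (0:ℝ) 1, g t = 0 := by
    have e1 : ∫ t in Ioo (0:ℝ) 1, g t = ∫ t in Ioc (1/5 : ℝ) (4/5), g t := by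
      apply setIntegral_eq_of_subset_of_forall_diff_eq_zero measurableSet_Ioo
      · exact fun t ht => hsub (Ioc_subset_Icc_self ht)
      · intro t ht
        apply hgz t
        intro hmem
        exact ht.2 ⟨by linarith [hmem.1], by linarith [hmem.2]⟩
    have e2 : ∫ t in Ioc (1/5 : ℝ) (4/5), g t = ∫ t in (1/5 : ℝ)..(4/5), g t :=
      (intervalIntegral.integral_of_le (by norm_num)).symm
    have e3 : ∫ t in (1/5 : ℝ)..(4/5), g t = w (4/5) * χ (4/5) - w (1/5) * χ (1/5) := by
      apply intervalIntegral.integral_eq_sub_of_hasDerivAt (f := fun t => w t * χ t) (f' := g)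
      · intro t ht
        rw [uIcc_of_le (by norm_num)] at ht
        exact ((hw t (hsub ht)).hasDerivAt.mul (hχd t).hasDerivAt)
      · apply ContinuousOn.intervalIntegrable
        rw [uIcc_of_le (by norm_num)]
        exact hcont.mono hsub
    rw [e1, e2, e3, hsupp (4/5) (by norm_num), hsupp (1/5) (by norm_num)]
    ring
  have hint1 : IntegrableOn (fun t => deriv w t * χ t) (Ioo (0:ℝ) 1) := by
    have h1 : IntegrableOn (fun t => deriv w t * χ t) (Ioc (1/5 : ℝ) (4/5)) :=
      (((hw'.mono hsub).mul (hχ.continuous.continuousOn)).integrableOn_Icc).mono_set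
        Ioc_subset_Icc_self
    apply h1.of_forall_diff_eq_zero measurableSet_Ioo
    intro t ht
    have : t ∉ Icc (1/4 : ℝ) (3/4) := fun hmem =>
      ht.2 ⟨by linarith [hmem.1], by linarith [hmem.2]⟩
    simp [hsupp t this]
  have hint2 : IntegrableOn (fun t => w t * deriv χ t) (Ioo (0:ℝ) 1) := by
    have h1 : IntegrableOn (fun t => w t * deriv χ t) (Ioc (1/5 : ℝ) (4/5)) :=
      (((hwc.mono hsub).mul ((hχ.continuous_deriv (by exact_mod_cast le_top)).continuousOn)).integrableOn_Icc).mono_set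
        Ioc_subset_Icc_self
    apply h1.of_forall_diff_eq_zero measurableSet_Ioo
    intro t ht
    have hni : t ∉ Icc (1/4 : ℝ) (3/4) := fun hmem =>
      ht.2 ⟨by linarith [hmem.1], by linarith [hmem.2]⟩
    simp [hχ' t hni]
  have : (∫ t in Ioo (0:ℝ) 1, deriv w t * χ t) + ∫ t in Ioo (0:ℝ) 1, w t * deriv χ t = 0 := by
    rw [← integral_add hint1 hint2]; exact key
  linarith


lemma lap_hcs {u : E → ℝ} (hcu : HasCompactSupport u) : HasCompactSupport (lap u) :=
  HasCompactSupport.intro hcu fun x hx =>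
    lap_eq_zero_of_eqOn_zero (isClosed_tsupport u).isOpen_compl
      (fun y hy => image_eq_zero_of_notMem_tsupport hy) hx

lemma exists_bound_abs {α : Type*} [TopologicalSpace α] [Nonempty α] {f : α → ℝ}
    (hf : Continuous f) (hcs : HasCompactSupport f) : ∃ C, 0 ≤ C ∧ ∀ x, |f x| ≤ C := by
  obtain ⟨x₀, hx₀⟩ := (hf.abs).exists_forall_ge_of_hasCompactSupport
    (hcs.comp_left (g := abs) abs_zero)
  exact ⟨|f x₀|, abs_nonneg _, hx₀⟩

lemma claimA {v : E → ℝ → ℝ} (χ : ContDiffBump ((1:ℝ)/2)) (hrOut : χ.rOut = 1/4)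
    {ψf : E → ℝ} (hψc : Continuous ψf) (hψb : ∀ x, |ψf x| ≤ 1)
    (hvd : ∀ p ∈ ball (0:E) 1 ×ˢ Ioo (0:ℝ) 1, DifferentiableAt ℝ (v p.1) p.2)
    (hvtc : ContinuousOn (fun p : E × ℝ => deriv (v p.1) p.2) (ball (0:E) 1 ×ˢ Ioo (0:ℝ) 1))
    (hvti : IntegrableOn (fun p : E × ℝ => deriv (v p.1) p.2) (ball (0:E) 1 ×ˢ Ioo (0:ℝ) 1))
    (hvi : IntegrableOn (fun p : E × ℝ => v p.1 p.2) (ball (0:E) 1 ×ˢ Ioo (0:ℝ) 1)) :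
    ∫ p in ball (0:E) 1 ×ˢ Ioo (0:ℝ) 1, deriv (v p.1) p.2 * (ψf p.1 * χ p.2)
      = ∫ p in ball (0:E) 1 ×ˢ Ioo (0:ℝ) 1, v p.1 p.2 * (-(ψf p.1 * deriv (⇑χ) p.2)) := by
  obtain ⟨C, hC0, hC⟩ : ∃ C, 0 ≤ C ∧ ∀ t, |deriv (⇑χ) t| ≤ C :=
    exists_bound_abs ((χ.contDiff (n := ⊤)).continuous_deriv (by exact_mod_cast le_top)) χ.hasCompactSupport.deriv
  have hsupp : ∀ t ∉ Icc (1/4:ℝ) (3/4), (χ : ℝ → ℝ) t = 0 := by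
    intro t ht
    apply χ.zero_of_le_dist
    rw [hrOut, Real.dist_eq]
    simp only [mem_Icc, not_and_or, not_le] at ht
    rcases ht with h | h
    · exact le_abs.2 (Or.inr (by linarith))
    · exact le_abs.2 (Or.inl (by linarith))
  have hL : IntegrableOn (fun p : E × ℝ => deriv (v p.1) p.2 * (ψf p.1 * χ p.2))
      (ball (0:E) 1 ×ˢ Ioo (0:ℝ) 1) := by
    have := hvti.bdd_mul (f := fun p : E × ℝ => ψf p.1 * χ p.2)
      ((hψc.comp continuous_fst).mul (χ.continuous.comp continuous_snd)).aestronglyMeasurable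
      (c := 1) (Filter.Eventually.of_forall fun p => by
        rw [Real.norm_eq_abs, abs_mul]
        exact mul_le_one₀ (hψb _) (abs_nonneg _) (by rw [abs_of_nonneg χ.nonneg]; exact χ.le_one))
    simpa [mul_comm, IntegrableOn] using this
  have hR : IntegrableOn (fun p : E × ℝ => v p.1 p.2 * (-(ψf p.1 * deriv (⇑χ) p.2)))
      (ball (0:E) 1 ×ˢ Ioo (0:ℝ) 1) := by
    have := hvi.bdd_mul (f := fun p : E × ℝ => -(ψf p.1 * deriv (⇑χ) p.2))
      (((hψc.comp continuous_fst).mul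
        (((χ.contDiff (n := ⊤)).continuous_deriv (by exact_mod_cast le_top)).comp continuous_snd)).neg).aestronglyMeasurable
      (c := C) (Filter.Eventually.of_forall fun p => by
        rw [Real.norm_eq_abs, abs_neg, abs_mul]
        calc |ψf p.1| * |deriv (⇑χ) p.2| ≤ 1 * C :=
              mul_le_mul (hψb _) (hC _) (abs_nonneg _) zero_le_one
          _ = C := one_mul C)
    simpa [mul_comm, IntegrableOn] using this
  rw [Measure.volume_eq_prod] at hL hR ⊢
  rw [setIntegral_prod _ hL, setIntegral_prod _ hR]
  apply setIntegral_congr_fun measurableSet_ball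
  intro x hx
  have h1 : ∀ t ∈ Ioo (0:ℝ) 1, DifferentiableAt ℝ (v x) t := fun t ht => hvd (x, t) ⟨hx, ht⟩
  have h2 : ContinuousOn (deriv (v x)) (Ioo (0:ℝ) 1) := by
    have hmap : MapsTo (fun t : ℝ => ((x : E), t)) (Ioo (0:ℝ) 1)
        (ball (0:E) 1 ×ˢ Ioo (0:ℝ) 1) := fun t ht => ⟨hx, ht⟩
    exact hvtc.comp ((continuous_const.prodMk continuous_id).continuousOn) hmap
  have key := time_ibp (χ.contDiff (n := ⊤)) hsupp h1 h2
  calc ∫ t in Ioo (0:ℝ) 1, deriv (v x) t * (ψf x * χ t)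
      = ψf x * ∫ t in Ioo (0:ℝ) 1, deriv (v x) t * χ t := by
        rw [← integral_const_mul]; congr 1; funext t; ring
    _ = (-ψf x) * ∫ t in Ioo (0:ℝ) 1, v x t * deriv (⇑χ) t := by rw [key]; ring
    _ = ∫ t in Ioo (0:ℝ) 1, v x t * (-(ψf x * deriv (⇑χ) t)) := by
        rw [← integral_const_mul]; congr 1; funext t; ring


lemma setIntegral_prod_symm' {α β : Type*} [MeasurableSpace α] [MeasurableSpace β]
    {μ : Measure α} {ν : Measure β} [SFinite μ] [SFinite ν]
    (f : α × β → ℝ) {s : Set α} {t : Set β} (hf : IntegrableOn f (s ×ˢ t) (μ.prod ν)) :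
    ∫ z in s ×ˢ t, f z ∂μ.prod ν = ∫ y in t, ∫ x in s, f (x, y) ∂μ ∂ν := by
  simp only [← Measure.prod_restrict s t, IntegrableOn] at hf ⊢
  exact integral_prod_symm f hf

lemma claimB {v : E → ℝ → ℝ} (ψ : ContDiffBump (0:E)) (hψr : ψ.rOut = 3/4)
    (η : ContDiffBump (0:E)) (hηi : η.rIn = 7/8) (hηo : η.rOut = 15/16)
    {χf : ℝ → ℝ} (hχc : Continuous χf) (hχb : ∀ t, |χf t| ≤ 1)
    {C₂ : ℝ} (hC₂ : ∀ x, |lap (⇑ψ) x| ≤ C₂)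
    (h6 : ∀ t ∈ Ioo (0:ℝ) 1, ContDiffOn ℝ 2 (fun y => v y t) (ball (0:E) 1))
    (hlapi : IntegrableOn (fun p : E × ℝ => lap (fun y => v y p.2) p.1)
      (ball (0:E) 1 ×ˢ Ioo (0:ℝ) 1))
    (hvi : IntegrableOn (fun p : E × ℝ => v p.1 p.2) (ball (0:E) 1 ×ˢ Ioo (0:ℝ) 1)) :
    ∫ p in ball (0:E) 1 ×ˢ Ioo (0:ℝ) 1, lap (fun y => v y p.2) p.1 * (ψ p.1 * χf p.2)
      = ∫ p in ball (0:E) 1 ×ˢ Ioo (0:ℝ) 1, v p.1 p.2 * (lap (⇑ψ) p.1 * χf p.2) := by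
  have hC₂0 : 0 ≤ C₂ := le_trans (abs_nonneg _) (hC₂ 0)
  have hψ0 : ∀ x : E, x ∉ closedBall (0:E) (3/4) → (ψ:E→ℝ) x = 0 := fun x hx =>
    ψ.zero_of_le_dist (by rw [hψr]; exact le_of_lt (by simpa [mem_closedBall, not_le] using hx))
  have hlapψ0 : ∀ x : E, x ∉ closedBall (0:E) (3/4) → lap (⇑ψ) x = 0 := by
    intro x hx
    apply lap_eq_zero_of_eqOn_zero (isClosed_tsupport (⇑ψ)).isOpen_compl
      (fun y hy => image_eq_zero_of_notMem_tsupport hy)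
    rw [mem_compl_iff, ψ.tsupport_eq, hψr]
    exact hx
  have hL : IntegrableOn (fun p : E × ℝ => lap (fun y => v y p.2) p.1 * (ψ p.1 * χf p.2))
      (ball (0:E) 1 ×ˢ Ioo (0:ℝ) 1) := by
    have := hlapi.bdd_mul (f := fun p : E × ℝ => (ψ:E→ℝ) p.1 * χf p.2)
      ((ψ.continuous.comp continuous_fst).mul (hχc.comp continuous_snd)).aestronglyMeasurable
      (c := 1) (Filter.Eventually.of_forall fun p => by
        rw [Real.norm_eq_abs, abs_mul]
        exact mul_le_one₀ (by rw [abs_of_nonneg ψ.nonneg]; exact ψ.le_one) (abs_nonneg _)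
          (hχb _))
    simpa [mul_comm, IntegrableOn] using this
  have hR : IntegrableOn (fun p : E × ℝ => v p.1 p.2 * (lap (⇑ψ) p.1 * χf p.2))
      (ball (0:E) 1 ×ˢ Ioo (0:ℝ) 1) := by
    have := hvi.bdd_mul (f := fun p : E × ℝ => lap (⇑ψ) p.1 * χf p.2)
      (((lap_continuous ψ.contDiff).comp continuous_fst).mul
        (hχc.comp continuous_snd)).aestronglyMeasurable
      (c := C₂) (Filter.Eventually.of_forall fun p => by
        rw [Real.norm_eq_abs, abs_mul]
        calc |lap (⇑ψ) p.1| * |χf p.2| ≤ C₂ * 1 :=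
              mul_le_mul (hC₂ _) (hχb _) (abs_nonneg _) hC₂0
          _ = C₂ := mul_one C₂)
    simpa [mul_comm, IntegrableOn] using this
  rw [Measure.volume_eq_prod] at hL hR ⊢
  rw [setIntegral_prod_symm' _ hL, setIntegral_prod_symm' _ hR]
  apply setIntegral_congr_fun measurableSet_Ioo
  intro t ht
  set w : E → ℝ := fun y => v y t with hwdef
  set u : E → ℝ := fun y => η y * w y with hudef
  have hηz : ∀ x : E, x ∉ closedBall (0:E) (15/16) → (η:E→ℝ) x = 0 := fun x hx =>
    η.zero_of_le_dist (by rw [hηo]; exact le_of_lt (by simpa [mem_closedBall, not_le] using hx))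
  have hu0 : ∀ x, x ∉ closedBall (0:E) (15/16) → u x = 0 := fun x hx => by
    simp [hudef, hηz x hx]
  have hu2 : ContDiff ℝ 2 u := by
    apply contDiff_patch isOpen_ball ((η.contDiff.contDiffOn).mul (h6 t ht))
      (Metric.isClosed_closedBall) hu0
    intro x
    by_cases hx : x ∈ closedBall (0:E) (15/16)
    · left
      rw [mem_ball]
      calc dist x 0 ≤ 15/16 := mem_closedBall.1 hx
        _ < 1 := by norm_num
    · right; exact hx
  have hcu : HasCompactSupport u := HasCompactSupport.intro (isCompact_closedBall _ _) hu0
  have heq : EqOn u w (ball (0:E) (7/8)) := by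
    intro x hx
    have h1 : (η:E→ℝ) x = 1 := η.one_of_mem_closedBall (by
      rw [hηi]; exact ball_subset_closedBall hx)
    simp [hudef, h1]
  have hb78 : ∀ x : E, x ∉ ball (0:E) (7/8) → x ∉ closedBall (0:E) (3/4) := by
    intro x hx hc
    exact hx (mem_ball.2 (lt_of_le_of_lt (mem_closedBall.1 hc) (by norm_num)))
  have hb1 : ∀ x : E, x ∉ ball (0:E) 1 → x ∉ closedBall (0:E) (3/4) := by
    intro x hx hc
    exact hx (mem_ball.2 (lt_of_le_of_lt (mem_closedBall.1 hc) (by norm_num)))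
  calc ∫ x in ball (0:E) 1, lap (fun y => v y t) x * ((ψ:E→ℝ) x * χf t)
      = ∫ x in ball (0:E) 1, ((ψ:E→ℝ) x * lap u x) * χf t := by
        apply setIntegral_congr_fun measurableSet_ball
        intro x hx
        by_cases hx7 : x ∈ ball (0:E) (7/8)
        · have h1 : lap u x = lap (fun y => v y t) x := lap_congr isOpen_ball heq hx7
          beta_reduce
          rw [h1]; ring
        · beta_reduce
          rw [hψ0 x (hb78 x hx7)]; ring
    _ = (∫ x in ball (0:E) 1, (ψ:E→ℝ) x * lap u x) * χf t := by rw [← integral_mul_const]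
    _ = (∫ x : E, (ψ:E→ℝ) x * lap u x) * χf t := by
        congr 1
        exact setIntegral_eq_integral_of_forall_compl_eq_zero fun x hx => by
          rw [hψ0 x (hb1 x hx), zero_mul]
    _ = (∫ x : E, lap (⇑ψ) x * u x) * χf t := by
        rw [ibp_lap hu2 ψ.contDiff hcu ψ.hasCompactSupport]
    _ = (∫ x in ball (0:E) 1, lap (⇑ψ) x * u x) * χf t := by
        congr 1
        exact (setIntegral_eq_integral_of_forall_compl_eq_zero fun x hx => by
          rw [hlapψ0 x (hb1 x hx), zero_mul]).symm
    _ = ∫ x in ball (0:E) 1, v x t * (lap (⇑ψ) x * χf t) := by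
        rw [← integral_mul_const]
        apply setIntegral_congr_fun measurableSet_ball
        intro x hx
        by_cases hx7 : x ∈ ball (0:E) (7/8)
        · have h1 : u x = v x t := heq hx7
          beta_reduce
          rw [h1]; ring
        · beta_reduce
          rw [hlapψ0 x (hb78 x hx7)]; ring

end Stmt7Aux



lemma trace_hess_eq {n : ℕ} (u : EuclideanSpace ℝ (Fin n) → ℝ) (x : EuclideanSpace ℝ (Fin n)) :
    Matrix.trace (hess u x) = Stmt7Aux.lap u x := by
  simp [Matrix.trace, hess, Stmt7Aux.lap, Stmt7Aux.pdd, Matrix.diag]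

set_option maxHeartbeats 4000000 in
/-- `L_1` estimate for the heat operator applied to subsolutions (Lemma `l1`). -/
theorem stmt7 (n : ℕ) (hn : 1 ≤ n) (lam Lam : ℝ) (hlam : 0 < lam) (hLam : lam ≤ Lam) :
    ∃ C₅ > (0:ℝ),
      ∀ f v : EuclideanSpace ℝ (Fin n) → ℝ → ℝ,
        ContinuousOn (fun p : EuclideanSpace ℝ (Fin n) × ℝ => f p.1 p.2)
          (ball 0 1 ×ˢ Ioo (0:ℝ) 1) →
        IntegrableOn (fun p : EuclideanSpace ℝ (Fin n) × ℝ => f p.1 p.2)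
          (ball 0 1 ×ˢ Ioo (0:ℝ) 1) →
        IntegrableOn (fun p : EuclideanSpace ℝ (Fin n) × ℝ => v p.1 p.2)
          (ball 0 1 ×ˢ Ioo (0:ℝ) 1) →
        (∀ p ∈ ball (0 : EuclideanSpace ℝ (Fin n)) 1 ×ˢ Ioo (0:ℝ) 1,
          DifferentiableAt ℝ (v p.1) p.2) →
        ContinuousOn (fun p : EuclideanSpace ℝ (Fin n) × ℝ => deriv (v p.1) p.2)
          (ball 0 1 ×ˢ Ioo (0:ℝ) 1) →
        (∀ t ∈ Ioo (0:ℝ) 1, ContDiffOn ℝ 2 (fun y => v y t) (ball 0 1)) →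
        ContinuousOn (fun p : EuclideanSpace ℝ (Fin n) × ℝ => hess (fun y => v y p.2) p.1)
          (ball 0 1 ×ˢ Ioo (0:ℝ) 1) →
        IntegrableOn (fun p : EuclideanSpace ℝ (Fin n) × ℝ => deriv (v p.1) p.2)
          (ball 0 1 ×ˢ Ioo (0:ℝ) 1) →
        IntegrableOn
          (fun p : EuclideanSpace ℝ (Fin n) × ℝ => Matrix.trace (hess (fun y => v y p.2) p.1))
          (ball 0 1 ×ˢ Ioo (0:ℝ) 1) →
        (∀ p ∈ ball (0 : EuclideanSpace ℝ (Fin n)) 1 ×ˢ Ioo (0:ℝ) 1,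
          deriv (v p.1) p.2 - (Lam + lam) / 2 * Matrix.trace (hess (fun y => v y p.2) p.1) ≤
            f p.1 p.2) →
        ∫ p in ball (0 : EuclideanSpace ℝ (Fin n)) (1/2) ×ˢ Ioo (1/3 : ℝ) (2/3),
            |deriv (v p.1) p.2 - (Lam + lam) / 2 * Matrix.trace (hess (fun y => v y p.2) p.1)| ≤
          C₅ * ((∫ p in ball (0 : EuclideanSpace ℝ (Fin n)) 1 ×ˢ Ioo (0:ℝ) 1, |f p.1 p.2|) +
            ∫ p in ball (0 : EuclideanSpace ℝ (Fin n)) 1 ×ˢ Ioo (0:ℝ) 1, |v p.1 p.2|) := by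
  classical
  set ψ : ContDiffBump (0 : EuclideanSpace ℝ (Fin n)) := ⟨1/2, 3/4, by norm_num, by norm_num⟩
    with hψdef
  set η : ContDiffBump (0 : EuclideanSpace ℝ (Fin n)) := ⟨7/8, 15/16, by norm_num, by norm_num⟩
    with hηdef
  set χ : ContDiffBump ((1:ℝ)/2) := ⟨1/6, 1/4, by norm_num, by norm_num⟩ with hχdef
  have hψrIn : ψ.rIn = 1/2 := rfl
  have hψrOut : ψ.rOut = 3/4 := rfl
  have hηrIn : η.rIn = 7/8 := rfl
  have hηrOut : η.rOut = 15/16 := rfl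
  have hχrIn : χ.rIn = 1/6 := rfl
  have hχrOut : χ.rOut = 1/4 := rfl
  obtain ⟨M₁, hM₁0, hM₁⟩ : ∃ C, 0 ≤ C ∧ ∀ t, |deriv (⇑χ) t| ≤ C :=
    Stmt7Aux.exists_bound_abs
      ((χ.contDiff (n := ⊤)).continuous_deriv (by exact_mod_cast le_top))
      χ.hasCompactSupport.deriv
  obtain ⟨M₂, hM₂0, hM₂⟩ : ∃ C, 0 ≤ C ∧ ∀ x, |Stmt7Aux.lap (⇑ψ) x| ≤ C :=
    Stmt7Aux.exists_bound_abs (Stmt7Aux.lap_continuous ψ.contDiff)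
      (Stmt7Aux.lap_hcs ψ.hasCompactSupport)
  have hc0 : (0:ℝ) < (Lam + lam) / 2 := by linarith
  have hM0 : 0 ≤ M₁ + (Lam + lam) / 2 * M₂ :=
    add_nonneg hM₁0 (mul_nonneg hc0.le hM₂0)
  refine ⟨3 + M₁ + (Lam + lam) / 2 * M₂, by linarith, ?_⟩
  intro f v hfc hfi hvi hvd hvtc h6 hhc hvti htri hineq
  set Q : Set (EuclideanSpace ℝ (Fin n) × ℝ) := ball 0 1 ×ˢ Ioo (0:ℝ) 1 with hQdef
  set Q' : Set (EuclideanSpace ℝ (Fin n) × ℝ) := ball 0 (1/2) ×ˢ Ioo (1/3:ℝ) (2/3) with hQ'def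
  set G : EuclideanSpace ℝ (Fin n) × ℝ → ℝ :=
    fun p => deriv (v p.1) p.2 - (Lam + lam) / 2 * Matrix.trace (hess (fun y => v y p.2) p.1)
    with hGdef
  have hQm : MeasurableSet Q := measurableSet_ball.prod measurableSet_Ioo
  have hQ'm : MeasurableSet Q' := measurableSet_ball.prod measurableSet_Ioo
  have hQ'Q : Q' ⊆ Q :=
    prod_mono (ball_subset_ball (by norm_num)) (Ioo_subset_Ioo (by norm_num) (by norm_num))
  have hlapi : IntegrableOn
      (fun p : EuclideanSpace ℝ (Fin n) × ℝ => Stmt7Aux.lap (fun y => v y p.2) p.1) Q := by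
    have h := htri
    simp only [trace_hess_eq] at h
    exact h
  have hGi : IntegrableOn G Q := by
    have h2 : IntegrableOn (fun p : EuclideanSpace ℝ (Fin n) × ℝ =>
        (Lam + lam) / 2 * Matrix.trace (hess (fun y => v y p.2) p.1)) Q :=
      htri.const_mul _
    exact hvti.sub h2
  have hG'i : IntegrableOn G Q' := hGi.mono_set hQ'Q
  set φ : EuclideanSpace ℝ (Fin n) × ℝ → ℝ := fun p => (ψ : _ → ℝ) p.1 * (χ : ℝ → ℝ) p.2
    with hφdef
  have hφc : Continuous φ :=
    (ψ.continuous.comp continuous_fst).mul (χ.continuous.comp continuous_snd)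
  have hφ0 : ∀ p, 0 ≤ φ p := fun p => mul_nonneg ψ.nonneg χ.nonneg
  have hφ1 : ∀ p, φ p ≤ 1 := fun p =>
    mul_le_one₀ ψ.le_one χ.nonneg χ.le_one
  have hφQ' : ∀ p ∈ Q', φ p = 1 := by
    rintro ⟨x, t⟩ ⟨hx, ht⟩
    have h1 : (ψ : _ → ℝ) x = 1 := ψ.one_of_mem_closedBall (by
      rw [mem_closedBall, hψrIn]
      exact le_of_lt (mem_ball.1 hx))
    have h2 : (χ : ℝ → ℝ) t = 1 := χ.one_of_mem_closedBall (by
      rw [mem_closedBall, Real.dist_eq, hχrIn]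
      have h3 := ht.1
      have h4 := ht.2
      rw [abs_le]
      constructor <;> [linarith; linarith])
    simp [hφdef, h1, h2]
  have hψb : ∀ x, |(ψ : _ → ℝ) x| ≤ 1 := fun x => by
    rw [abs_of_nonneg ψ.nonneg]; exact ψ.le_one
  have hχb : ∀ t, |(χ : ℝ → ℝ) t| ≤ 1 := fun t => by
    rw [abs_of_nonneg χ.nonneg]; exact χ.le_one
  have hGφi : IntegrableOn (fun p => G p * φ p) Q := by
    have h := hGi.bdd_mul hφc.aestronglyMeasurable
      (c := 1) (Filter.Eventually.of_forall fun p => by rw [Real.norm_eq_abs, abs_of_nonneg (hφ0 p)]; exact hφ1 p)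
    simpa [mul_comm, IntegrableOn] using h
  have hindi : IntegrableOn (Q'.indicator G) Q :=
    (hG'i.integrable_indicator hQ'm).integrableOn
  -- the two integration-by-parts identities
  have hA : ∫ p in Q, deriv (v p.1) p.2 * φ p
      = ∫ p in Q, v p.1 p.2 * (-((ψ : _ → ℝ) p.1 * deriv (⇑χ) p.2)) :=
    Stmt7Aux.claimA χ hχrOut ψ.continuous hψb hvd hvtc hvti hvi
  have hB : ∫ p in Q, Stmt7Aux.lap (fun y => v y p.2) p.1 * φ p
      = ∫ p in Q, v p.1 p.2 * (Stmt7Aux.lap (⇑ψ) p.1 * (χ : ℝ → ℝ) p.2) :=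
    Stmt7Aux.claimB ψ hψrOut η hηrIn hηrOut χ.continuous hχb hM₂ h6 hlapi hvi
  set k : EuclideanSpace ℝ (Fin n) × ℝ → ℝ := fun p =>
    -((ψ : _ → ℝ) p.1 * deriv (⇑χ) p.2)
      - (Lam + lam) / 2 * (Stmt7Aux.lap (⇑ψ) p.1 * (χ : ℝ → ℝ) p.2) with hkdef
  have hkc : Continuous k := by
    apply Continuous.sub
    · exact ((ψ.continuous.comp continuous_fst).mul
        (((χ.contDiff (n := ⊤)).continuous_deriv (by exact_mod_cast le_top)).comp
          continuous_snd)).neg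
    · exact continuous_const.mul
        (((Stmt7Aux.lap_continuous ψ.contDiff).comp continuous_fst).mul
          (χ.continuous.comp continuous_snd))
  have hk_bound : ∀ p, |k p| ≤ M₁ + (Lam + lam) / 2 * M₂ := by
    intro p
    have e : k p = (-((ψ : _ → ℝ) p.1 * deriv (⇑χ) p.2))
        + (-((Lam + lam) / 2 * (Stmt7Aux.lap (⇑ψ) p.1 * (χ : ℝ → ℝ) p.2))) := by
      rw [hkdef]; ring
    rw [e]
    refine le_trans (abs_add_le _ _) ?_
    rw [abs_neg, abs_neg, abs_mul, abs_mul, abs_mul]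
    have b1 : |(ψ : _ → ℝ) p.1| * |deriv (⇑χ) p.2| ≤ 1 * M₁ :=
      mul_le_mul (hψb _) (hM₁ _) (abs_nonneg _) zero_le_one
    have b2 : |Stmt7Aux.lap (⇑ψ) p.1| * |(χ : ℝ → ℝ) p.2| ≤ M₂ * 1 :=
      mul_le_mul (hM₂ _) (hχb _) (abs_nonneg _) hM₂0
    have b3 : |(Lam + lam) / 2| * (|Stmt7Aux.lap (⇑ψ) p.1| * |(χ : ℝ → ℝ) p.2|)
        ≤ (Lam + lam) / 2 * M₂ := by
      rw [abs_of_nonneg hc0.le]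
      calc (Lam + lam) / 2 * (|Stmt7Aux.lap (⇑ψ) p.1| * |(χ : ℝ → ℝ) p.2|)
          ≤ (Lam + lam) / 2 * (M₂ * 1) := by
            exact mul_le_mul_of_nonneg_left b2 hc0.le
        _ = (Lam + lam) / 2 * M₂ := by ring
    linarith
  have hvk_i : IntegrableOn (fun p => v p.1 p.2 * k p) Q := by
    have h := hvi.bdd_mul hkc.aestronglyMeasurable
      (c := M₁ + (Lam + lam) / 2 * M₂) (Filter.Eventually.of_forall fun p => by rw [Real.norm_eq_abs]; exact hk_bound p)
    simpa [mul_comm, IntegrableOn] using h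
  have hw1_i : IntegrableOn
      (fun p : EuclideanSpace ℝ (Fin n) × ℝ =>
        v p.1 p.2 * (-((ψ : _ → ℝ) p.1 * deriv (⇑χ) p.2))) Q := by
    have h := hvi.bdd_mul (f := fun p : EuclideanSpace ℝ (Fin n) × ℝ =>
        -((ψ : _ → ℝ) p.1 * deriv (⇑χ) p.2))
      (((ψ.continuous.comp continuous_fst).mul
        (((χ.contDiff (n := ⊤)).continuous_deriv (by exact_mod_cast le_top)).comp
          continuous_snd)).neg).aestronglyMeasurable
      (c := M₁) (Filter.Eventually.of_forall fun p => by
        rw [Real.norm_eq_abs, abs_neg, abs_mul]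
        calc |(ψ : _ → ℝ) p.1| * |deriv (⇑χ) p.2| ≤ 1 * M₁ :=
              mul_le_mul (hψb _) (hM₁ _) (abs_nonneg _) zero_le_one
          _ = M₁ := one_mul _)
    simpa [mul_comm, IntegrableOn] using h
  have hw2_i : IntegrableOn
      (fun p : EuclideanSpace ℝ (Fin n) × ℝ =>
        v p.1 p.2 * (Stmt7Aux.lap (⇑ψ) p.1 * (χ : ℝ → ℝ) p.2)) Q := by
    have h := hvi.bdd_mul (f := fun p : EuclideanSpace ℝ (Fin n) × ℝ =>
        Stmt7Aux.lap (⇑ψ) p.1 * (χ : ℝ → ℝ) p.2)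
      (((Stmt7Aux.lap_continuous ψ.contDiff).comp continuous_fst).mul
        (χ.continuous.comp continuous_snd)).aestronglyMeasurable
      (c := M₂) (Filter.Eventually.of_forall fun p => by
        rw [Real.norm_eq_abs, abs_mul]
        calc |Stmt7Aux.lap (⇑ψ) p.1| * |(χ : ℝ → ℝ) p.2| ≤ M₂ * 1 :=
              mul_le_mul (hM₂ _) (hχb _) (abs_nonneg _) hM₂0
          _ = M₂ := mul_one _)
    simpa [mul_comm, IntegrableOn] using h
  have hdφ_i : IntegrableOn (fun p => deriv (v p.1) p.2 * φ p) Q := by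
    have h := hvti.bdd_mul hφc.aestronglyMeasurable
      (c := 1) (Filter.Eventually.of_forall fun p => by rw [Real.norm_eq_abs, abs_of_nonneg (hφ0 p)]; exact hφ1 p)
    simpa [mul_comm, IntegrableOn] using h
  have htφ_i : IntegrableOn (fun p : EuclideanSpace ℝ (Fin n) × ℝ =>
      (Lam + lam) / 2 * (Matrix.trace (hess (fun y => v y p.2) p.1) * φ p)) Q := by
    have h := htri.bdd_mul hφc.aestronglyMeasurable
      (c := 1) (Filter.Eventually.of_forall fun p => by rw [Real.norm_eq_abs, abs_of_nonneg (hφ0 p)]; exact hφ1 p)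
    have h2 : IntegrableOn (fun p : EuclideanSpace ℝ (Fin n) × ℝ =>
        Matrix.trace (hess (fun y => v y p.2) p.1) * φ p) Q := by
      simpa [mul_comm, IntegrableOn] using h
    exact h2.const_mul _
  -- central identity
  have hGφ : ∫ p in Q, G p * φ p = ∫ p in Q, v p.1 p.2 * k p := by
    have e1 : ∫ p in Q, G p * φ p
        = (∫ p in Q, deriv (v p.1) p.2 * φ p)
          - ∫ p in Q, (Lam + lam) / 2 * (Matrix.trace (hess (fun y => v y p.2) p.1) * φ p) := by
      rw [← integral_sub hdφ_i htφ_i]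
      congr 1
      funext p
      rw [hGdef]
      ring
    have e2 : ∫ p in Q, (Lam + lam) / 2 * (Matrix.trace (hess (fun y => v y p.2) p.1) * φ p)
        = (Lam + lam) / 2 * ∫ p in Q, Stmt7Aux.lap (fun y => v y p.2) p.1 * φ p := by
      rw [← integral_const_mul]
      apply setIntegral_congr_fun hQm
      intro p _
      beta_reduce
      rw [trace_hess_eq]
    rw [e1, e2, hA, hB]
    rw [← integral_const_mul, ← integral_sub hw1_i (hw2_i.const_mul _)]
    congr 1
    funext p
    rw [hkdef]
    ring
  -- final assembly
  have habs : ∀ p, |G p| = 2 * max (G p) 0 - G p := by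
    intro p
    rcases le_total (G p) 0 with h | h
    · rw [max_eq_right h, abs_of_nonpos h]; ring
    · rw [max_eq_left h, abs_of_nonneg h]; ring
  have S1 : ∫ p in Q', |G p| = 2 * (∫ p in Q', max (G p) 0) - ∫ p in Q', G p := by
    calc ∫ p in Q', |G p| = ∫ p in Q', (2 * max (G p) 0 - G p) := by
          simp only [habs]
      _ = 2 * (∫ p in Q', max (G p) 0) - ∫ p in Q', G p := by
          rw [integral_sub (hG'i.pos_part.const_mul 2) hG'i, integral_const_mul]
  have S2 : ∫ p in Q', max (G p) 0 ≤ ∫ p in Q, |f p.1 p.2| := by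
    have s21 : ∫ p in Q', max (G p) 0 ≤ ∫ p in Q', |f p.1 p.2| := by
      apply setIntegral_mono_on hG'i.pos_part (IntegrableOn.mono_set hfi.abs hQ'Q) hQ'm
      intro p hp
      exact max_le (le_trans (hineq p (hQ'Q hp)) (le_abs_self _)) (abs_nonneg _)
    have s22 : ∫ p in Q', |f p.1 p.2| ≤ ∫ p in Q, |f p.1 p.2| := by
      apply setIntegral_mono_set hfi.abs
      · exact Filter.Eventually.of_forall fun p => abs_nonneg _
      · exact HasSubset.Subset.eventuallyLE hQ'Q
    linarith
  have S3 : (∫ p in Q, G p * φ p) - (∫ p in Q', G p) ≤ ∫ p in Q, |f p.1 p.2| := by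
    have e : ∫ p in Q', G p = ∫ p in Q, Q'.indicator G p := by
      rw [setIntegral_indicator hQ'm, inter_eq_self_of_subset_right hQ'Q]
    rw [e, ← integral_sub hGφi hindi]
    apply setIntegral_mono_on (hGφi.sub hindi) hfi.abs hQm
    intro p hp
    show G p * φ p - Q'.indicator G p ≤ |f p.1 p.2|
    by_cases hp' : p ∈ Q'
    · have e0 : G p * φ p - Q'.indicator G p = 0 := by
        rw [indicator_of_mem hp' G, hφQ' p hp']
        ring
      rw [e0]
      exact abs_nonneg _
    · rw [indicator_of_notMem hp' G, sub_zero]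
      calc G p * φ p ≤ f p.1 p.2 * φ p :=
            mul_le_mul_of_nonneg_right (hineq p hp) (hφ0 p)
        _ ≤ |f p.1 p.2| * φ p := mul_le_mul_of_nonneg_right (le_abs_self _) (hφ0 p)
        _ ≤ |f p.1 p.2| * 1 := mul_le_mul_of_nonneg_left (hφ1 p) (abs_nonneg _)
        _ = |f p.1 p.2| := mul_one _
  have S4 : -(∫ p in Q, G p * φ p) ≤ (M₁ + (Lam + lam) / 2 * M₂) * ∫ p in Q, |v p.1 p.2| := by
    rw [hGφ]
    have h1 : |∫ p in Q, v p.1 p.2 * k p| ≤ ∫ p in Q, |v p.1 p.2| * |k p| := by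
      simpa [Real.norm_eq_abs] using
        norm_integral_le_integral_norm (μ := volume.restrict Q) (fun p => v p.1 p.2 * k p)
    have hvk_abs : IntegrableOn (fun p => |v p.1 p.2| * |k p|) Q := by
      simpa [abs_mul, IntegrableOn] using hvk_i.abs
    have h2 : ∫ p in Q, |v p.1 p.2| * |k p|
        ≤ ∫ p in Q, (M₁ + (Lam + lam) / 2 * M₂) * |v p.1 p.2| := by
      apply setIntegral_mono_on hvk_abs (hvi.abs.const_mul _) hQm
      intro p _
      show |v p.1 p.2| * |k p| ≤ (M₁ + (Lam + lam) / 2 * M₂) * |v p.1 p.2|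
      rw [mul_comm]
      exact mul_le_mul_of_nonneg_right (hk_bound p) (abs_nonneg _)
    have h3 : ∫ p in Q, (M₁ + (Lam + lam) / 2 * M₂) * |v p.1 p.2|
        = (M₁ + (Lam + lam) / 2 * M₂) * ∫ p in Q, |v p.1 p.2| := integral_const_mul _ _
    have h4 := neg_abs_le (∫ p in Q, v p.1 p.2 * k p)
    linarith
  have hF0 : 0 ≤ ∫ p in Q, |f p.1 p.2| := setIntegral_nonneg hQm fun p _ => abs_nonneg _
  have hV0 : 0 ≤ ∫ p in Q, |v p.1 p.2| := setIntegral_nonneg hQm fun p _ => abs_nonneg _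
  have hexp : (3 + M₁ + (Lam + lam) / 2 * M₂)
        * ((∫ p in Q, |f p.1 p.2|) + ∫ p in Q, |v p.1 p.2|)
      = 3 * (∫ p in Q, |f p.1 p.2|) + 3 * (∫ p in Q, |v p.1 p.2|)
        + (M₁ + (Lam + lam) / 2 * M₂) * (∫ p in Q, |f p.1 p.2|)
        + (M₁ + (Lam + lam) / 2 * M₂) * (∫ p in Q, |v p.1 p.2|) := by ring
  have hMF : 0 ≤ (M₁ + (Lam + lam) / 2 * M₂) * (∫ p in Q, |f p.1 p.2|) :=
    mul_nonneg hM0 hF0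
  show ∫ p in Q', |G p| ≤ (3 + M₁ + (Lam + lam) / 2 * M₂)
      * ((∫ p in Q, |f p.1 p.2|) + ∫ p in Q, |v p.1 p.2|)
  linarith
end
end

section
/- Let n ≥ 2 and 0 < λ ≤ Λ with λ(n−1) ≠ Λ, and set θ := 1 − λ(n−1)/Λ. Define U : ℝⁿ \ {0} → ℝ by U(x) = ‖x‖^θ − 1 if θ > 0 and U(x) = 1 − ‖x‖^θ if θ < 0. Then U is C² on B₁ \ {0}, U is not identically zero on B₁ \ {0}, U(x) = 0 for every x ∈ ∂B₁, and 𝒫⁻(D²U(x)) = 0 for every x ∈ B₁ \ {0}; that is, U is a nontrivial solution of the Pucci equation −𝒫⁻(D²U) = 0 in B₁ \ {0} vanishing on ∂B₁. -/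
open MeasureTheory Metric Set ENNReal RealInnerProductSpace

noncomputable section

/-! ### Auxiliary lemmas -/

open Matrix

lemma aux_sum_eigen_eq_trace {n : ℕ} {M : Matrix (Fin n) (Fin n) ℝ} (h : M.IsHermitian) :
    ∑ i, h.eigenvalues i = Matrix.trace M := by
  rw [h.trace_eq_sum_eigenvalues]
  simp

lemma aux_eigen_dichotomy {n : ℕ} (w : Fin n → ℝ) (κ β : ℝ)
    {M : Matrix (Fin n) (Fin n) ℝ}
    (hM : ∀ i j, M i j = κ * w i * w j + β * (if i = j then 1 else 0))
    (h : M.IsHermitian) (i : Fin n) :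
    h.eigenvalues i = β + κ * (∑ k, w k ^ 2) ∨ h.eigenvalues i = β := by
  set μ := h.eigenvalues i with hμ
  set v : Fin n → ℝ := ⇑(h.eigenvectorBasis i) with hv
  have hmv : M *ᵥ v = μ • v := h.mulVec_eigenvectorBasis i
  have hv0 : v ≠ 0 := by
    have := h.eigenvectorBasis.orthonormal.ne_zero i
    intro hc
    apply this
    ext k
    exact congrFun hc k
  set t : ℝ := ∑ l, w l * v l with ht
  have key : ∀ k, κ * w k * t + β * v k = μ * v k := by
    intro k
    have hk := congrFun hmv k
    rw [Matrix.mulVec, dotProduct] at hk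
    simp only [hM, Pi.smul_apply, smul_eq_mul] at hk
    rw [← hk]
    have he : ∀ x, (κ * w k * w x + β * (if k = x then 1 else 0)) * v x
        = κ * w k * (w x * v x) + (if k = x then β * v x else 0) := by
      intro x; by_cases hx : k = x <;> simp [hx] <;> ring
    rw [Finset.sum_congr rfl fun x _ => he x, Finset.sum_add_distrib, ← Finset.mul_sum,
      Finset.sum_ite_eq, if_pos (Finset.mem_univ k), ← ht]
  by_cases htz : t = 0
  · right
    obtain ⟨k, hk⟩ := Function.ne_iff.mp hv0
    have := key k
    rw [htz, mul_zero, zero_add] at this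
    exact (mul_right_cancel₀ hk this.symm)
  · left
    have hsum : ∑ k, w k * (κ * w k * t + β * v k) = ∑ k, w k * (μ * v k) := by
      exact Finset.sum_congr rfl fun k _ => by rw [key k]
    have hL : ∑ k, w k * (κ * w k * t + β * v k) = κ * (∑ k, w k ^ 2) * t + β * t := by
      have he : ∀ k, w k * (κ * w k * t + β * v k) = κ * t * (w k ^ 2) + β * (w k * v k) := by
        intro k; ring
      rw [Finset.sum_congr rfl fun k _ => he k, Finset.sum_add_distrib, ← Finset.mul_sum,
        ← Finset.mul_sum, ← ht]
      ring
    have hR : ∑ k, w k * (μ * v k) = μ * t := by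
      rw [ht, Finset.mul_sum]
      exact Finset.sum_congr rfl fun k _ => by ring
    rw [hL, hR] at hsum
    have : (β + κ * (∑ k, w k ^ 2)) * t = μ * t := by rw [← hsum]; ring
    exact (mul_right_cancel₀ htz this).symm

lemma aux_pucci_count {n : ℕ} {M : Matrix (Fin n) (Fin n) ℝ} (h : M.IsHermitian)
    {a b : ℝ} (ha : a < 0) (hb : 0 < b)
    (hdich : ∀ i, h.eigenvalues i = a ∨ h.eigenvalues i = b)
    (htr : ∑ i, h.eigenvalues i = a + ((n : ℝ) - 1) * b) :
    (∑ i, max (h.eigenvalues i) 0 = ((n : ℝ) - 1) * b) ∧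
      (∑ i, max (-h.eigenvalues i) 0 = -a) := by
  classical
  set μ := h.eigenvalues with hμ
  set S : Finset (Fin n) := Finset.univ.filter (fun i => μ i = a) with hS
  set T : Finset (Fin n) := Finset.univ.filter (fun i => ¬ μ i = a) with hT
  have hcard : S.card + T.card = n := by
    rw [hS, hT, Finset.card_filter_add_card_filter_not, Finset.card_univ, Fintype.card_fin]
  have hgen : ∀ f : ℝ → ℝ, ∑ i, f (μ i) = (S.card : ℝ) * f a + (T.card : ℝ) * f b := by
    intro f
    rw [← Finset.sum_filter_add_sum_filter_not Finset.univ (fun i => μ i = a) (fun i => f (μ i))]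
    congr 1
    · rw [Finset.sum_congr rfl (fun i hi => by rw [(Finset.mem_filter.mp hi).2]),
        Finset.sum_const, nsmul_eq_mul]
    · rw [Finset.sum_congr rfl (fun i hi => by
        rw [(hdich i).resolve_left (Finset.mem_filter.mp hi).2]),
        Finset.sum_const, nsmul_eq_mul]
  have hid := hgen id
  simp only [id] at hid
  rw [htr] at hid
  have hSone : (S.card : ℝ) = 1 := by
    have hT' : (T.card : ℝ) = (n : ℝ) - S.card := by
      push_cast [← hcard]
      ring
    rw [hT'] at hid
    have hfac : ((S.card : ℝ) - 1) * (a - b) = 0 := by linarith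
    rcases mul_eq_zero.mp hfac with h1 | h2
    · linarith
    · linarith
  have hTn : (T.card : ℝ) = (n : ℝ) - 1 := by
    have : (T.card : ℝ) = (n : ℝ) - S.card := by push_cast [← hcard]; ring
    rw [this, hSone]
  constructor
  · have := hgen (fun t => max t 0)
    rw [this, hSone, hTn, max_eq_right ha.le, max_eq_left hb.le]
    ring
  · have := hgen (fun t => max (-t) 0)
    rw [this, hSone, hTn, max_eq_left (by linarith : (0:ℝ) ≤ -a),
      max_eq_right (by linarith : -b ≤ 0)]
    ring

section Deriv

variable {n : ℕ}

lemma aux_hasFDerivAt_normsq_rpow (p : ℝ) {y : EuclideanSpace ℝ (Fin n)} (hy : y ≠ 0) :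
    HasFDerivAt (fun z : EuclideanSpace ℝ (Fin n) => ((‖z‖ ^ 2 : ℝ)) ^ p)
      ((2 * p * ((‖y‖ ^ 2 : ℝ)) ^ (p - 1)) • innerSL ℝ y) y := by
  have hq : HasFDerivAt (fun z : EuclideanSpace ℝ (Fin n) => (‖z‖ : ℝ) ^ 2)
      ((2 : ℕ) • innerSL ℝ y) y := (hasStrictFDerivAt_norm_sq y).hasFDerivAt
  have h1 := hq.rpow_const (p := p) (Or.inl (pow_ne_zero 2 (norm_ne_zero_iff.mpr hy)))
  refine h1.congr_fderiv ?_
  ext v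
  simp
  ring

lemma aux_fderiv_U (θ σ c : ℝ) {y : EuclideanSpace ℝ (Fin n)} (hy : y ≠ 0) :
    HasFDerivAt (fun z : EuclideanSpace ℝ (Fin n) => σ * ((‖z‖ ^ 2 : ℝ)) ^ (θ / 2) - c)
      ((σ * θ * ((‖y‖ ^ 2 : ℝ)) ^ (θ / 2 - 1)) • innerSL ℝ y) y := by
  have h1 := ((aux_hasFDerivAt_normsq_rpow (θ / 2) hy).const_mul σ).sub_const c
  refine h1.congr_fderiv ?_
  ext v
  simp
  ring

lemma aux_fderiv_U_apply (θ σ c : ℝ) {y : EuclideanSpace ℝ (Fin n)} (hy : y ≠ 0) (j : Fin n) :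
    fderiv ℝ (fun z : EuclideanSpace ℝ (Fin n) => σ * ((‖z‖ ^ 2 : ℝ)) ^ (θ / 2) - c) y
        (EuclideanSpace.single j 1)
      = σ * θ * ((‖y‖ ^ 2 : ℝ)) ^ (θ / 2 - 1) * y j := by
  rw [(aux_fderiv_U θ σ c hy).fderiv]
  simp [real_inner_comm, EuclideanSpace.inner_single_right]

lemma aux_hess_U (θ σ c : ℝ) {x : EuclideanSpace ℝ (Fin n)} (hx : x ≠ 0) (i j : Fin n) :
    hess (fun z : EuclideanSpace ℝ (Fin n) => σ * ((‖z‖ ^ 2 : ℝ)) ^ (θ / 2) - c) x i j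
      = σ * θ * (θ - 2) * ((‖x‖ ^ 2 : ℝ)) ^ (θ / 2 - 2) * x i * x j
        + σ * θ * ((‖x‖ ^ 2 : ℝ)) ^ (θ / 2 - 1) * (if i = j then 1 else 0) := by
  have hev : (fun y : EuclideanSpace ℝ (Fin n) =>
      fderiv ℝ (fun z : EuclideanSpace ℝ (Fin n) => σ * ((‖z‖ ^ 2 : ℝ)) ^ (θ / 2) - c) y
      (EuclideanSpace.single j 1))
      =ᶠ[nhds x] (fun y : EuclideanSpace ℝ (Fin n) =>
        (σ * θ) * (((‖y‖ ^ 2 : ℝ)) ^ (θ / 2 - 1) * y j)) := by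
    filter_upwards [IsOpen.mem_nhds isOpen_compl_singleton hx] with y hy
    rw [aux_fderiv_U_apply θ σ c hy j]
    ring
  have hproj : HasFDerivAt (fun y : EuclideanSpace ℝ (Fin n) => y j)
      (EuclideanSpace.proj (𝕜 := ℝ) j) x := (EuclideanSpace.proj (𝕜 := ℝ) j).hasFDerivAt
  have hmul := ((aux_hasFDerivAt_normsq_rpow (θ / 2 - 1) hx).mul hproj).const_mul (σ * θ)
  simp only [Pi.mul_apply] at hmul
  rw [hess, hev.fderiv_eq, hmul.fderiv]
  simp [EuclideanSpace.single_apply, real_inner_comm, smul_smul, EuclideanSpace.inner_single_right]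
  by_cases hij : i = j
  · simp [hij]
    try ring
  · have hji : ¬ j = i := fun h => hij h.symm
    simp [hij, hji]
    try ring

end Deriv

/-- `U_θ` with `θ = 1 − λ(n−1)/Λ` is a nontrivial solution of `−𝒫⁻(D²U) = 0` in
`B₁ \ {0}` vanishing on `∂B₁` (Remark after Proposition `P1`). -/
theorem stmt13 (n : ℕ) (hn : 2 ≤ n) (lam Lam : ℝ) (hlam : 0 < lam) (hLam : lam ≤ Lam)
    (hne : lam * (n - 1) ≠ Lam)
    (θ : ℝ) (hθ : θ = 1 - lam * (n - 1) / Lam)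
    (U : EuclideanSpace ℝ (Fin n) → ℝ)
    (hU : ∀ x : EuclideanSpace ℝ (Fin n),
      U x = if 0 < θ then ‖x‖ ^ θ - 1 else 1 - ‖x‖ ^ θ) :
    ContDiffOn ℝ 2 U (ball 0 1 \ {0}) ∧
    (¬ ∀ x ∈ ball (0 : EuclideanSpace ℝ (Fin n)) 1 \ {0}, U x = 0) ∧
    (∀ x ∈ sphere (0 : EuclideanSpace ℝ (Fin n)) 1, U x = 0) ∧
    (∀ x ∈ ball (0 : EuclideanSpace ℝ (Fin n)) 1 \ {0},
      pucciInf lam Lam (hess U x) = 0) := by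
  have hΛ : (0 : ℝ) < Lam := lt_of_lt_of_le hlam hLam
  have hn1 : (1 : ℝ) ≤ (n : ℝ) - 1 := by
    have : (2 : ℝ) ≤ (n : ℝ) := by exact_mod_cast hn
    linarith
  have hfrac : 0 < lam * ((n : ℝ) - 1) / Lam := by positivity
  have hθ1 : θ < 1 := by rw [hθ]; linarith
  have hθ0 : θ ≠ 0 := by
    rw [hθ]
    intro h
    have : lam * ((n : ℝ) - 1) / Lam = 1 := by linarith
    exact hne ((div_eq_one_iff_eq (ne_of_gt hΛ)).mp this)
  set σ : ℝ := if 0 < θ then 1 else -1 with hσ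
  have hσθ : 0 < σ * θ := by
    by_cases h : 0 < θ
    · rw [hσ, if_pos h]; linarith
    · rw [hσ, if_neg h]
      have : θ < 0 := lt_of_le_of_ne (not_lt.mp h) hθ0
      linarith
  have hσ0 : σ ≠ 0 := by
    by_cases h : 0 < θ <;> simp [hσ, h]
  have hnormθ : ∀ y : EuclideanSpace ℝ (Fin n), ‖y‖ ^ θ = ((‖y‖ ^ 2 : ℝ)) ^ (θ / 2) := by
    intro y
    rw [← Real.rpow_natCast ‖y‖ 2, ← Real.rpow_mul (norm_nonneg y),
      show ((2:ℕ):ℝ) * (θ / 2) = θ by push_cast; ring]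
  have hU2 : U = fun y => σ * ‖y‖ ^ θ - σ := by
    funext y
    rw [hU y]
    by_cases h : 0 < θ
    · rw [if_pos h, hσ, if_pos h]; ring
    · rw [if_neg h, hσ, if_neg h]; ring
  have hU3 : U = fun y : EuclideanSpace ℝ (Fin n) => σ * ((‖y‖ ^ 2 : ℝ)) ^ (θ / 2) - σ := by
    rw [hU2]; funext y; rw [hnormθ y]
  refine ⟨?_, ?_, ?_, ?_⟩
  · -- smoothness
    intro x hx
    have hx0 : x ≠ 0 := hx.2
    apply ContDiffAt.contDiffWithinAt
    rw [hU2]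
    have h1 : ContDiffAt ℝ 2 (fun t : ℝ => t ^ θ) ‖x‖ :=
      Real.contDiffAt_rpow_const_of_ne (norm_ne_zero_iff.mpr hx0)
    have h2 : ContDiffAt ℝ 2 (fun y : EuclideanSpace ℝ (Fin n) => ‖y‖ ^ θ) x :=
      h1.comp x (contDiffAt_norm ℝ hx0)
    exact (contDiffAt_const.mul h2).sub contDiffAt_const
  · -- nontrivial
    intro hcon
    set x0 : EuclideanSpace ℝ (Fin n) :=
      EuclideanSpace.single (⟨0, by omega⟩ : Fin n) (1 / 2 : ℝ) with hx0def
    have hnx0 : ‖x0‖ = 1 / 2 := by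
      rw [hx0def, EuclideanSpace.norm_single]
      norm_num
    have hx0ne : x0 ≠ 0 := by
      intro h
      rw [h, norm_zero] at hnx0
      norm_num at hnx0
    have hx0mem : x0 ∈ ball (0 : EuclideanSpace ℝ (Fin n)) 1 \ {0} := by
      constructor
      · rw [mem_ball, dist_zero_right, hnx0]; norm_num
      · simpa using hx0ne
    have := hcon x0 hx0mem
    rw [hU2] at this
    simp only [hnx0] at this
    have hne1 : ((1 : ℝ) / 2) ^ θ ≠ 1 := by
      by_cases h : 0 < θ
      · have : ((1 : ℝ) / 2) ^ θ < 1 :=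
          Real.rpow_lt_one (by norm_num) (by norm_num) h
        linarith
      · have hθneg : θ < 0 := lt_of_le_of_ne (not_lt.mp h) hθ0
        have : (1 : ℝ) < ((1 : ℝ) / 2) ^ θ :=
          Real.one_lt_rpow_of_pos_of_lt_one_of_neg (by norm_num) (by norm_num) hθneg
        linarith
    apply hne1
    have : σ * (((1:ℝ)/2) ^ θ - 1) = 0 := by linarith [this]
    have := (mul_eq_zero.mp this).resolve_left hσ0
    linarith
  · -- boundary
    intro x hx
    have hx1 : ‖x‖ = 1 := by rwa [mem_sphere_zero_iff_norm] at hx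
    rw [hU2]
    simp [hx1, Real.one_rpow]
  · -- Pucci equation
    intro x hx
    have hx0 : x ≠ 0 := hx.2
    have hxn : (0 : ℝ) < ‖x‖ := norm_pos_iff.mpr hx0
    have hg : (0 : ℝ) < ‖x‖ ^ 2 := by positivity
    set g : ℝ := ‖x‖ ^ 2 with hgdef
    set κ : ℝ := σ * θ * (θ - 2) * g ^ (θ / 2 - 2) with hκdef
    set β : ℝ := σ * θ * g ^ (θ / 2 - 1) with hβdef
    have hmat : ∀ i j, hess U x i j = κ * x i * x j + β * (if i = j then 1 else 0) := by
      intro i j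
      rw [hU3, aux_hess_U θ σ σ hx0 i j]
    have hherm : (hess U x).IsHermitian := by
      rw [Matrix.IsHermitian]
      ext i j
      rw [Matrix.conjTranspose_apply, hmat j i, hmat i j, star_trivial]
      by_cases hij : i = j
      · rw [hij]
      · rw [if_neg hij, if_neg (fun h => hij h.symm)]; ring
    have hgsum : ∑ k, (x k) ^ 2 = g := by
      rw [hgdef, EuclideanSpace.norm_eq, Real.sq_sqrt (by positivity)]
      refine Finset.sum_congr rfl fun k _ => ?_
      rw [Real.norm_eq_abs, sq_abs]
      
    have hc2 : (0:ℝ) < g ^ (θ / 2 - 1) := Real.rpow_pos_of_pos hg _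
    have hpow : g ^ (θ / 2 - 2) * g = g ^ (θ / 2 - 1) := by
      nth_rewrite 2 [← Real.rpow_one g]
      rw [← Real.rpow_add hg, show θ / 2 - 2 + 1 = θ / 2 - 1 by ring]
    have ha_eq : β + κ * g = σ * θ * (θ - 1) * g ^ (θ / 2 - 1) := by
      rw [hβdef, hκdef]
      have h2 : σ * θ * (θ - 2) * g ^ (θ / 2 - 2) * g
          = σ * θ * (θ - 2) * g ^ (θ / 2 - 1) := by
        rw [mul_assoc, hpow]
      rw [h2]
      ring
    have ha : β + κ * g < 0 := by
      rw [ha_eq]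
      have h1 : σ * θ * (θ - 1) < 0 := by nlinarith
      nlinarith
    have hb : 0 < β := by
      rw [hβdef]
      positivity
    have hdich : ∀ i, hherm.eigenvalues i = β + κ * g ∨ hherm.eigenvalues i = β := by
      intro i
      have := aux_eigen_dichotomy (fun k => x k) κ β hmat hherm i
      rw [hgsum] at this
      exact this
    have htrace : Matrix.trace (hess U x) = κ * g + (n : ℝ) * β := by
      rw [Matrix.trace]
      have : ∀ i ∈ Finset.univ, Matrix.diag (hess U x) i = κ * (x i) ^ 2 + β := by
        intro i _
        rw [Matrix.diag, hmat i i, if_pos rfl]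
        ring
      rw [Finset.sum_congr rfl this, Finset.sum_add_distrib, ← Finset.mul_sum, hgsum,
        Finset.sum_const, Finset.card_univ, Fintype.card_fin, nsmul_eq_mul]
    have htr : ∑ i, hherm.eigenvalues i = (β + κ * g) + ((n : ℝ) - 1) * β := by
      rw [aux_sum_eigen_eq_trace hherm, htrace]
      ring
    obtain ⟨hs1, hs2⟩ := aux_pucci_count hherm ha hb hdich htr
    rw [pucciInf, dif_pos hherm, hs1, hs2]
    rw [ha_eq, hβdef]
    have hkey : Lam * (θ - 1) = -(lam * ((n:ℝ) - 1)) := by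
      rw [hθ]
      field_simp
      ring
    linear_combination (σ * θ * g ^ (θ / 2 - 1)) * hkey
end
end
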